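/- arXiv:1010.4847 — 12 statements merged into one kernel-verified Lean document; each statement's English description precedes it below -/
import Mathlib

section
/- The number of walks on ℤ of length 2n starting at 0, with steps +1 or -1, that never visit a negative number equals the central binomial coefficient C(2n, n). -/
/-- Partial sum of the first `k` steps of a walk `w` of length `n`. -/
def psum {n : ℕ} (w : Fin n → ℤ) (k : ℕ) : ℤ :=
  ∑ i ∈ Finset.univ.filter (fun i : Fin n => (i : ℕ) < k), w i

open Finset

open scoped Classical

namespace WalkAux

def ival (b : Bool) : ℤ := if b then 1 else -1

lemma psum_zero {n : ℕ} (w : Fin n → ℤ) : psum w 0 = 0 := by simp [psum]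

lemma psum_succ {n : ℕ} (w : Fin n → ℤ) (k : ℕ) (hk : k < n) :
    psum w (k + 1) = psum w k + w ⟨k, hk⟩ := by
  have h : (univ.filter (fun i : Fin n => (i : ℕ) < k + 1))
      = insert ⟨k, hk⟩ (univ.filter (fun i : Fin n => (i : ℕ) < k)) := by
    ext i
    simp only [mem_filter, mem_univ, true_and, mem_insert, Fin.ext_iff]
    omega
  rw [psum, h, sum_insert (by simp), psum]; ring

lemma psum_of_le {n : ℕ} (w : Fin n → ℤ) (k : ℕ) (hk : n ≤ k) :
    psum w k = ∑ i, w i := by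
  rw [psum, filter_true_of_mem]
  intro i _; exact lt_of_lt_of_le i.isLt hk

/-- nonnegativity predicate -/
def good {m : ℕ} (b : Fin m → Bool) : Prop :=
  ∀ k, 0 ≤ psum (fun i => ival (b i)) k

noncomputable def D (m t : ℕ) : Finset (Fin m → Bool) :=
  univ.filter (fun b => good b ∧ (univ.filter (fun i => b i = true)).card = t)

noncomputable def G (m : ℕ) : Finset (Fin m → Bool) :=
  univ.filter (fun b => good b)

lemma endpoint {m : ℕ} (b : Fin m → Bool) :
    psum (fun i => ival (b i)) m
      = 2 * ((univ.filter (fun i => b i = true)).card : ℤ) - m := by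
  rw [psum_of_le _ _ le_rfl]
  have h1 : ∀ x : Bool, ival x = 2 * (if x = true then (1:ℤ) else 0) - 1 := by
    intro x; cases x <;> simp [ival]
  calc ∑ i, ival (b i) = ∑ i, (2 * (if b i = true then (1:ℤ) else 0) - 1) := by
        simp_rw [h1]
    _ = 2 * (∑ i, (if b i = true then (1:ℤ) else 0)) - m := by
        rw [Finset.sum_sub_distrib, ← Finset.mul_sum]; simp [mul_comm]
    _ = _ := by rw [Finset.sum_boole]

lemma good_iff_le {m : ℕ} (b : Fin m → Bool) :
    good b ↔ ∀ k ≤ m, 0 ≤ psum (fun i => ival (b i)) k := by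
  constructor
  · intro h k _; exact h k
  · intro h k
    rcases le_or_gt k m with hk | hk
    · exact h k hk
    · rw [psum_of_le _ _ (le_of_lt hk), ← psum_of_le _ _ (le_refl m)]
      exact h m le_rfl

def snocB {m : ℕ} (b : Fin m → Bool) (x : Bool) : Fin (m+1) → Bool := Fin.snoc b x

lemma snocB_castSucc {m : ℕ} (b : Fin m → Bool) (x : Bool) (i : Fin m) :
    snocB b x (Fin.castSucc i) = b i := by simp [snocB]

lemma snocB_last {m : ℕ} (b : Fin m → Bool) (x : Bool) :
    snocB b x (Fin.last m) = x := by simp [snocB]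

lemma psum_snoc_of_le {m : ℕ} (b : Fin m → Bool) (x : Bool) (k : ℕ) (hk : k ≤ m) :
    psum (fun i => ival (snocB b x i)) k = psum (fun i => ival (b i)) k := by
  induction k with
  | zero => simp [psum_zero]
  | succ j ih =>
      have hj : j < m := hk
      rw [psum_succ _ j (by omega), psum_succ _ j hj, ih (by omega)]
      congr 1
      have : (⟨j, by omega⟩ : Fin (m+1)) = Fin.castSucc ⟨j, hj⟩ := rfl
      rw [this, snocB_castSucc]

lemma psum_snoc_last {m : ℕ} (b : Fin m → Bool) (x : Bool) :
    psum (fun i => ival (snocB b x i)) (m + 1)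
      = psum (fun i => ival (b i)) m + ival x := by
  rw [psum_succ _ m (by omega), psum_snoc_of_le b x m le_rfl]
  congr 1
  have : (⟨m, by omega⟩ : Fin (m+1)) = Fin.last m := rfl
  rw [this, snocB_last]

lemma good_snoc_iff {m : ℕ} (b : Fin m → Bool) (x : Bool) :
    good (snocB b x) ↔ good b ∧ 0 ≤ psum (fun i => ival (b i)) m + ival x := by
  constructor
  · intro h
    constructor
    · rw [good_iff_le]
      intro k hk
      have := h k
      rwa [psum_snoc_of_le b x k hk] at this
    · have := h (m + 1)
      rwa [psum_snoc_last b x] at this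
  · rintro ⟨h1, h2⟩
    rw [good_iff_le]
    intro k hk
    rcases Nat.lt_or_ge k (m + 1) with hk' | hk'
    · rw [psum_snoc_of_le b x k (by omega)]; exact h1 k
    · have : k = m + 1 := by omega
      rw [this, psum_snoc_last b x]; exact h2

lemma trues_snoc {m : ℕ} (b : Fin m → Bool) (x : Bool) :
    ((univ.filter (fun i : Fin (m+1) => snocB b x i = true)).card : ℕ)
      = (univ.filter (fun i : Fin m => b i = true)).card + (if x then 1 else 0) := by
  rw [Finset.card_filter, Finset.card_filter, Fin.sum_univ_castSucc]
  simp [snocB_castSucc, snocB_last]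


def tr {m : ℕ} (b : Fin m → Bool) : ℕ := (univ.filter (fun i => b i = true)).card

@[simp] lemma ival_true : ival true = 1 := rfl
@[simp] lemma ival_false : ival false = -1 := rfl

lemma mem_D {m t : ℕ} (b : Fin m → Bool) : b ∈ D m t ↔ good b ∧ tr b = t := by
  simp [D, tr]

lemma tr_le {m : ℕ} (b : Fin m → Bool) : tr b ≤ m := by
  simpa [tr] using (Finset.card_filter_le univ (fun i => b i = true))

lemma endpoint' {m : ℕ} (b : Fin m → Bool) :
    psum (fun i => ival (b i)) m = 2 * (tr b : ℤ) - m := endpoint b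

lemma tr_snoc {m : ℕ} (b : Fin m → Bool) (x : Bool) :
    tr (snocB b x) = tr b + (if x then 1 else 0) := trues_snoc b x

lemma card_filter_last (m t : ℕ) (x : Bool) :
    ((D (m+1) t).filter (fun b => b (Fin.last m) = x)).card
      = (univ.filter (fun w : Fin m → Bool =>
          (good w ∧ 0 ≤ psum (fun i => ival (w i)) m + ival x)
            ∧ tr w + (if x then 1 else 0) = t)).card := by
  refine Finset.card_bij' (fun b _ => fun i => b (Fin.castSucc i)) (fun w _ => snocB w x)
    ?hi ?hj ?left ?right
  case hi =>
    intro b hb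
    simp only [mem_filter, mem_D] at hb
    obtain ⟨⟨hg, ht⟩, hl⟩ := hb
    have hb_eq : snocB (fun i => b (Fin.castSucc i)) x = b := by
      funext i
      refine Fin.lastCases ?_ ?_ i
      · rw [snocB_last, hl]
      · intro j; rw [snocB_castSucc]
    simp only [mem_filter, mem_univ, true_and]
    have hg' : good (snocB (fun i => b (Fin.castSucc i)) x) := by rw [hb_eq]; exact hg
    rw [good_snoc_iff] at hg'
    refine ⟨hg', ?_⟩
    have h2 := tr_snoc (fun i => b (Fin.castSucc i)) x
    rw [hb_eq, ht] at h2
    omega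
  case hj =>
    intro w hw
    simp only [mem_filter, mem_univ, true_and] at hw
    obtain ⟨⟨hg, hend⟩, ht⟩ := hw
    simp only [mem_filter, mem_D]
    refine ⟨⟨(good_snoc_iff w x).2 ⟨hg, hend⟩, ?_⟩, snocB_last w x⟩
    rw [tr_snoc, ht]
  case left =>
    intro b hb
    simp only [mem_filter, mem_D] at hb
    funext i
    refine Fin.lastCases ?_ ?_ i
    · simp [snocB_last, hb.2]
    · intro j; simp [snocB_castSucc]
  case right =>
    intro w _
    funext i
    simp [snocB_castSucc]

lemma filter_true_eq (m t : ℕ) (ht : 0 < t) :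
    (univ.filter (fun w : Fin m → Bool =>
        (good w ∧ 0 ≤ psum (fun i => ival (w i)) m + ival true) ∧ tr w + 1 = t))
      = D m (t - 1) := by
  ext w
  simp only [mem_filter, mem_univ, true_and, mem_D]
  simp only [ival_true]
  constructor
  · rintro ⟨⟨hg, _⟩, ht'⟩; exact ⟨hg, by omega⟩
  · rintro ⟨hg, ht'⟩
    have h0 : 0 ≤ psum (fun i => ival (w i)) m := hg m
    exact ⟨⟨hg, by linarith⟩, by omega⟩

lemma filter_false_eq_pos (m t : ℕ) (h : m + 1 ≤ 2 * t) :
    (univ.filter (fun w : Fin m → Bool =>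
        (good w ∧ 0 ≤ psum (fun i => ival (w i)) m + ival false) ∧ tr w + (if false then 1 else 0) = t))
      = D m t := by
  ext w
  simp only [mem_filter, mem_univ, true_and, mem_D]
  simp only [ival_false]
  constructor
  · rintro ⟨⟨hg, _⟩, ht'⟩; exact ⟨hg, ht'⟩
  · rintro ⟨hg, ht'⟩
    refine ⟨⟨hg, ?_⟩, ht'⟩
    rw [endpoint', ht']
    have : (m : ℤ) + 1 ≤ 2 * t := by exact_mod_cast h
    linarith

lemma filter_false_eq_neg (m t : ℕ) (h : ¬ m + 1 ≤ 2 * t) :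
    (univ.filter (fun w : Fin m → Bool =>
        (good w ∧ 0 ≤ psum (fun i => ival (w i)) m + ival false) ∧ tr w + (if false then 1 else 0) = t))
      = ∅ := by
  rw [Finset.eq_empty_iff_forall_notMem]
  intro w hw
  simp only [mem_filter, mem_univ, true_and] at hw
  simp only [ival_false] at hw
  obtain ⟨⟨hg, hend⟩, ht'⟩ := hw
  rw [endpoint'] at hend
  have htw : tr w = t := by omega
  rw [htw] at hend
  have : (m : ℤ) + 1 ≤ 2 * t := by linarith
  exact h (by exact_mod_cast this)

lemma filter_true_eq_zero (m : ℕ) :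
    (univ.filter (fun w : Fin m → Bool =>
        (good w ∧ 0 ≤ psum (fun i => ival (w i)) m + ival true) ∧ tr w + 1 = 0))
      = ∅ := by
  rw [Finset.eq_empty_iff_forall_notMem]
  intro w hw
  simp only [mem_filter, mem_univ, true_and] at hw
  omega

lemma card_D_succ (m t : ℕ) :
    (D (m+1) t).card = (if t = 0 then 0 else (D m (t-1)).card)
       + (if m + 1 ≤ 2 * t then (D m t).card else 0) := by
  rw [← Finset.card_filter_add_card_filter_not
    (s := D (m+1) t) (p := fun b => b (Fin.last m) = true)]
  have hfalse : ((D (m+1) t).filter (fun b => ¬ b (Fin.last m) = true))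
      = ((D (m+1) t).filter (fun b => b (Fin.last m) = false)) := by
    apply filter_congr; intro b _; simp
  rw [hfalse, card_filter_last m t true, card_filter_last m t false]
  simp only [if_pos, if_neg, ite_true, ite_false]
  congr 1
  · rcases Nat.eq_zero_or_pos t with ht | ht
    · subst ht
      rw [if_pos rfl, filter_true_eq_zero m, Finset.card_empty]
    · rw [if_neg (by omega), filter_true_eq m t ht]
  · by_cases h : m + 1 ≤ 2 * t
    · rw [if_pos h, filter_false_eq_pos m t h]
    · rw [if_neg h, filter_false_eq_neg m t h, Finset.card_empty]

lemma card_D_zero (t : ℕ) : (D 0 t).card = if t = 0 then 1 else 0 := by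
  rcases Nat.eq_zero_or_pos t with ht | ht
  · subst ht
    rw [if_pos rfl]
    have : (D 0 0) = univ := by
      ext b
      simp only [mem_D, mem_univ, iff_true]
      constructor
      · intro k
        have h : (univ.filter (fun i : Fin 0 => (i : ℕ) < k)) = ∅ := by
          ext i; exact absurd i.isLt (by omega)
        rw [psum, h]; simp
      · simp [tr]
    rw [this]
    simp
  · rw [if_neg (by omega), Finset.card_eq_zero, Finset.eq_empty_iff_forall_notMem]
    intro b hb
    rw [mem_D] at hb
    have := tr_le b
    omega

lemma card_D_formula (m : ℕ) : ∀ t : ℕ, ((D m t).card : ℤ)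
    = if m ≤ 2 * t then (Nat.choose m t : ℤ) - Nat.choose m (t+1) else 0 := by
  induction m with
  | zero =>
      intro t
      rcases Nat.eq_zero_or_pos t with ht | ht
      · subst ht; rw [card_D_zero]; norm_num
      · rw [card_D_zero, if_neg (by omega), if_pos (by omega),
          Nat.choose_eq_zero_of_lt (by omega), Nat.choose_eq_zero_of_lt (by omega)]
        simp
  | succ m ih =>
      intro t
      rw [card_D_succ]
      rcases Nat.eq_zero_or_pos t with ht | ht
      · subst ht
        rw [if_pos rfl, if_neg (by omega), if_neg (by omega)]
        simp
      · obtain ⟨s, rfl⟩ : ∃ s, t = s + 1 := ⟨t - 1, by omega⟩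
        rw [if_neg (by omega)]
        simp only [Nat.add_sub_cancel]
        push_cast
        have hs := ih s
        have hs1 := ih (s + 1)
        by_cases h : m + 1 ≤ 2 * (s + 1)
        · rw [if_pos h, if_pos h]
          rw [if_pos (by omega)] at hs1
          by_cases h2 : m ≤ 2 * s
          · rw [if_pos h2] at hs
            have p1 : (Nat.choose (m+1) (s+1) : ℤ) = Nat.choose m s + Nat.choose m (s+1) := by
              rw [Nat.choose_succ_succ]; push_cast; ring
            have p2 : (Nat.choose (m+1) (s+1+1) : ℤ) = Nat.choose m (s+1) + Nat.choose m (s+1+1) := by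
              rw [Nat.choose_succ_succ]; push_cast; ring
            push_cast
            rw [hs, hs1, p1, p2]; ring
          · rw [if_neg h2] at hs
            have hm : m = 2 * s + 1 := by omega
            subst hm
            have p1 : (Nat.choose (2*s+1+1) (s+1) : ℤ)
                = Nat.choose (2*s+1) s + Nat.choose (2*s+1) (s+1) := by
              rw [Nat.choose_succ_succ]; push_cast; ring
            have p2 : (Nat.choose (2*s+1+1) (s+1+1) : ℤ)
                = Nat.choose (2*s+1) (s+1) + Nat.choose (2*s+1) (s+1+1) := by
              rw [Nat.choose_succ_succ]; push_cast; ring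
            have psym : (Nat.choose (2*s+1) (s+1) : ℤ) = Nat.choose (2*s+1) s := by
              exact_mod_cast Nat.choose_symm_half s
            push_cast
            rw [hs, hs1, p1, p2, psym]; ring
        · rw [if_neg h, if_neg h]
          rw [if_neg (by omega)] at hs
          push_cast
          rw [hs]
          simp

lemma card_G_eq_sum (m : ℕ) :
    (G m).card = ∑ t ∈ Finset.range (m+1), (D m t).card := by
  rw [Finset.card_eq_sum_card_fiberwise (f := tr) (t := Finset.range (m+1))]
  · apply Finset.sum_congr rfl
    intro t _
    congr 1
    ext b
    simp only [mem_filter, mem_D, G, mem_univ, true_and]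
  · intro b _
    rw [Finset.mem_coe, Finset.mem_range]
    exact Nat.lt_succ_of_le (tr_le b)

lemma card_G (n : ℕ) : ((G (2 * n)).card : ℤ) = Nat.choose (2 * n) n := by
  rw [card_G_eq_sum]
  push_cast
  rw [Finset.sum_congr rfl (fun t _ => card_D_formula (2*n) t)]
  rw [Finset.range_eq_Ico]
  rw [← Finset.sum_Ico_consecutive _ (Nat.zero_le n) (by omega)]
  rw [Finset.sum_congr rfl (fun t ht => if_neg (by rw [Finset.mem_Ico] at ht; omega)),
    Finset.sum_const, smul_zero, zero_add]
  rw [Finset.sum_congr rfl (fun t ht => if_pos (by rw [Finset.mem_Ico] at ht; omega))]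
  rw [Finset.sum_Ico_eq_sum_range]
  rw [show 2*n+1-n = n+1 from by omega]
  rw [Finset.sum_congr rfl (fun i _ => by rw [show n + i + 1 = n + (i+1) from by omega])]
  rw [Finset.sum_range_sub' (fun i => (Nat.choose (2*n) (n + i) : ℤ)) (n + 1)]
  rw [show n + (n+1) = 2*n+1 from by omega, Nat.choose_succ_self]
  simp

end WalkAux

theorem stmt0 (n : ℕ) :
    {w : Fin (2 * n) → ℤ |
        (∀ i, w i = 1 ∨ w i = -1) ∧ (∀ k, 0 ≤ psum w k)}.ncard
      = Nat.choose (2 * n) n := by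
  classical
  have hinj : Function.Injective
      (fun (b : Fin (2*n) → Bool) => (fun i => WalkAux.ival (b i) : Fin (2*n) → ℤ)) := by
    intro b b' h
    funext i
    have hfi := congrFun h i
    simp only at hfi
    cases hb : b i <;> cases hb' : b' i <;>
      simp [WalkAux.ival, hb, hb'] at hfi ⊢
  have hset : {w : Fin (2*n) → ℤ | (∀ i, w i = 1 ∨ w i = -1) ∧ (∀ k, 0 ≤ psum w k)}
      = (fun (b : Fin (2*n) → Bool) => (fun i => WalkAux.ival (b i) : Fin (2*n) → ℤ))
          '' (WalkAux.G (2*n) : Set _) := by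
    ext w
    simp only [Set.mem_image, Set.mem_setOf_eq, Finset.mem_coe]
    constructor
    · rintro ⟨hsteps, hpos⟩
      have hw_eq : (fun i => WalkAux.ival (decide (w i = 1))) = w := by
        funext i
        rcases hsteps i with h1 | h1 <;> simp [WalkAux.ival, h1]
      refine ⟨fun i => decide (w i = 1), ?_, hw_eq⟩
      rw [WalkAux.G, Finset.mem_filter]
      refine ⟨Finset.mem_univ _, ?_⟩
      intro k
      rw [show (fun i => WalkAux.ival ((fun j => decide (w j = 1)) i)) = w from hw_eq]
      exact hpos k
    · rintro ⟨b, hb, rfl⟩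
      rw [WalkAux.G, Finset.mem_filter] at hb
      refine ⟨fun i => ?_, hb.2⟩
      cases h : b i <;> simp [WalkAux.ival, h]
  rw [hset, Set.ncard_image_of_injective _ hinj, Set.ncard_coe_finset]
  exact_mod_cast WalkAux.card_G n
end

section
/- The number of walks on ℤ of length n starting at 0, with steps +1 or -1, that never visit a negative number equals the binomial coefficient C(n, ⌈n/2⌉). -/
open Finset

def cntW {n : ℕ} (b : Fin n → Bool) (k : ℕ) : ℕ :=
  ∑ i : Fin n, if (i : ℕ) < k ∧ b i then 1 else 0

def OkW {n : ℕ} (b : Fin n → Bool) : Prop := ∀ k ≤ n, k ≤ 2 * cntW b k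

instance {n : ℕ} (b : Fin n → Bool) : Decidable (OkW b) :=
  inferInstanceAs (Decidable (∀ k ≤ n, k ≤ 2 * cntW b k))

def DW (n u : ℕ) : ℕ :=
  (Finset.univ.filter (fun b : Fin n → Bool => OkW b ∧ cntW b n = u)).card

lemma cntW_snoc {n : ℕ} (b : Fin n → Bool) (x : Bool) (k : ℕ) :
    cntW (Fin.snoc b x) k = cntW b k + (if n < k ∧ x then 1 else 0) := by
  unfold cntW
  rw [Fin.sum_univ_castSucc]
  simp [Fin.snoc_castSucc, Fin.snoc_last]

lemma cntW_stable {n : ℕ} (b : Fin n → Bool) {k : ℕ} (h : n ≤ k) :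
    cntW b k = cntW b n := by
  unfold cntW
  refine Finset.sum_congr rfl fun i _ => ?_
  have : (i : ℕ) < k := lt_of_lt_of_le i.2 h
  have : (i : ℕ) < n := i.2
  simp_all

lemma cntW_le {n : ℕ} (b : Fin n → Bool) (k : ℕ) : cntW b k ≤ n := by
  unfold cntW
  calc ∑ i : Fin n, (if (i : ℕ) < k ∧ b i then 1 else 0) ≤ ∑ _i : Fin n, 1 := by
        exact Finset.sum_le_sum fun i _ => by split <;> simp
    _ = n := by simp

lemma okW_snoc {n : ℕ} (b : Fin n → Bool) (x : Bool) :
    OkW (Fin.snoc b x) ↔ OkW b ∧ n + 1 ≤ 2 * (cntW b n + (if x then 1 else 0)) := by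
  constructor
  · intro h
    refine ⟨fun k hk => ?_, ?_⟩
    · have := h k (le_trans hk (Nat.le_succ n))
      rw [cntW_snoc] at this
      have hnk : ¬ (n < k) := by omega
      simpa [hnk] using this
    · have := h (n+1) le_rfl
      rw [cntW_snoc, cntW_stable b (Nat.le_succ n)] at this
      simpa [Nat.lt_succ_self] using this
  · rintro ⟨h1, h2⟩ k hk
    rw [cntW_snoc]
    rcases Nat.lt_or_ge k (n+1) with hk' | hk'
    · have := h1 k (by omega)
      omega
    · have hkn : k = n + 1 := by omega
      subst hkn
      rw [cntW_stable b (Nat.le_succ n)]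
      simpa [Nat.lt_succ_self] using h2

lemma DW_zero {n u : ℕ} (h : 2 * u < n) : DW n u = 0 := by
  unfold DW
  rw [Finset.card_eq_zero, Finset.filter_eq_empty_iff]
  rintro b - ⟨hok, hc⟩
  have := hok n le_rfl
  omega

lemma DW_succ {n u : ℕ} (h : n + 1 ≤ 2 * u) :
    DW (n + 1) u = DW n (u - 1) + DW n u := by
  have hu : 1 ≤ u := by omega
  classical
  have key : DW (n+1) u =
      ((Finset.univ : Finset (Bool × (Fin n → Bool))).filter
        (fun p => OkW p.2 ∧ cntW p.2 n + (if p.1 then 1 else 0) = u)).card := by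
    unfold DW
    refine Finset.card_equiv (Fin.snocEquiv (fun _ => Bool)).symm fun f => ?_
    simp only [Finset.mem_filter, Finset.mem_univ, true_and]
    show (OkW f ∧ cntW f (n+1) = u) ↔
      (OkW (Fin.init f) ∧ cntW (Fin.init f) n + (if f (Fin.last n) then 1 else 0) = u)
    have hf : f = Fin.snoc (Fin.init f) (f (Fin.last n)) := (Fin.snoc_init_self f).symm
    rw [show OkW f = OkW (Fin.snoc (Fin.init f) (f (Fin.last n))) from by rw [← hf],
        show cntW f (n+1) = cntW (Fin.snoc (Fin.init f) (f (Fin.last n))) (n+1) from by rw [← hf],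
        okW_snoc, cntW_snoc, cntW_stable (Fin.init f) (Nat.le_succ n)]
    simp only [Nat.lt_succ_self, true_and]
    constructor
    · rintro ⟨⟨h1, -⟩, h2⟩; exact ⟨h1, h2⟩
    · rintro ⟨h1, h2⟩; exact ⟨⟨h1, by omega⟩, h2⟩
  rw [key]
  have hsplit : ((Finset.univ : Finset (Bool × (Fin n → Bool))).filter
        (fun p => OkW p.2 ∧ cntW p.2 n + (if p.1 then 1 else 0) = u))
      = ({true} ×ˢ Finset.univ.filter (fun b : Fin n → Bool => OkW b ∧ cntW b n = u - 1))
        ∪ ({false} ×ˢ Finset.univ.filter (fun b : Fin n → Bool => OkW b ∧ cntW b n = u)) := by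
    ext ⟨x, b⟩
    cases x <;> simp <;> omega
  rw [hsplit, Finset.card_union_of_disjoint]
  · simp [DW]
  · rw [Finset.disjoint_left]
    rintro ⟨x, b⟩ hx hy
    rw [Finset.mem_product] at hx hy
    simp only [Finset.mem_singleton] at hx hy
    rw [hx.1] at hy
    exact absurd hy.1 (by simp)

lemma choose_anti {n u : ℕ} (h : n ≤ 2 * u) :
    Nat.choose n (u + 1) ≤ Nat.choose n u := by
  have h1 := Nat.choose_succ_right_eq n u
  have h2 : n - u ≤ u + 1 := by omega
  have h3 : Nat.choose n (u+1) * (u+1) ≤ Nat.choose n u * (u+1) := by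
    calc Nat.choose n (u+1) * (u+1) = Nat.choose n u * (n - u) := h1
      _ ≤ Nat.choose n u * (u+1) := Nat.mul_le_mul_left _ h2
  exact Nat.le_of_mul_le_mul_right h3 (Nat.succ_pos u)

lemma DW_eq : ∀ n u : ℕ, n ≤ 2 * u →
    DW n u = Nat.choose n u - Nat.choose n (u + 1) := by
  intro n
  induction n with
  | zero =>
    intro u _
    unfold DW
    have hcnt : ∀ b : Fin 0 → Bool, cntW b 0 = 0 := by intro b; simp [cntW]
    have hok : ∀ b : Fin 0 → Bool, OkW b := by
      intro b k hk
      interval_cases k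
      omega
    rcases Nat.eq_zero_or_pos u with hu | hu
    · subst hu
      rw [Finset.filter_true_of_mem (fun b _ => ⟨hok b, hcnt b⟩)]
      simp
    · rw [Finset.filter_false_of_mem (fun b _ => by
        rintro ⟨-, hc⟩; rw [hcnt b] at hc; omega)]
      rcases u with _ | u
      · omega
      · simp [Nat.choose_succ_succ]
  | succ n ih =>
    intro u h
    have hu : 1 ≤ u := by omega
    rw [DW_succ h]
    rcases Nat.lt_or_ge (2 * (u - 1)) n with h2 | h2
    · -- 2u = n+1
      have hn : n + 1 = 2 * u := by omega
      rw [DW_zero (by omega), ih u (by omega)]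
      have hsym : Nat.choose n (u - 1) = Nat.choose n u := by
        have : n - u = u - 1 := by omega
        rw [← this, Nat.choose_symm (by omega)]
      have hp1 : Nat.choose (n+1) u = Nat.choose n (u-1) + Nat.choose n u := by
        have := Nat.choose_succ_succ n (u-1)
        rw [Nat.succ_eq_add_one, Nat.succ_eq_add_one, show u - 1 + 1 = u by omega] at this
        exact this
      have hp2 : Nat.choose (n+1) (u+1) = Nat.choose n u + Nat.choose n (u+1) :=
        Nat.choose_succ_succ n u
      have ha1 : Nat.choose n (u+1) ≤ Nat.choose n u := choose_anti (by omega)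
      omega
    · rw [ih (u-1) (by omega), ih u (by omega),
        show u - 1 + 1 = u by omega]
      have hp1 : Nat.choose (n+1) u = Nat.choose n (u-1) + Nat.choose n u := by
        have := Nat.choose_succ_succ n (u-1)
        rw [Nat.succ_eq_add_one, Nat.succ_eq_add_one, show u - 1 + 1 = u by omega] at this
        exact this
      have hp2 : Nat.choose (n+1) (u+1) = Nat.choose n u + Nat.choose n (u+1) :=
        Nat.choose_succ_succ n u
      have ha1 : Nat.choose n (u+1) ≤ Nat.choose n u := choose_anti (by omega)
      have ha2 : Nat.choose n u ≤ Nat.choose n (u-1) := by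
        have := choose_anti (n := n) (u := u - 1) (by omega)
        rwa [show u - 1 + 1 = u by omega] at this
      omega

lemma sum_tele (n : ℕ) :
    ∑ u ∈ Finset.Ico ((n+1)/2) (n+1), (Nat.choose n u - Nat.choose n (u+1))
      = Nat.choose n ((n+1)/2) := by
  set a := (n+1)/2 with ha
  have haa : a ≤ n + 1 := by omega
  have key : ∀ u ∈ Finset.Ico a (n+1), Nat.choose n (u+1) ≤ Nat.choose n u := by
    intro u hu
    rw [Finset.mem_Ico] at hu
    exact choose_anti (by omega)
  have hz : ((∑ u ∈ Finset.Ico a (n+1), (Nat.choose n u - Nat.choose n (u+1)) : ℕ) : ℤ)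
      = (Nat.choose n a : ℤ) := by
    rw [Nat.cast_sum]
    calc ∑ u ∈ Finset.Ico a (n+1), ((Nat.choose n u - Nat.choose n (u+1) : ℕ) : ℤ)
        = ∑ u ∈ Finset.Ico a (n+1), ((Nat.choose n u : ℤ) - (Nat.choose n (u+1) : ℤ)) := by
          exact Finset.sum_congr rfl fun u hu => by
            rw [Nat.cast_sub (key u hu)]
      _ = ∑ i ∈ Finset.range (n+1-a), ((Nat.choose n (a+i) : ℤ) - (Nat.choose n (a+i+1) : ℤ)) := by
          rw [Finset.sum_Ico_eq_sum_range]
      _ = (Nat.choose n (a+0) : ℤ) - (Nat.choose n (a+(n+1-a)) : ℤ) := by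
          exact Finset.sum_range_sub' (fun i => (Nat.choose n (a+i) : ℤ)) (n+1-a)
      _ = (Nat.choose n a : ℤ) := by
          rw [show a + (n+1-a) = n+1 by omega]
          simp [Nat.choose_succ_self]
  exact_mod_cast hz

lemma total (n : ℕ) :
    (Finset.univ.filter (fun b : Fin n → Bool => OkW b)).card
      = Nat.choose n ((n+1)/2) := by
  classical
  rw [Finset.card_eq_sum_card_fiberwise
    (f := fun b : Fin n → Bool => cntW b n) (t := Finset.range (n+1))
    (fun b _ => Finset.mem_range.mpr (Nat.lt_succ_of_le (cntW_le b n)))]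
  have step : ∀ u ∈ Finset.range (n+1),
      ((Finset.univ.filter (fun b : Fin n → Bool => OkW b)).filter
        (fun b => cntW b n = u)).card = DW n u := by
    intro u _
    rw [Finset.filter_filter]
    rfl
  rw [Finset.sum_congr rfl step]
  have hsplit : Finset.range (n+1) = Finset.Ico 0 (n+1) := by
    rw [Finset.range_eq_Ico]
  rw [hsplit, ← Finset.sum_Ico_consecutive _ (Nat.zero_le ((n+1)/2)) (by omega : (n+1)/2 ≤ n+1)]
  have hzero : ∑ u ∈ Finset.Ico 0 ((n+1)/2), DW n u = 0 := by
    refine Finset.sum_eq_zero fun u hu => ?_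
    rw [Finset.mem_Ico] at hu
    exact DW_zero (by omega)
  have hmain : ∑ u ∈ Finset.Ico ((n+1)/2) (n+1), DW n u = Nat.choose n ((n+1)/2) := by
    have hc : ∀ u ∈ Finset.Ico ((n+1)/2) (n+1), DW n u
        = Nat.choose n u - Nat.choose n (u+1) := by
      intro u hu
      rw [Finset.mem_Ico] at hu
      exact DW_eq n u (by omega)
    calc ∑ u ∈ Finset.Ico ((n+1)/2) (n+1), DW n u
        = ∑ u ∈ Finset.Ico ((n+1)/2) (n+1), (Nat.choose n u - Nat.choose n (u+1)) :=
          Finset.sum_congr rfl hc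
      _ = Nat.choose n ((n+1)/2) := sum_tele n
  rw [hzero, hmain, Nat.zero_add]

lemma psum_phi {n : ℕ} (b : Fin n → Bool) (k : ℕ) :
    psum (fun i => if b i then (1:ℤ) else -1) k
      = 2 * (cntW b k : ℤ) - ((min k n : ℕ) : ℤ) := by
  unfold psum
  rw [Finset.sum_filter]
  have h1 : ∀ i : Fin n, (if (i:ℕ) < k then (if b i then (1:ℤ) else -1) else 0)
      = 2 * (if (i:ℕ) < k ∧ b i then (1:ℤ) else 0) - (if (i:ℕ) < k then (1:ℤ) else 0) := by
    intro i
    by_cases h : (i:ℕ) < k <;> by_cases hb : b i <;> simp [h, hb]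
  rw [Finset.sum_congr rfl (fun i _ => h1 i), Finset.sum_sub_distrib, ← Finset.mul_sum]
  congr 1
  · congr 1
    rw [cntW]
    push_cast
    exact Finset.sum_congr rfl fun i _ => by
      by_cases h : (i:ℕ) < k ∧ b i <;> simp [h]
  · rw [Fin.sum_univ_eq_sum_range (fun j => if j < k then (1:ℤ) else 0) n,
      ← Finset.sum_filter]
    have : (Finset.range n).filter (fun j => j < k) = Finset.range (min n k) := by
      ext j; simp only [Finset.mem_filter, Finset.mem_range, lt_min_iff]
    rw [this]
    simp [min_comm]

lemma cond_iff {n : ℕ} (b : Fin n → Bool) :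
    (∀ k, 0 ≤ psum (fun i => if b i then (1:ℤ) else -1) k) ↔ OkW b := by
  constructor
  · intro h k hk
    have := h k
    rw [psum_phi, min_eq_left hk] at this
    have : (k : ℤ) ≤ 2 * (cntW b k : ℤ) := by omega
    exact_mod_cast this
  · intro h k
    rw [psum_phi]
    rcases Nat.le_total k n with hk | hk
    · have := h k hk
      rw [min_eq_left hk]
      have : (k : ℤ) ≤ 2 * (cntW b k : ℤ) := by exact_mod_cast this
      omega
    · have := h n le_rfl
      rw [min_eq_right hk, cntW_stable b hk]
      have : (n : ℤ) ≤ 2 * (cntW b n : ℤ) := by exact_mod_cast this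
      omega

lemma phi_inj {n : ℕ} : Function.Injective
    (fun (b : Fin n → Bool) => (fun i => if b i then (1:ℤ) else -1)) := by
  intro b b' h
  funext i
  have := congrFun h i
  by_cases hb : b i <;> by_cases hb' : b' i <;> simp_all

theorem stmt1 (n : ℕ) :
    {w : Fin n → ℤ |
        (∀ i, w i = 1 ∨ w i = -1) ∧ (∀ k, 0 ≤ psum w k)}.ncard
      = Nat.choose n ((n + 1) / 2) := by
  classical
  have hset : {w : Fin n → ℤ |
        (∀ i, w i = 1 ∨ w i = -1) ∧ (∀ k, 0 ≤ psum w k)}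
      = ↑((Finset.univ.filter (fun b : Fin n → Bool => OkW b)).image
          (fun b i => if b i then (1:ℤ) else -1)) := by
    ext w
    simp only [Set.mem_setOf_eq, Finset.coe_image, Set.mem_image, Finset.mem_coe,
      Finset.mem_filter, Finset.mem_univ, true_and]
    constructor
    · rintro ⟨hs, hp⟩
      refine ⟨fun i => decide (w i = 1), ?_, ?_⟩
      · rw [← cond_iff]
        have hw : (fun i => if decide (w i = 1) then (1:ℤ) else -1) = w := by
          funext i
          rcases hs i with h | h <;> simp [h]
        rw [hw]
        exact hp
      · funext i
        rcases hs i with h | h <;> simp [h]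
    · rintro ⟨b, hb, rfl⟩
      refine ⟨fun i => by by_cases h : b i <;> simp [h], ?_⟩
      exact (cond_iff b).mpr hb
  rw [hset, Set.ncard_coe_finset,
    Finset.card_image_of_injective _ phi_inj, total]
end

section
/- For n ≥ k ≥ n/2, the number of walks on ℤ of length n with steps ±1, starting at 0, that never visit a negative number and end at a value ≥ 2k−n, equals C(n,k). -/
open Finset

def wv (t : Bool) : ℤ := if t then 1 else -1

def wq {n : ℕ} (b : Fin n → Bool) (m : ℕ) : ℤ :=
  ∑ i : Fin n, if (i : ℕ) < m then wv (b i) else 0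

noncomputable def Bn (n : ℕ) (h : ℤ) : ℕ :=
  {b : Fin n → Bool | (∀ m, 0 ≤ wq b m) ∧ h ≤ wq b n}.ncard

lemma wq_snoc {n : ℕ} (c : Fin n → Bool) (t : Bool) (m : ℕ) :
    wq (Fin.snoc c t) m = wq c m + (if n < m then wv t else 0) := by
  unfold wq
  rw [Fin.sum_univ_castSucc]
  simp [Fin.snoc_castSucc, Fin.snoc_last]

lemma wq_stable {n : ℕ} (b : Fin n → Bool) {m : ℕ} (hm : n ≤ m) : wq b m = wq b n := by
  unfold wq
  refine Finset.sum_congr rfl fun i _ => ?_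
  rw [if_pos (lt_of_lt_of_le i.isLt hm), if_pos i.isLt]

lemma wq_eq_count {n : ℕ} (b : Fin n → Bool) :
    wq b n = 2 * ((univ.filter fun i => b i).card : ℤ) - n := by
  have h1 : wq b n = ∑ i : Fin n, wv (b i) :=
    Finset.sum_congr rfl fun i _ => if_pos i.isLt
  have h2 : ∀ i : Fin n, wv (b i) = (if b i then (2:ℤ) else 0) - 1 := by
    intro i; cases hb : b i <;> simp [wv, hb]
  rw [h1]
  simp only [h2]
  rw [Finset.sum_sub_distrib, ← Finset.sum_filter, Finset.sum_const]
  simp [mul_comm]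

lemma snoc_mem_iff {n : ℕ} (c : Fin n → Bool) (t : Bool) (h : ℤ) :
    ((∀ m, 0 ≤ wq (Fin.snoc c t) m) ∧ h ≤ wq (Fin.snoc c t) (n+1)) ↔
      ((∀ m, 0 ≤ wq c m) ∧ 0 ≤ wq c n + wv t ∧ h ≤ wq c n + wv t) := by
  have hend : ∀ m, n < m → wq (Fin.snoc c t) m = wq c n + wv t := by
    intro m hm
    rw [wq_snoc, if_pos hm, wq_stable c hm.le]
  constructor
  · rintro ⟨H1, H2⟩
    have he := hend (n+1) (Nat.lt_succ_self n)
    refine ⟨fun m => ?_, ?_, ?_⟩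
    · rcases le_or_gt m n with hmn | hmn
      · have := H1 m
        rwa [wq_snoc, if_neg (by omega), add_zero] at this
      · rw [wq_stable c hmn.le]
        have := H1 n
        rwa [wq_snoc, if_neg (by omega), add_zero] at this
    · rw [← he]; exact H1 (n+1)
    · rwa [he] at H2
  · rintro ⟨H1, H2, H3⟩
    refine ⟨fun m => ?_, by rwa [hend (n+1) (Nat.lt_succ_self n)]⟩
    rcases le_or_gt m n with hmn | hmn
    · rw [wq_snoc, if_neg (by omega), add_zero]; exact H1 m
    · rw [hend m hmn]; exact H2

lemma snoc_inj {n : ℕ} (t : Bool) :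
    Function.Injective (fun c : Fin n → Bool => Fin.snoc c t : (Fin n → Bool) → (Fin (n+1) → Bool)) := by
  intro a b hab
  simpa [Fin.init_snoc] using congrArg Fin.init hab

lemma Bn_rec (n : ℕ) (h : ℤ) (hh : 0 ≤ h) :
    Bn (n+1) h = Bn n (h-1) + Bn n (h+1) := by
  classical
  have hset : {b : Fin (n+1) → Bool | (∀ m, 0 ≤ wq b m) ∧ h ≤ wq b (n+1)} =
      (fun c : Fin n → Bool => (Fin.snoc c true : Fin (n+1) → Bool)) '' {c : Fin n → Bool | (∀ m, 0 ≤ wq c m) ∧ h - 1 ≤ wq c n} ∪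
      (fun c : Fin n → Bool => (Fin.snoc c false : Fin (n+1) → Bool)) '' {c : Fin n → Bool | (∀ m, 0 ≤ wq c m) ∧ h + 1 ≤ wq c n} := by
    ext b
    simp only [Set.mem_setOf_eq, Set.mem_union, Set.mem_image]
    constructor
    · intro hb
      cases hlast : b (Fin.last n)
      · right
        refine ⟨Fin.init b, ?_, by rw [← hlast, Fin.snoc_init_self]⟩
        have hb' : (∀ m, 0 ≤ wq (Fin.snoc (Fin.init b) false) m) ∧
            h ≤ wq (Fin.snoc (Fin.init b) false) (n+1) := by
          rw [← hlast, Fin.snoc_init_self]; exact hb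
        have H := (snoc_mem_iff _ _ _).1 hb'
        simp only [wv] at H
        exact ⟨H.1, by have := H.2.2; simp at this; linarith⟩
      · left
        refine ⟨Fin.init b, ?_, by rw [← hlast, Fin.snoc_init_self]⟩
        have hb' : (∀ m, 0 ≤ wq (Fin.snoc (Fin.init b) true) m) ∧
            h ≤ wq (Fin.snoc (Fin.init b) true) (n+1) := by
          rw [← hlast, Fin.snoc_init_self]; exact hb
        have H := (snoc_mem_iff _ _ _).1 hb'
        simp only [wv] at H
        exact ⟨H.1, by have := H.2.2; simp at this; linarith⟩
    · rintro (⟨c, hc, rfl⟩ | ⟨c, hc, rfl⟩)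
      · refine (snoc_mem_iff _ _ _).2 ⟨hc.1, ?_, ?_⟩
        · have := hc.1 n; simp [wv]; linarith
        · have := hc.2; simp [wv]; linarith
      · refine (snoc_mem_iff _ _ _).2 ⟨hc.1, ?_, ?_⟩
        · have := hc.2; simp [wv]; linarith
        · have := hc.2; simp [wv]; linarith
  have hdisj : Disjoint
      ((fun c : Fin n → Bool => (Fin.snoc c true : Fin (n+1) → Bool)) '' {c : Fin n → Bool | (∀ m, 0 ≤ wq c m) ∧ h - 1 ≤ wq c n})
      ((fun c : Fin n → Bool => (Fin.snoc c false : Fin (n+1) → Bool)) '' {c : Fin n → Bool | (∀ m, 0 ≤ wq c m) ∧ h + 1 ≤ wq c n}) := by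
    rw [Set.disjoint_left]
    rintro x ⟨c, _, rfl⟩ ⟨c', _, heq⟩
    have := congrArg (fun f => f (Fin.last n)) heq
    simp [Fin.snoc_last] at this
  rw [Bn, hset, Set.ncard_union_eq hdisj (Set.toFinite _) (Set.toFinite _),
    Set.ncard_image_of_injective _ (snoc_inj true),
    Set.ncard_image_of_injective _ (snoc_inj false)]
  rfl

lemma Bn_mono_triv {n : ℕ} {h h' : ℤ} (hh : h ≤ 0) (hh' : h' ≤ 0) : Bn n h = Bn n h' := by
  unfold Bn
  congr 1
  ext b
  simp only [Set.mem_setOf_eq, and_congr_right_iff]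
  intro H
  have := H n
  constructor <;> intro <;> linarith

lemma Bn_gt {n : ℕ} {h : ℤ} (hh : (n:ℤ) < h) : Bn n h = 0 := by
  unfold Bn
  rw [Set.ncard_eq_zero (Set.toFinite _), Set.eq_empty_iff_forall_notMem]
  intro b
  simp only [Set.mem_setOf_eq, not_and]
  intro H hle
  have hc := wq_eq_count b
  have hcard : (univ.filter fun i => b i).card ≤ n := le_trans (Finset.card_filter_le _ _) (by simp)
  have : ((univ.filter fun i => b i).card : ℤ) ≤ n := by exact_mod_cast hcard
  omega

lemma Bn_odd {n : ℕ} (hn : Odd n) : Bn n 0 = Bn n 1 := by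
  unfold Bn
  congr 1
  ext b
  simp only [Set.mem_setOf_eq, and_congr_right_iff]
  intro H
  have hc := wq_eq_count b
  obtain ⟨m, hm⟩ := hn
  constructor <;> intro <;> omega

lemma Bn_key : ∀ n k : ℕ, n ≤ 2 * k → k ≤ n → Bn n (2*(k:ℤ) - n) = n.choose k := by
  intro n
  induction n with
  | zero =>
    intro k _ h2
    have hk0 : k = 0 := Nat.le_zero.1 h2
    subst hk0
    have huniv : {b : Fin 0 → Bool | (∀ m, 0 ≤ wq b m) ∧ (2*((0:ℕ):ℤ) - ((0:ℕ):ℤ)) ≤ wq b 0}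
        = Set.univ := by
      ext b; simp [wq]
    unfold Bn
    rw [huniv, Set.ncard_univ, Nat.card_eq_fintype_card]
    simp
  | succ n ih =>
    intro k h1 h2
    obtain ⟨k', rfl⟩ : ∃ k', k = k' + 1 := ⟨k - 1, by omega⟩
    have hh : (0:ℤ) ≤ 2*((k'+1 : ℕ):ℤ) - ((n+1 : ℕ):ℤ) := by push_cast; omega
    rw [Bn_rec n _ hh]
    have e2 : 2*((k'+1 : ℕ):ℤ) - ((n+1 : ℕ):ℤ) + 1 = 2*((k'+1 : ℕ):ℤ) - (n:ℤ) := by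
      push_cast; ring
    have e1 : 2*((k'+1 : ℕ):ℤ) - ((n+1 : ℕ):ℤ) - 1 = 2*((k' : ℕ):ℤ) - (n:ℤ) := by
      push_cast; ring
    rw [e1, e2, Nat.choose_succ_succ, Nat.succ_eq_add_one]
    rcases Nat.lt_or_ge n (k' + 1) with hlt | hge
    · -- k = n+1
      have hk : k' = n := by omega
      have hz : Bn n (2*((k'+1 : ℕ):ℤ) - (n:ℤ)) = 0 :=
        Bn_gt (by push_cast; omega)
      have ho : Bn n (2*((k' : ℕ):ℤ) - (n:ℤ)) = n.choose k' := ih k' (by omega) (by omega)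
      rw [hz, ho]
      have : n.choose (k'+1) = 0 := Nat.choose_eq_zero_of_lt (by omega)
      omega
    · -- k'+1 ≤ n
      have hB2 : Bn n (2*((k'+1 : ℕ):ℤ) - (n:ℤ)) = n.choose (k'+1) := ih (k'+1) (by omega) hge
      by_cases hle : n ≤ 2 * k'
      · rw [hB2, ih k' (by omega) (by omega)]
      · -- 2k' < n, and n+1 ≤ 2(k'+1) = 2k'+2, so n = 2k'+1
        have hn : n = 2 * k' + 1 := by omega
        have hodd : Odd n := ⟨k', by omega⟩
        have e3 : 2*((k'+1 : ℕ):ℤ) - (n:ℤ) = 1 := by push_cast; omega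
        have e4 : 2*((k' : ℕ):ℤ) - (n:ℤ) = -1 := by push_cast; omega
        rw [e3, e4, Bn_mono_triv (by norm_num) (le_refl (0:ℤ)), Bn_odd hodd]
        have hB1 : Bn n (1:ℤ) = n.choose (k'+1) := by rw [← e3]; exact hB2
        rw [hB1]
        have hsym : n.choose k' = n.choose (k'+1) := by
          have := Nat.choose_symm (show k' + 1 ≤ n by omega)
          rwa [show n - (k'+1) = k' by omega] at this
        omega


lemma psum_eq_wq {n : ℕ} (b : Fin n → Bool) (m : ℕ) :
    psum (fun i => wv (b i)) m = wq b m := by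
  unfold psum wq
  rw [Finset.sum_filter]

lemma wv_inj : Function.Injective wv := by
  intro a b hab
  cases a <;> cases b <;> simp [wv] at hab ⊢

theorem stmt3 (n k : ℕ) (hk : k ≤ n) (hk2 : n ≤ 2 * k) :
    {w : Fin n → ℤ |
        (∀ i, w i = 1 ∨ w i = -1) ∧ (∀ m, 0 ≤ psum w m) ∧
          2 * (k : ℤ) - n ≤ psum w n}.ncard
      = Nat.choose n k := by
  classical
  have hset : {w : Fin n → ℤ |
        (∀ i, w i = 1 ∨ w i = -1) ∧ (∀ m, 0 ≤ psum w m) ∧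
          2 * (k : ℤ) - n ≤ psum w n} =
      (fun (b : Fin n → Bool) => fun i => wv (b i)) ''
        {b : Fin n → Bool | (∀ m, 0 ≤ wq b m) ∧ 2*(k:ℤ) - (n:ℤ) ≤ wq b n} := by
    ext w
    simp only [Set.mem_setOf_eq, Set.mem_image]
    constructor
    · rintro ⟨h1, h2, h3⟩
      refine ⟨fun i => decide (w i = 1), ⟨?_, ?_⟩, ?_⟩
      · intro m
        rw [← psum_eq_wq]
        have hw : (fun i => wv (decide (w i = 1))) = w := by
          funext i; rcases h1 i with hi | hi <;> simp [wv, hi]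
        rw [hw]; exact h2 m
      · rw [← psum_eq_wq]
        have hw : (fun i => wv (decide (w i = 1))) = w := by
          funext i; rcases h1 i with hi | hi <;> simp [wv, hi]
        rw [hw]; exact h3
      · funext i; rcases h1 i with hi | hi <;> simp [wv, hi]
    · rintro ⟨b, ⟨hb1, hb2⟩, rfl⟩
      refine ⟨fun i => ?_, fun m => ?_, ?_⟩
      · cases hbi : b i <;> simp [wv, hbi]
      · rw [psum_eq_wq]; exact hb1 m
      · rw [psum_eq_wq]; exact hb2
  rw [hset, Set.ncard_image_of_injective _ (fun a b hab => funext fun i =>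
    wv_inj (congrFun hab i))]
  exact Bn_key n k hk2 hk
end

section
/- The number of ±1-walks of length n starting at 0 that end at 0 or 1 equals the number of ±1-walks of length n starting at 0 whose partial sums are all nonnegative; both equal C(n, ⌈n/2⌉). -/
open Finset

namespace Stmt4Aux

def stepsOf {n : ℕ} (b : Fin n → Bool) : Fin n → ℤ := fun i => if b i then 1 else -1

lemma stepsOf_injective {n : ℕ} : Function.Injective (stepsOf (n := n)) := by
  intro b b' h
  funext i
  have := congrFun h i
  simp only [stepsOf] at this
  cases hb : b i <;> cases hb' : b' i <;> simp [hb, hb'] at this ⊢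

lemma setOf_eq_image {n : ℕ} (Q : (Fin n → ℤ) → Prop) :
    {w : Fin n → ℤ | (∀ i, w i = 1 ∨ w i = -1) ∧ Q w}
      = stepsOf '' {b | Q (stepsOf b)} := by
  ext w
  constructor
  · rintro ⟨h1, h2⟩
    refine ⟨fun i => w i = 1, ?_, ?_⟩
    · have : stepsOf (fun i => decide (w i = 1)) = w := by
        funext i
        rcases h1 i with h | h <;> simp [stepsOf, h]
      simpa [this] using h2
    · funext i
      rcases h1 i with h | h <;> simp [stepsOf, h]
  · rintro ⟨b, hb, rfl⟩
    exact ⟨fun i => by by_cases h : b i <;> simp [stepsOf, h], hb⟩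

lemma ncard_eq {n : ℕ} (Q : (Fin n → ℤ) → Prop) [DecidablePred fun b : Fin n → Bool => Q (stepsOf b)] :
    {w : Fin n → ℤ | (∀ i, w i = 1 ∨ w i = -1) ∧ Q w}.ncard
      = (univ.filter fun b : Fin n → Bool => Q (stepsOf b)).card := by
  rw [setOf_eq_image, Set.ncard_image_of_injective _ stepsOf_injective,
    Set.ncard_eq_toFinset_card', Set.toFinset_setOf]

lemma psum_zero {n : ℕ} (w : Fin n → ℤ) : psum w 0 = 0 := by
  simp [psum]

lemma psum_succ {n : ℕ} (w : Fin n → ℤ) (k : ℕ) (hk : k < n) :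
    psum w (k + 1) = psum w k + w ⟨k, hk⟩ := by
  unfold psum
  have hset : (univ.filter fun i : Fin n => (i : ℕ) < k + 1)
      = insert ⟨k, hk⟩ (univ.filter fun i : Fin n => (i : ℕ) < k) := by
    ext i
    simp only [Finset.mem_insert, Finset.mem_filter, Finset.mem_univ, true_and]
    constructor
    · rintro h
      rcases Nat.lt_succ_iff_lt_or_eq.mp h with h | h
      · exact Or.inr h
      · exact Or.inl (Fin.ext h)
    · rintro (rfl | h)
      · exact Nat.lt_succ_self _
      · exact h.trans (Nat.lt_succ_self _)
  rw [hset, Finset.sum_insert (by simp), add_comm]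

lemma psum_of_le {n : ℕ} (w : Fin n → ℤ) (k : ℕ) (hk : n ≤ k) : psum w k = psum w n := by
  unfold psum
  apply Finset.sum_congr _ (fun _ _ => rfl)
  ext i
  simp only [Finset.mem_filter, Finset.mem_univ, true_and]
  exact ⟨fun _ => i.isLt, fun h => h.trans_le hk⟩

lemma psum_top {n : ℕ} (b : Fin n → Bool) :
    psum (stepsOf b) n = 2 * ((univ.filter fun i => b i).card : ℤ) - n := by
  unfold psum stepsOf
  have hfil : (univ.filter fun i : Fin n => (i : ℕ) < n) = univ := by
    ext i; simp [i.isLt]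
  rw [hfil]
  have : ∀ i : Fin n, (if b i then (1:ℤ) else -1) = 2 * (if b i then (1:ℤ) else 0) - 1 := by
    intro i; by_cases h : b i <;> simp [h]
  rw [Finset.sum_congr rfl (fun i _ => this i), Finset.sum_sub_distrib, ← Finset.mul_sum,
    Finset.sum_boole]
  simp



lemma card_trues (n k : ℕ) :
    (univ.filter fun b : Fin n → Bool => (univ.filter fun i => b i).card = k).card
      = n.choose k := by
  have : n.choose k = (Finset.powersetCard k (univ : Finset (Fin n))).card := by
    rw [Finset.card_powersetCard, Finset.card_univ, Fintype.card_fin]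
  rw [this]
  · apply Finset.card_nbij' (fun b => univ.filter fun i => b i = true)
      (fun s i => decide (i ∈ s))
    · intro b hb
      simp only [Finset.mem_coe, Finset.mem_filter, Finset.mem_univ, true_and] at hb
      simp [Finset.mem_powersetCard, hb]
    · intro s hs
      simp only [Finset.mem_coe, Finset.mem_powersetCard] at hs
      simp only [Finset.mem_coe, Finset.mem_filter, Finset.mem_univ, true_and]
      rw [← hs.2]
      congr 1
      ext i
      simp
    · intro b hb
      funext i
      simp
    · intro s hs
      ext i
      simp




lemma psum_snoc_le {n : ℕ} (b : Fin n → Bool) (x : Bool) (k : ℕ) (hk : k ≤ n) :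
    psum (stepsOf (Fin.snoc b x)) k = psum (stepsOf b) k := by
  induction k with
  | zero => rw [psum_zero, psum_zero]
  | succ k ih =>
    have hk' : k < n := hk
    rw [psum_succ _ k (hk'.trans (Nat.lt_succ_self n)), psum_succ _ k hk', ih hk'.le]
    congr 1
    have hcast : stepsOf (Fin.snoc b x) (Fin.castSucc ⟨k, hk'⟩) = stepsOf b ⟨k, hk'⟩ := by
      unfold stepsOf
      rw [Fin.snoc_castSucc]
    exact hcast

lemma psum_snoc_top {n : ℕ} (b : Fin n → Bool) (x : Bool) :
    psum (stepsOf (Fin.snoc b x)) (n + 1)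
      = psum (stepsOf b) n + (if x then 1 else -1) := by
  rw [psum_succ _ n (Nat.lt_succ_self n), psum_snoc_le b x n le_rfl]
  congr 1
  have hlast : stepsOf (Fin.snoc b x) (Fin.last n) = (if x then 1 else -1) := by
    unfold stepsOf
    rw [Fin.snoc_last]
  exact hlast

def ok {n : ℕ} (b : Fin n → Bool) : Prop := ∀ k ≤ n, 0 ≤ psum (stepsOf b) k

instance {n : ℕ} (b : Fin n → Bool) : Decidable (ok b) :=
  Nat.decidableBallLE n _

def F (n h : ℕ) : ℕ :=
  (univ.filter fun b : Fin n → Bool => ok b ∧ psum (stepsOf b) n = (h : ℤ)).card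

lemma card_filter_snoc (n : ℕ) (P : (Fin n → Bool) → Prop) [DecidablePred P] (x : Bool) :
    ((univ : Finset (Fin (n+1) → Bool)).filter
        fun b => P (fun i => b i.castSucc) ∧ b (Fin.last n) = x).card
      = (univ.filter P).card := by
  apply Finset.card_nbij' (fun b => fun i : Fin n => b i.castSucc) (fun b => Fin.snoc b x)
  · intro b hb
    simp only [Finset.mem_coe, Finset.mem_filter, Finset.mem_univ, true_and] at hb ⊢
    exact hb.1
  · intro b hb
    simp only [Finset.mem_coe, Finset.mem_filter, Finset.mem_univ, true_and] at hb ⊢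
    refine ⟨?_, Fin.snoc_last _ _⟩
    have : (fun i : Fin n => (Fin.snoc b x : Fin (n+1) → Bool) i.castSucc) = b := by
      funext i; exact Fin.snoc_castSucc _ _ _
    rw [this]; exact hb
  · intro b hb
    simp only [Finset.mem_coe, Finset.mem_filter, Finset.mem_univ, true_and] at hb
    have := Fin.snoc_init_self b
    rw [← hb.2]
    exact this
  · intro b _
    funext i
    exact Fin.snoc_castSucc _ _ _

lemma master (n : ℕ) (h : ℤ) (h0 : 0 ≤ h) :
    (univ.filter fun b : Fin (n+1) → Bool => ok b ∧ psum (stepsOf b) (n+1) = h).card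
      = (univ.filter fun b : Fin n → Bool => ok b ∧ psum (stepsOf b) n = h - 1).card
        + (univ.filter fun b : Fin n → Bool => ok b ∧ psum (stepsOf b) n = h + 1).card := by
  have key : ∀ (b : Fin n → Bool) (x : Bool),
      (ok (Fin.snoc b x) ∧ psum (stepsOf (Fin.snoc b x)) (n+1) = h)
        ↔ (ok b ∧ psum (stepsOf b) n = h - (if x then 1 else -1)) := by
    intro b x
    constructor
    · rintro ⟨hok, hend⟩
      rw [psum_snoc_top] at hend
      refine ⟨fun k hk => ?_, by linarith⟩
      rw [← psum_snoc_le b x k hk]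
      exact hok k (hk.trans (Nat.le_succ n))
    · rintro ⟨hok, hend⟩
      constructor
      · intro k hk
        by_cases hk' : k ≤ n
        · rw [psum_snoc_le b x k hk']; exact hok k hk'
        · have hkk : k = n + 1 := by omega
          subst hkk
          rw [psum_snoc_top]
          have h1 := hok n le_rfl
          cases x <;> simp at hend ⊢ <;> linarith
      · rw [psum_snoc_top, hend]; ring
  have hrw : (univ.filter fun b : Fin (n+1) → Bool => ok b ∧ psum (stepsOf b) (n+1) = h)
      = univ.filter fun b : Fin (n+1) → Bool =>
          (ok (fun i : Fin n => b i.castSucc)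
            ∧ psum (stepsOf (fun i : Fin n => b i.castSucc)) n
                = h - (if b (Fin.last n) then 1 else -1)) := by
    apply Finset.filter_congr
    intro b _
    have hb := Fin.snoc_init_self b
    calc (ok b ∧ psum (stepsOf b) (n+1) = h)
        ↔ (ok (Fin.snoc (Fin.init b) (b (Fin.last n)))
            ∧ psum (stepsOf (Fin.snoc (Fin.init b) (b (Fin.last n)))) (n+1) = h) := by rw [hb]
      _ ↔ _ := key _ _
  rw [hrw]
  rw [← Finset.card_filter_add_card_filter_not
    (p := fun b : Fin (n+1) → Bool => b (Fin.last n) = true)]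
  · congr 1
    · rw [Finset.filter_filter]
      have : ∀ b : Fin (n+1) → Bool,
          ((ok (fun i : Fin n => b i.castSucc)
            ∧ psum (stepsOf (fun i : Fin n => b i.castSucc)) n
                = h - (if b (Fin.last n) then 1 else -1)) ∧ b (Fin.last n) = true)
          ↔ ((ok (fun i : Fin n => b i.castSucc)
            ∧ psum (stepsOf (fun i : Fin n => b i.castSucc)) n = h - 1)
              ∧ b (Fin.last n) = true) := by
        intro b
        constructor
        · rintro ⟨⟨h1, h2⟩, h3⟩; rw [h3] at h2; simp at h2; exact ⟨⟨h1, h2⟩, h3⟩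
        · rintro ⟨⟨h1, h2⟩, h3⟩; rw [h3]; simpa using ⟨h1, h2⟩
      rw [Finset.filter_congr fun b _ => this b]
      exact card_filter_snoc n (fun b => ok b ∧ psum (stepsOf b) n = h - 1) true
    · rw [Finset.filter_filter]
      have : ∀ b : Fin (n+1) → Bool,
          ((ok (fun i : Fin n => b i.castSucc)
            ∧ psum (stepsOf (fun i : Fin n => b i.castSucc)) n
                = h - (if b (Fin.last n) then 1 else -1))
            ∧ ¬ (b (Fin.last n) = true))
          ↔ ((ok (fun i : Fin n => b i.castSucc)
            ∧ psum (stepsOf (fun i : Fin n => b i.castSucc)) n = h + 1)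
              ∧ b (Fin.last n) = false) := by
        intro b
        rw [Bool.not_eq_true]
        constructor
        · rintro ⟨⟨h1, h2⟩, h3⟩; rw [h3] at h2; simp at h2
          refine ⟨⟨h1, by linarith⟩, h3⟩
        · rintro ⟨⟨h1, h2⟩, h3⟩; refine ⟨⟨h1, ?_⟩, h3⟩; rw [h3]; simp; linarith
      rw [Finset.filter_congr fun b _ => this b]
      exact card_filter_snoc n (fun b => ok b ∧ psum (stepsOf b) n = h + 1) false




lemma part1 (n : ℕ) :
    (univ.filter fun b : Fin n → Bool =>
        psum (stepsOf b) n = 0 ∨ psum (stepsOf b) n = 1).card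
      = n.choose ((n + 1) / 2) := by
  rw [← card_trues n ((n+1)/2)]
  congr 1
  apply Finset.filter_congr
  intro b _
  rw [psum_top]
  have hle : (univ.filter fun i => b i).card ≤ n := by
    calc (univ.filter fun i => b i).card ≤ (univ : Finset (Fin n)).card :=
          Finset.card_filter_le _ _
      _ = n := by simp
  constructor
  · rintro (h | h) <;> omega
  · intro h
    omega

-- ### F recurrences

lemma F_succ_zero (n : ℕ) : F (n + 1) 0 = F n 1 := by
  unfold F
  have h0 : ((0:ℕ):ℤ) = 0 := by norm_num
  rw [h0, master n 0 le_rfl]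
  have h1 : (univ.filter fun b : Fin n → Bool => ok b ∧ psum (stepsOf b) n = (0:ℤ) - 1) = ∅ := by
    ext b
    simp only [Finset.mem_filter, Finset.mem_univ, true_and, Finset.notMem_empty, iff_false]
    rintro ⟨hok, hend⟩
    have := hok n le_rfl
    omega
  rw [h1]
  simp only [Finset.card_empty, Nat.zero_add]
  have e2 : (0:ℤ) + 1 = ((1:ℕ):ℤ) := by norm_num
  rw [e2]

lemma F_succ_succ (n h : ℕ) : F (n + 1) (h + 1) = F n h + F n (h + 2) := by
  unfold F
  rw [master n ((h+1 : ℕ) : ℤ) (by positivity)]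
  have e1 : ((h+1:ℕ):ℤ) - 1 = ((h:ℕ):ℤ) := by push_cast; ring
  have e2 : ((h+1:ℕ):ℤ) + 1 = ((h+2:ℕ):ℤ) := by push_cast; ring
  rw [e1, e2]

lemma F_zero_zero : F 0 0 = 1 := by
  unfold F
  rw [Finset.filter_true_of_mem]
  · simp
  · intro b _
    refine ⟨?_, by rw [psum_zero]; norm_num⟩
    intro k hk
    interval_cases k
    rw [psum_zero]

lemma F_zero_succ (h : ℕ) : F 0 (h + 1) = 0 := by
  unfold F
  rw [Finset.filter_false_of_mem, Finset.card_empty]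
  intro b _
  rintro ⟨-, hend⟩
  rw [psum_zero] at hend
  omega

-- ### choose antitonicity

lemma choose_anti {n k : ℕ} (hk : n ≤ 2 * k) : n.choose (k + 1) ≤ n.choose k := by
  by_cases hkn : n ≤ k
  · rw [Nat.choose_eq_zero_of_lt (by omega)]
    exact Nat.zero_le _
  · push_neg at hkn
    have h1 : n.choose (k+1) = n.choose (n - (k+1)) := (Nat.choose_symm (by omega)).symm
    have h2 : n.choose (n - k) = n.choose k := Nat.choose_symm (by omega)
    have h3 : n - (k+1) < n / 2 := by omega
    have h4 := Nat.choose_le_succ_of_lt_half_left h3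
    have h5 : n - (k+1) + 1 = n - k := by omega
    rw [h5] at h4
    omega

lemma choose_anti_of_le {n a b : ℕ} (ha : n ≤ 2 * a) (hab : a ≤ b) :
    n.choose b ≤ n.choose a := by
  induction b, hab using Nat.le_induction with
  | base => exact le_rfl
  | succ b hb ih => exact (choose_anti (by omega)).trans ih

lemma teles (n a : ℕ) (ha : n ≤ 2 * a) (L : ℕ) :
    ∑ m ∈ range L, (n.choose (a + m) - n.choose (a + m + 1))
      = n.choose a - n.choose (a + L) := by
  induction L with
  | zero => simp
  | succ L ih =>
    rw [Finset.sum_range_succ, ih]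
    have h1 : n.choose (a + L) ≤ n.choose a := choose_anti_of_le ha (by omega)
    have h2 : n.choose (a + L + 1) ≤ n.choose (a + L) := choose_anti (by omega)
    have h3 : a + (L + 1) = a + L + 1 := by omega
    rw [h3]
    omega

-- ### ballot numbers

def ballot (n h : ℕ) : ℕ :=
  if (n + h) % 2 = 0 then n.choose ((n + h) / 2) - n.choose ((n + h) / 2 + 1) else 0

lemma ballot_zero_succ (n : ℕ) : ballot (n + 1) 0 = ballot n 1 := by
  unfold ballot
  by_cases hpar : (n + 1) % 2 = 0
  · rw [if_pos (by omega), if_pos (by omega)]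
    obtain ⟨m', hm'⟩ : ∃ m', (n + 1 + 0) / 2 = m' + 1 := ⟨(n+1+0)/2 - 1, by omega⟩
    rw [hm']
    have e3 : m' + 1 + 1 = m' + 2 := by omega
    rw [e3]
    have p1 : (n+1).choose (m'+1) = n.choose m' + n.choose (m'+1) := Nat.choose_succ_succ _ _
    have p2 : (n+1).choose (m'+2) = n.choose (m'+1) + n.choose (m'+2) := Nat.choose_succ_succ _ _
    have hsym : n.choose (n - m') = n.choose m' := Nat.choose_symm (by omega)
    have e2 : n - m' = m' + 1 := by omega
    rw [e2] at hsym
    have hle : n.choose (m'+2) ≤ n.choose (m'+1) := choose_anti (by omega)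
    omega
  · rw [if_neg (by omega), if_neg (by omega)]

lemma ballot_succ_succ (n h : ℕ) :
    ballot (n + 1) (h + 1) = ballot n h + ballot n (h + 2) := by
  unfold ballot
  by_cases hpar : (n + h) % 2 = 0
  · rw [if_pos (by omega), if_pos (by omega), if_pos (by omega)]
    set m := (n + h) / 2 with hm
    have e1 : (n + 1 + (h + 1)) / 2 = m + 1 := by omega
    have e2 : (n + (h + 2)) / 2 = m + 1 := by omega
    rw [e1, e2]
    have e3 : m + 1 + 1 = m + 2 := by omega
    rw [e3]
    have p1 : (n+1).choose (m+1) = n.choose m + n.choose (m+1) := Nat.choose_succ_succ _ _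
    have p2 : (n+1).choose (m+2) = n.choose (m+1) + n.choose (m+2) := Nat.choose_succ_succ _ _
    have h1 : n.choose (m+1) ≤ n.choose m := choose_anti (by omega)
    have h2 : n.choose (m+2) ≤ n.choose (m+1) := choose_anti (by omega)
    omega
  · rw [if_neg (by omega), if_neg (by omega), if_neg (by omega)]

lemma ballot_zero_zero : ballot 0 0 = 1 := by decide

lemma ballot_zero_nz (h : ℕ) : ballot 0 (h + 1) = 0 := by
  unfold ballot
  split
  · rw [Nat.choose_eq_zero_of_lt (by omega), Nat.choose_eq_zero_of_lt (by omega)]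
  · rfl

lemma F_eq_ballot (n : ℕ) : ∀ h, F n h = ballot n h := by
  induction n with
  | zero =>
    intro h
    cases h with
    | zero => rw [F_zero_zero, ballot_zero_zero]
    | succ h => rw [F_zero_succ, ballot_zero_nz]
  | succ n ih =>
    intro h
    cases h with
    | zero => rw [F_succ_zero, ballot_zero_succ, ih]
    | succ h => rw [F_succ_succ, ballot_succ_succ, ih, ih]

-- ### summation

lemma psum_le (n : ℕ) (b : Fin n → Bool) : psum (stepsOf b) n ≤ n := by
  rw [psum_top]
  have hle : (univ.filter fun i => b i).card ≤ n := by
    calc (univ.filter fun i => b i).card ≤ (univ : Finset (Fin n)).card :=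
          Finset.card_filter_le _ _
      _ = n := by simp
  omega

lemma card_ok (n : ℕ) :
    (univ.filter fun b : Fin n → Bool => ok b).card = ∑ h ∈ range (n + 1), F n h := by
  rw [Finset.card_eq_sum_card_fiberwise
    (f := fun b : Fin n → Bool => (psum (stepsOf b) n).toNat) (t := range (n + 1))]
  · apply Finset.sum_congr rfl
    intro h _
    unfold F
    rw [Finset.filter_filter]
    congr 1
    apply Finset.filter_congr
    intro b _
    constructor
    · rintro ⟨hok, he⟩
      refine ⟨hok, ?_⟩
      have := hok n le_rfl
      omega
    · rintro ⟨hok, he⟩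
      refine ⟨hok, ?_⟩
      omega
  · intro b hb
    simp only [Finset.mem_coe, Finset.mem_filter, Finset.mem_univ, true_and] at hb
    have h1 := hb n le_rfl
    have h2 := psum_le n b
    simp only [Finset.mem_coe, Finset.mem_range]
    omega

lemma sum_ballot (n : ℕ) :
    ∑ h ∈ range (n + 1), ballot n h = n.choose ((n + 1) / 2) := by
  rw [← Finset.sum_filter_of_ne (p := fun h => (n + h) % 2 = 0)
    (fun h _ hne => by by_contra hc; exact hne (by unfold ballot; rw [if_neg hc]))]
  rw [Finset.sum_nbij' (i := fun h => (h - n % 2) / 2) (j := fun m => n % 2 + 2 * m)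
    (t := range (n / 2 + 1))
    (g := fun m => n.choose ((n + 1) / 2 + m) - n.choose ((n + 1) / 2 + m + 1))]
  · rw [teles n ((n+1)/2) (by omega) (n/2 + 1)]
    have hz : n.choose ((n+1)/2 + (n/2 + 1)) = 0 := Nat.choose_eq_zero_of_lt (by omega)
    rw [hz, Nat.sub_zero]
  · intro h hh
    simp only [Finset.mem_filter, Finset.mem_range] at hh ⊢
    omega
  · intro m hm
    simp only [Finset.mem_filter, Finset.mem_range] at hm ⊢
    omega
  · intro h hh
    simp only [Finset.mem_filter, Finset.mem_range] at hh
    omega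
  · intro m hm
    simp only [Finset.mem_range] at hm
    omega
  · intro h hh
    simp only [Finset.mem_filter, Finset.mem_range] at hh
    unfold ballot
    rw [if_pos hh.2]
    have e1 : (n + h) / 2 = (n + 1) / 2 + (h - n % 2) / 2 := by omega
    rw [e1]

lemma part2 (n : ℕ) :
    (univ.filter fun b : Fin n → Bool => ok b).card = n.choose ((n + 1) / 2) := by
  rw [card_ok, ← sum_ballot]
  exact Finset.sum_congr rfl fun h _ => F_eq_ballot n h


lemma ok_iff {n : ℕ} (b : Fin n → Bool) :
    (∀ k, 0 ≤ psum (stepsOf b) k) ↔ ok b := by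
  constructor
  · intro H k _
    exact H k
  · intro H k
    by_cases hk : k ≤ n
    · exact H k hk
    · rw [psum_of_le _ k (by omega)]
      exact H n le_rfl

end Stmt4Aux

open Stmt4Aux in
theorem stmt4 (n : ℕ) :
    {w : Fin n → ℤ |
        (∀ i, w i = 1 ∨ w i = -1) ∧ (psum w n = 0 ∨ psum w n = 1)}.ncard
      = {w : Fin n → ℤ |
          (∀ i, w i = 1 ∨ w i = -1) ∧ (∀ k, 0 ≤ psum w k)}.ncard
    ∧ {w : Fin n → ℤ |
        (∀ i, w i = 1 ∨ w i = -1) ∧ (psum w n = 0 ∨ psum w n = 1)}.ncard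
      = Nat.choose n ((n + 1) / 2) := by
  have hA : {w : Fin n → ℤ |
      (∀ i, w i = 1 ∨ w i = -1) ∧ (psum w n = 0 ∨ psum w n = 1)}.ncard
        = Nat.choose n ((n + 1) / 2) := by
    rw [ncard_eq (Q := fun w => psum w n = 0 ∨ psum w n = 1)]
    exact part1 n
  letI : DecidablePred (fun b : Fin n → Bool => ∀ k, 0 ≤ psum (stepsOf b) k) :=
    fun b => Classical.dec _
  have hB : {w : Fin n → ℤ |
      (∀ i, w i = 1 ∨ w i = -1) ∧ (∀ k, 0 ≤ psum w k)}.ncard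
        = Nat.choose n ((n + 1) / 2) := by
    rw [ncard_eq (Q := fun w => ∀ k, 0 ≤ psum w k)]
    rw [Finset.filter_congr (fun b _ => ok_iff b)]
    exact part2 n
  exact ⟨hA.trans hB.symm, hA⟩
end

section
/- There is a bijection between the set of ±1-walks of length n starting at 0 and ending in {0,1}, and the set of ±1-walks of length n starting at 0 with all partial sums nonnegative, which maps a walk with endpoint e ∈ {0,1} and minimum value −d to a positive walk ending at 2d+e. -/
def minval {n : ℕ} (w : Fin n → ℤ) : ℤ :=
  ((Finset.range (n + 1)).image (psum w)).min' (by simp)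

namespace Stmt5
variable {n : ℕ}

lemma psum_zero (w : Fin n → ℤ) : psum w 0 = 0 := by simp [psum]

lemma psum_succ (w : Fin n → ℤ) {k : ℕ} (hk : k < n) :
    psum w (k+1) = psum w k + w ⟨k, hk⟩ := by
  unfold psum
  rw [show (Finset.univ.filter (fun i : Fin n => (i:ℕ) < k+1)) =
      insert ⟨k, hk⟩ (Finset.univ.filter (fun i : Fin n => (i:ℕ) < k)) from ?_]
  · rw [Finset.sum_insert (by simp)]; ring
  · ext i; simp [Fin.ext_iff]; omega

lemma psum_stable (w : Fin n → ℤ) {k : ℕ} (hk : n ≤ k) : psum w k = psum w n := by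
  unfold psum
  congr 1
  ext i
  have := i.isLt
  simp only [Finset.mem_filter, Finset.mem_univ, true_and]
  omega

def M (w : Fin n → ℤ) (k : ℕ) : ℤ := ((Finset.range (k+1)).image (psum w)).min' (by simp)

lemma minval_eq_M (w : Fin n → ℤ) : minval w = M w n := rfl

lemma M_le (w : Fin n → ℤ) {j k : ℕ} (h : j ≤ k) : M w k ≤ psum w j := by
  apply Finset.min'_le
  exact Finset.mem_image_of_mem _ (Finset.mem_range.2 (by omega))

lemma exists_M (w : Fin n → ℤ) (k : ℕ) : ∃ j, j ≤ k ∧ psum w j = M w k := by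
  have := Finset.min'_mem ((Finset.range (k+1)).image (psum w)) (by simp)
  rw [Finset.mem_image] at this
  obtain ⟨j, hj, e⟩ := this
  rw [Finset.mem_range] at hj
  exact ⟨j, by omega, e⟩

lemma M_zero (w : Fin n → ℤ) : M w 0 = 0 := by
  simp [M, psum_zero]

lemma M_antitone (w : Fin n → ℤ) {k l : ℕ} (h : k ≤ l) : M w l ≤ M w k := by
  obtain ⟨j, hj, e⟩ := exists_M w k
  rw [← e]; exact M_le w (by omega)

lemma M_nonpos (w : Fin n → ℤ) (k : ℕ) : M w k ≤ 0 := by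
  have := M_le w (Nat.zero_le k)
  rwa [psum_zero] at this

lemma M_eq (w : Fin n → ℤ) {k : ℕ} {x : ℤ} (h1 : ∀ j, j ≤ k → x ≤ psum w j)
    (h2 : ∃ j, j ≤ k ∧ psum w j = x) : M w k = x := by
  obtain ⟨j, hj, e⟩ := h2
  apply le_antisymm
  · rw [← e]; exact M_le w hj
  · apply Finset.le_min'
    intro y hy
    rw [Finset.mem_image] at hy
    obtain ⟨i, hi, e'⟩ := hy
    rw [Finset.mem_range] at hi
    rw [← e']
    exact h1 i (by omega)


def P (w : Fin n → ℤ) (t : Fin n) : Prop := psum w ((t:ℕ)+1) < M w t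

instance (w : Fin n → ℤ) (t : Fin n) : Decidable (P w t) := Int.decLt _ _

def gmap (w : Fin n → ℤ) (i : Fin n) : ℤ := if P w i then -w i else w i

lemma gmap_steps {w : Fin n → ℤ} (hw : ∀ i, w i = 1 ∨ w i = -1) (i : Fin n) :
    gmap w i = 1 ∨ gmap w i = -1 := by
  unfold gmap; rcases hw i with h | h <;> rw [h] <;> split <;> simp

/-- Structure of a flip position. -/
lemma P_elim {w : Fin n → ℤ} (hw : ∀ i, w i = 1 ∨ w i = -1) {t : Fin n} (ht : P w t) :
    psum w t = M w t ∧ psum w ((t:ℕ)+1) = M w t - 1 ∧ M w ((t:ℕ)+1) = M w t - 1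
      ∧ w t = -1 := by
  unfold P at ht
  have hs : psum w ((t:ℕ)+1) = psum w t + w t := by
    have := psum_succ w t.isLt
    simpa using this
  have hMle : M w (t:ℕ) ≤ psum w t := M_le w (le_refl _)
  have hwt : w t = -1 := by
    rcases hw t with h | h
    · rw [h] at hs; omega
    · exact h
  rw [hwt] at hs
  have h1 : psum w t = M w t := by omega
  have h2 : psum w ((t:ℕ)+1) = M w t - 1 := by omega
  refine ⟨h1, h2, ?_, hwt⟩
  apply M_eq
  · intro j hj
    rcases Nat.lt_or_ge j ((t:ℕ)+1) with h | h
    · have := M_le w (show j ≤ (t:ℕ) by omega)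
      omega
    · have hj' : j = (t:ℕ)+1 := by omega
      rw [hj']
      omega
  · exact ⟨(t:ℕ)+1, le_refl _, h2⟩

/-- Partial sums of the flipped walk. -/
lemma gmap_psum {w : Fin n → ℤ} (hw : ∀ i, w i = 1 ∨ w i = -1) :
    ∀ k, k ≤ n → psum (gmap w) k = psum w k - 2 * M w k := by
  intro k
  induction k with
  | zero => intro _; rw [psum_zero, psum_zero, M_zero]; ring
  | succ k ih =>
    intro hk
    have hkn : k < n := by omega
    have ih' := ih (by omega)
    have hs := psum_succ w hkn
    have hs' := psum_succ (gmap w) hkn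
    by_cases hP : P w ⟨k, hkn⟩
    · obtain ⟨h1, h2, h3, h4⟩ := P_elim hw hP
      simp only at h1 h2 h3 h4
      have : gmap w ⟨k, hkn⟩ = 1 := by unfold gmap; rw [if_pos hP, h4]; ring
      rw [hs', this, ih', h3]
      omega
    · have hM : M w (k+1) = M w k := by
        apply M_eq
        · intro j hj
          rcases Nat.lt_or_ge j (k+1) with h | h
          · exact M_le w (by omega)
          · have : j = k+1 := by omega
            subst this
            unfold P at hP
            simp only [not_lt] at hP
            exact hP
        · obtain ⟨j, hj, e⟩ := exists_M w k
          exact ⟨j, by omega, e⟩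
      have : gmap w ⟨k, hkn⟩ = w ⟨k, hkn⟩ := by unfold gmap; rw [if_neg hP]
      rw [hs', this, ih', hM, hs]
      ring

lemma gmap_nonneg {w : Fin n → ℤ} (hw : ∀ i, w i = 1 ∨ w i = -1) (k : ℕ) :
    0 ≤ psum (gmap w) k := by
  rcases le_or_gt k n with h | h
  · rw [gmap_psum hw k h]
    have h1 := M_le w (le_refl k)
    have h2 := M_nonpos w k
    omega
  · rw [psum_stable _ h.le, gmap_psum hw n (le_refl _)]
    have h1 := M_le w (le_refl n)
    have h2 := M_nonpos w n
    omega

lemma gmap_endpoint {w : Fin n → ℤ} (hw : ∀ i, w i = 1 ∨ w i = -1) :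
    psum (gmap w) n = psum w n - 2 * minval w := by
  rw [minval_eq_M]; exact gmap_psum hw n (le_refl _)


lemma ivt_down {w : Fin n → ℤ} (hw : ∀ i, w i = 1 ∨ w i = -1) {a b : ℕ} {x : ℤ}
    (hab : a ≤ b) :
    b ≤ n → psum w b ≤ x → x ≤ psum w a → ∃ j, a ≤ j ∧ j ≤ b ∧ psum w j = x := by
  induction b, hab using Nat.le_induction with
  | base => intro _ h1 h2; exact ⟨a, le_refl _, le_refl _, le_antisymm h1 h2⟩
  | succ b hab ih =>
    intro hbn h1 h2
    rcases le_or_gt (psum w b) x with h | h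
    · obtain ⟨j, hj1, hj2, hj3⟩ := ih (by omega) h h2
      exact ⟨j, hj1, by omega, hj3⟩
    · have hs := psum_succ w (show b < n by omega)
      rcases hw ⟨b, by omega⟩ with e | e <;> rw [e] at hs
      · omega
      · exact ⟨b+1, by omega, le_refl _, by omega⟩

lemma ivt_up {w : Fin n → ℤ} (hw : ∀ i, w i = 1 ∨ w i = -1) {a b : ℕ} {x : ℤ}
    (hab : a ≤ b) :
    b ≤ n → psum w a ≤ x → x ≤ psum w b → ∃ j, a ≤ j ∧ j ≤ b ∧ psum w j = x := by
  induction b, hab using Nat.le_induction with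
  | base => intro _ h1 h2; exact ⟨a, le_refl _, le_refl _, le_antisymm h1 h2⟩
  | succ b hab ih =>
    intro hbn h1 h2
    rcases le_or_gt x (psum w b) with h | h
    · obtain ⟨j, hj1, hj2, hj3⟩ := ih (by omega) h1 h
      exact ⟨j, hj1, by omega, hj3⟩
    · have hs := psum_succ w (show b < n by omega)
      rcases hw ⟨b, by omega⟩ with e | e <;> rw [e] at hs
      · exact ⟨b+1, by omega, le_refl _, by omega⟩
      · omega

lemma M_ge (w : Fin n → ℤ) {k : ℕ} {x : ℤ} (h1 : ∀ j, j ≤ k → x ≤ psum w j) :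
    x ≤ M w k := by
  apply Finset.le_min'
  intro y hy
  rw [Finset.mem_image] at hy
  obtain ⟨i, hi, e'⟩ := hy
  rw [Finset.mem_range] at hi
  rw [← e']
  exact h1 i (by omega)

def Q (v : Fin n → ℤ) (u : Fin n) : Prop :=
  (∀ k, k ≤ n → (u:ℕ) < k → psum v u < psum v k) ∧
    2 * psum v u + 2 + psum v n % 2 ≤ psum v n

instance (v : Fin n → ℤ) (u : Fin n) : Decidable (Q v u) := by
  unfold Q; infer_instance

def hmap (v : Fin n → ℤ) (i : Fin n) : ℤ := if Q v i then -v i else v i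

lemma hmap_steps {v : Fin n → ℤ} (hv : ∀ i, v i = 1 ∨ v i = -1) (i : Fin n) :
    hmap v i = 1 ∨ hmap v i = -1 := by
  unfold hmap; rcases hv i with h | h <;> rw [h] <;> split <;> simp

lemma Q_step {v : Fin n → ℤ} (hv : ∀ i, v i = 1 ∨ v i = -1) {u : Fin n} (hu : Q v u) :
    v u = 1 ∧ psum v ((u:ℕ)+1) = psum v u + 1 := by
  have h1 := hu.1 ((u:ℕ)+1) (by have := u.isLt; omega) (by omega)
  have hs : psum v ((u:ℕ)+1) = psum v u + v u := by simpa using psum_succ v u.isLt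
  rcases hv u with e | e <;> rw [e] at hs <;> [exact ⟨e, by omega⟩; omega]

def N (v : Fin n → ℤ) : ℕ → ℤ
  | 0 => 0
  | k+1 => N v k + if h : k < n then (if Q v ⟨k, h⟩ then 1 else 0) else 0

lemma N_succ_mem {v : Fin n → ℤ} {k : ℕ} (h : k < n) (hQ : Q v ⟨k, h⟩) :
    N v (k+1) = N v k + 1 := by simp [N, h, hQ]

lemma N_succ_not {v : Fin n → ℤ} {k : ℕ} (h : ∀ hk : k < n, ¬ Q v ⟨k, hk⟩) :
    N v (k+1) = N v k := by
  rcases Nat.lt_or_ge k n with hk | hk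
  · simp [N, hk, h hk]
  · simp [N, Nat.not_lt.2 hk]

lemma N_step_le (v : Fin n → ℤ) (k : ℕ) : N v k ≤ N v (k+1) := by
  simp only [N]
  split
  · split <;> omega
  · omega

lemma N_mono (v : Fin n → ℤ) {k l : ℕ} (h : k ≤ l) : N v k ≤ N v l := by
  induction l, h using Nat.le_induction with
  | base => exact le_refl _
  | succ l hl ih =>
    have := N_step_le v l
    omega

lemma N_nonneg (v : Fin n → ℤ) (k : ℕ) : 0 ≤ N v k := by
  have := N_mono v (Nat.zero_le k)
  simpa [N] using this

lemma N_const {v : Fin n → ℤ} {a b : ℕ} (hab : a ≤ b)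
    (h : ∀ t, a ≤ t → t < b → ∀ ht : t < n, ¬ Q v ⟨t, ht⟩) : N v b = N v a := by
  induction b, hab using Nat.le_induction with
  | base => rfl
  | succ b hab ih =>
    rw [N_succ_not (fun hk => h b hab (by omega) hk), ih]
    intro t h1 h2
    exact h t h1 (by omega)

lemma hmap_psum {v : Fin n → ℤ} (hv : ∀ i, v i = 1 ∨ v i = -1) :
    ∀ k, k ≤ n → psum (hmap v) k = psum v k - 2 * N v k := by
  intro k
  induction k with
  | zero => intro _; rw [psum_zero, psum_zero]; simp [N]
  | succ k ih =>
    intro hk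
    have hkn : k < n := by omega
    have ih' := ih (by omega)
    have hs := psum_succ v hkn
    have hs' := psum_succ (hmap v) hkn
    by_cases hQ : Q v ⟨k, hkn⟩
    · have h1 := Q_step hv hQ
      simp only at h1
      have h2 : hmap v ⟨k, hkn⟩ = -1 := by unfold hmap; rw [if_pos hQ, h1.1]
      rw [hs', h2, ih', N_succ_mem hkn hQ]
      omega
    · have h2 : hmap v ⟨k, hkn⟩ = v ⟨k, hkn⟩ := by unfold hmap; rw [if_neg hQ]
      rw [hs', h2, ih', N_succ_not (fun _ => hQ), hs]
      ring


section Backward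
variable {v : Fin n → ℤ} (hv : ∀ i, v i = 1 ∨ v i = -1) (hpos : ∀ k, 0 ≤ psum v k)

/-- Last occurrence of a small value is a flip position. -/
lemma lastOcc (hv : ∀ i, v i = 1 ∨ v i = -1) (hpos : ∀ k, 0 ≤ psum v k)
    {c : ℤ} (hc0 : 0 ≤ c) (hcb : 2*c + 2 + psum v n % 2 ≤ psum v n) :
    ∃ u : Fin n, Q v u ∧ psum v (u:ℕ) = c := by
  have hcm : c < psum v n := by omega
  obtain ⟨j, _, hjn, hj⟩ := ivt_up hv (Nat.zero_le n) (le_refl n)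
    (by rw [psum_zero]; exact hc0) hcm.le
  set p : ℕ → Prop := fun j => psum v j = c with hp
  have hdec : DecidablePred p := fun j => by unfold p; infer_instance
  set u0 := Nat.findGreatest p n with hu0
  have hspec : p u0 := Nat.findGreatest_spec hjn hj
  have hle : u0 ≤ n := Nat.findGreatest_le n
  have hlt : u0 < n := by
    rcases Nat.lt_or_ge u0 n with h | h
    · exact h
    · exfalso; have : u0 = n := by omega
      rw [this] at hspec; unfold p at hspec; omega
  have hgr : ∀ k, u0 < k → k ≤ n → ¬ p k := fun k h1 h2 => Nat.findGreatest_is_greatest h1 h2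
  refine ⟨⟨u0, hlt⟩, ⟨?_, ?_⟩, hspec⟩
  · intro k hk hk'
    simp only at hk' ⊢
    have hne : psum v k ≠ c := hgr k hk' hk
    rcases le_or_gt (psum v k) c with h | h
    · exfalso
      obtain ⟨j', hj'1, hj'2, hj'3⟩ := ivt_up hv hk (le_refl n) h hcm.le
      exact hgr j' (by omega) hj'2 hj'3
    · unfold p at hspec; omega
  · simp only
    unfold p at hspec
    omega


/-- The number of flip positions below a flip position equals its value. -/
lemma F1 (hv : ∀ i, v i = 1 ∨ v i = -1) (hpos : ∀ k, 0 ≤ psum v k) :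
    ∀ k (hk : k < n), Q v ⟨k, hk⟩ → N v k = psum v k := by
  intro k
  induction k using Nat.strong_induction_on with
  | _ k ih =>
    intro hk hQ
    have hc0 : 0 ≤ psum v k := hpos k
    rcases eq_or_lt_of_le hc0 with hc | hc
    · -- value 0 : no flip positions below
      rw [← hc]
      rw [show (0:ℤ) = N v 0 from rfl]
      apply N_const (Nat.zero_le k)
      intro t _ htk ht hQt
      have h1 := hQt.1 k (by omega) htk
      have h2 := hpos t
      have h3 := hQ.2
      simp only [Fin.val_mk] at h1 h3 ⊢
      omega
    · -- value c > 0 : find previous flip position with value c-1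
      obtain ⟨u', hQ', hval'⟩ := lastOcc hv hpos (c := psum v k - 1) (by omega)
        (by have := hQ.2; simp only [Fin.val_mk] at this; omega)
      have hu'k : (u':ℕ) < k := by
        rcases Nat.lt_trichotomy (u':ℕ) k with h | h | h
        · exact h
        · exfalso; rw [h] at hval'; omega
        · exfalso
          have h5 := hQ.1 (u':ℕ) (by have := u'.isLt; omega) h
          simp only [Fin.val_mk] at h5
          omega
      have step1 : N v k = N v ((u':ℕ)+1) := by
        apply N_const (by omega)
        intro t h1 h2 ht hQt
        have ha := hQ'.1 t (by omega) (by omega)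
        have hb := hQt.1 k (by omega) h2
        simp only [Fin.val_mk] at ha hb
        omega
      have step2 : N v ((u':ℕ)+1) = N v (u':ℕ) + 1 := N_succ_mem u'.isLt hQ'
      have step3 : N v (u':ℕ) = psum v (u':ℕ) := ih (u':ℕ) hu'k u'.isLt hQ'
      omega

/-- Structure of the count below `k` : zero or determined by the largest flip position. -/
lemma Nstruct (hv : ∀ i, v i = 1 ∨ v i = -1) (hpos : ∀ k, 0 ≤ psum v k) :
    ∀ k, N v k = 0 ∨ ∃ u : Fin n, Q v u ∧ (u:ℕ) < k ∧ N v k = psum v (u:ℕ) + 1 := by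
  intro k
  induction k with
  | zero => left; rfl
  | succ k ih =>
    by_cases h : ∃ hk : k < n, Q v ⟨k, hk⟩
    · obtain ⟨hk, hQ⟩ := h
      right
      refine ⟨⟨k, hk⟩, hQ, by simp, ?_⟩
      rw [N_succ_mem hk hQ, F1 hv hpos k hk hQ]
    · push_neg at h
      rw [N_succ_not h]
      rcases ih with h' | ⟨u, h1, h2, h3⟩
      · left; exact h'
      · right; exact ⟨u, h1, by omega, h3⟩

lemma N_le (hv : ∀ i, v i = 1 ∨ v i = -1) (hpos : ∀ k, 0 ≤ psum v k) :
    ∀ k, k ≤ n → N v k ≤ psum v k := by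
  intro k hk
  rcases Nstruct hv hpos k with h | ⟨u, h1, h2, h3⟩
  · rw [h]; exact hpos k
  · have := h1.1 k hk h2
    omega

lemma M_hmap (hv : ∀ i, v i = 1 ∨ v i = -1) (hpos : ∀ k, 0 ≤ psum v k) :
    ∀ k, k ≤ n → M (hmap v) k = -(N v k) := by
  intro k hk
  apply M_eq
  · intro j hj
    rw [hmap_psum hv j (by omega)]
    have h1 := N_le hv hpos j (by omega)
    have h2 := N_mono v hj
    omega
  · rcases Nstruct hv hpos k with h | ⟨u, h1, h2, h3⟩
    · exact ⟨0, Nat.zero_le k, by rw [psum_zero, h]; ring⟩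
    · refine ⟨(u:ℕ)+1, by omega, ?_⟩
      rw [hmap_psum hv _ (by omega), N_succ_mem u.isLt h1,
        F1 hv hpos (u:ℕ) u.isLt h1, (Q_step hv h1).2]
      omega

lemma P_hmap_iff (hv : ∀ i, v i = 1 ∨ v i = -1) (hpos : ∀ k, 0 ≤ psum v k) (t : Fin n) :
    P (hmap v) t ↔ Q v t := by
  have htn := t.isLt
  unfold P
  rw [M_hmap hv hpos (t:ℕ) (by omega), hmap_psum hv ((t:ℕ)+1) (by omega)]
  by_cases hQ : Q v t
  · have h1 : N v ((t:ℕ)+1) = N v (t:ℕ) + 1 := N_succ_mem htn (by simpa using hQ)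
    have h2 := (Q_step hv hQ).2
    have h3 := F1 hv hpos (t:ℕ) htn (by simpa using hQ)
    simp only [hQ, iff_true]
    omega
  · have h1 : N v ((t:ℕ)+1) = N v (t:ℕ) := N_succ_not (fun _ => by simpa using hQ)
    have h2 := N_le hv hpos ((t:ℕ)+1) (by omega)
    simp only [hQ, iff_false, not_lt]
    omega

lemma gmap_hmap (hv : ∀ i, v i = 1 ∨ v i = -1) (hpos : ∀ k, 0 ≤ psum v k) :
    gmap (hmap v) = v := by
  funext i
  have h := P_hmap_iff hv hpos i
  unfold gmap
  by_cases hQ : Q v i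
  · rw [if_pos (h.2 hQ)]
    unfold hmap
    rw [if_pos hQ, neg_neg]
  · rw [if_neg (fun hh => hQ (h.1 hh))]
    unfold hmap
    rw [if_neg hQ]

lemma hmap_endpoint (hv : ∀ i, v i = 1 ∨ v i = -1) (hpos : ∀ k, 0 ≤ psum v k) :
    psum (hmap v) n = psum v n % 2 := by
  rw [hmap_psum hv n (le_refl n)]
  have hub : 2 * N v n ≤ psum v n - psum v n % 2 := by
    rcases Nstruct hv hpos n with h | ⟨u, h1, h2, h3⟩
    · have := hpos n; omega
    · have := h1.2; omega
  have hlb : psum v n - psum v n % 2 ≤ 2 * N v n := by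
    by_contra hcon
    push_neg at hcon
    have hNn := N_nonneg v n
    obtain ⟨u, hQ, hval⟩ := lastOcc hv hpos (c := N v n) hNn (by omega)
    have e1 : N v ((u:ℕ)+1) = N v (u:ℕ) + 1 := N_succ_mem u.isLt hQ
    have e2 : N v (u:ℕ) = psum v (u:ℕ) := F1 hv hpos (u:ℕ) u.isLt hQ
    have e3 : N v ((u:ℕ)+1) ≤ N v n := N_mono v (by have := u.isLt; omega)
    omega
  omega

end Backward


section Forward
variable {w : Fin n → ℤ}

lemma gmap_E (hw : ∀ i, w i = 1 ∨ w i = -1) (he : psum w n = 0 ∨ psum w n = 1) :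
    psum (gmap w) n % 2 = psum w n := by
  rw [gmap_psum hw n (le_refl n)]
  have := M_nonpos w n
  omega

lemma QP (hw : ∀ i, w i = 1 ∨ w i = -1) (he : psum w n = 0 ∨ psum w n = 1)
    (u : Fin n) : Q (gmap w) u ↔ P w u := by
  have hun := u.isLt
  constructor
  · -- hard direction
    intro hQ
    have hc0 : 0 ≤ psum (gmap w) (u:ℕ) := gmap_nonneg hw (u:ℕ)
    set c := psum (gmap w) (u:ℕ) with hc
    have hnum := hQ.2
    rw [gmap_E hw he, gmap_psum hw n (le_refl n)] at hnum
    have hcd : c + 1 ≤ -(M w n) := by omega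
    -- first hitting time of -(c+1)
    obtain ⟨j0, hj0, e0⟩ := exists_M w n
    obtain ⟨j, _, hjle, hj⟩ := ivt_down (x := -c-1) hw (Nat.zero_le j0) (by omega)
      (by omega) (by rw [psum_zero]; omega)
    set pj : ℕ → Prop := fun j => j ≤ n ∧ psum w j = -c-1 with hpj
    have hdec : DecidablePred pj := fun j => by unfold pj; infer_instance
    have hex : ∃ j, pj j := ⟨j, by omega, by omega⟩
    set j1 := Nat.find hex with hj1def
    have hj1 : pj j1 := Nat.find_spec hex
    have hmin : ∀ j', j' < j1 → ¬ pj j' := fun j' hj' => Nat.find_min hex hj'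
    have hj1pos : 1 ≤ j1 := by
      rcases Nat.eq_zero_or_pos j1 with h | h
      · exfalso; have := hj1; rw [h] at this; unfold pj at this
        rw [psum_zero] at this; omega
      · exact h
    have hbefore : ∀ j', j' < j1 → -c ≤ psum w j' := by
      intro j' hj'
      by_contra hcon
      push_neg at hcon
      obtain ⟨j'', _, hj''2, hj''3⟩ := ivt_down (x := -c-1) hw (Nat.zero_le j') (by
          have := hj1.1; omega)
        (by omega) (by rw [psum_zero]; omega)
      exact hmin j'' (by omega) ⟨by have := hj1.1; omega, hj''3⟩
    have htlt : j1 - 1 < n := by have := hj1.1; omega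
    set t : Fin n := ⟨j1 - 1, htlt⟩ with ht
    have htval : ((t:ℕ)+1) = j1 := by simp [ht]; omega
    have hPt : P w t := by
      unfold P
      rw [htval, hj1.2]
      have : -c ≤ M w (t:ℕ) := M_ge w (fun j' hj' => hbefore j' (by simp [ht] at hj' ⊢; omega))
      omega
    -- value of t in the flipped walk is c
    obtain ⟨e1, e2, e3, e4⟩ := P_elim hw hPt
    have hMt : M w (t:ℕ) = -c := by rw [htval] at e2; rw [hj1.2] at e2; omega
    have hst : psum (gmap w) (t:ℕ) = c := by
      rw [gmap_psum hw (t:ℕ) (by omega), e1, hMt]; ring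
    -- all later values exceed c
    have hlater : ∀ k, k ≤ n → (t:ℕ) < k → c < psum (gmap w) k := by
      intro k hk htk
      rw [gmap_psum hw k hk]
      have h1 : M w k ≤ M w j1 := M_antitone w (by omega)
      have h2 : M w j1 ≤ psum w j1 := M_le w (le_refl _)
      have h3 : M w k ≤ psum w k := M_le w (le_refl _)
      rw [hj1.2] at h2
      omega
    -- trichotomy
    have : (u:ℕ) = (t:ℕ) := by
      rcases Nat.lt_trichotomy (u:ℕ) (t:ℕ) with h | h | h
      · exfalso
        have := hQ.1 (t:ℕ) (by omega) h
        omega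
      · exact h
      · exfalso
        have := hlater (u:ℕ) (by omega) h
        omega
    have : u = t := Fin.ext this
    rw [this]; exact hPt
  · intro hP
    obtain ⟨e1, e2, e3, e4⟩ := P_elim hw hP
    constructor
    · intro k hk huk
      rw [gmap_psum hw k hk, gmap_psum hw (u:ℕ) (by omega)]
      have h1 : M w k ≤ M w ((u:ℕ)+1) := M_antitone w (by omega)
      have h2 : M w k ≤ psum w k := M_le w (le_refl _)
      omega
    · rw [gmap_E hw he, gmap_psum hw n (le_refl n), gmap_psum hw (u:ℕ) (by omega)]
      have h1 : M w n ≤ M w ((u:ℕ)+1) := M_antitone w (by omega)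
      omega

lemma hmap_gmap (hw : ∀ i, w i = 1 ∨ w i = -1) (he : psum w n = 0 ∨ psum w n = 1) :
    hmap (gmap w) = w := by
  funext i
  have h := QP hw he i
  unfold hmap
  by_cases hP : P w i
  · rw [if_pos (h.2 hP)]
    unfold gmap
    rw [if_pos hP, neg_neg]
  · rw [if_neg (fun hh => hP (h.1 hh))]
    unfold gmap
    rw [if_neg hP]

end Forward

end Stmt5

theorem stmt5 (n : ℕ) :
    ∃ f : {w : Fin n → ℤ // (∀ i, w i = 1 ∨ w i = -1) ∧
              (psum w n = 0 ∨ psum w n = 1)} ≃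
          {w : Fin n → ℤ // (∀ i, w i = 1 ∨ w i = -1) ∧
              (∀ k, 0 ≤ psum w k)},
      ∀ w, psum (f w : Fin n → ℤ) n = psum (w : Fin n → ℤ) n - 2 * minval (w : Fin n → ℤ) := by
  refine ⟨⟨fun w => ⟨Stmt5.gmap w.1, fun i => Stmt5.gmap_steps w.2.1 i,
      fun k => Stmt5.gmap_nonneg w.2.1 k⟩,
    fun v => ⟨Stmt5.hmap v.1, fun i => Stmt5.hmap_steps v.2.1 i, ?_⟩, ?_, ?_⟩, ?_⟩
  · have := Stmt5.hmap_endpoint v.2.1 v.2.2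
    have h2 := v.2.2 n
    omega
  · intro w
    exact Subtype.ext (Stmt5.hmap_gmap w.2.1 w.2.2)
  · intro v
    exact Subtype.ext (Stmt5.gmap_hmap v.2.1 v.2.2)
  · intro w
    exact Stmt5.gmap_endpoint w.2.1
end

section
/- For walks of length n with steps in {+1, 0, −1} starting at 0, the number of walks ending at 0 or 1 equals the number of walks whose partial sums are all nonnegative. -/
namespace T6

def S : Finset ℤ := {-1, 0, 1}

def W (n : ℕ) : Finset (Fin n → ℤ) := Fintype.piFinset fun _ => S

def A (n : ℕ) (k : ℤ) : Finset (Fin n → ℤ) := (W n).filter fun w => psum w n = k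

def B (n : ℕ) (k : ℤ) : Finset (Fin n → ℤ) :=
  (W n).filter fun w => (∀ j : Fin (n+1), 0 ≤ psum w (j : ℕ)) ∧ psum w n = k

def a (n : ℕ) (k : ℤ) : ℕ := (A n k).card
def b (n : ℕ) (k : ℤ) : ℕ := (B n k).card

lemma psum_eq (w : Fin n → ℤ) (k : ℕ) :
    psum w k = ∑ i : Fin n, if (i : ℕ) < k then w i else 0 := by
  rw [psum, Finset.sum_filter]

lemma psum_ge (w : Fin n → ℤ) {k : ℕ} (h : n ≤ k) : psum w k = psum w n := by
  rw [psum_eq, psum_eq]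
  refine Finset.sum_congr rfl fun i _ => ?_
  have := i.isLt
  rw [if_pos (lt_of_lt_of_le this h), if_pos this]

lemma psum_snoc (w : Fin n → ℤ) (s : ℤ) {j : ℕ} (hj : j ≤ n) :
    psum (Fin.snoc w s) j = psum w j := by
  rw [psum_eq, psum_eq, Fin.sum_univ_castSucc]
  simp only [Fin.snoc_castSucc, Fin.coe_castSucc, Fin.snoc_last, Fin.val_last]
  rw [if_neg (by omega), add_zero]

lemma psum_snoc_top (w : Fin n → ℤ) (s : ℤ) :
    psum (Fin.snoc w s) (n + 1) = psum w n + s := by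
  rw [psum_eq, psum_eq, Fin.sum_univ_castSucc]
  simp only [Fin.snoc_castSucc, Fin.coe_castSucc, Fin.snoc_last, Fin.val_last]
  rw [if_pos (by omega)]
  congr 1
  refine Finset.sum_congr rfl fun i _ => ?_
  have := i.isLt
  rw [if_pos (by omega), if_pos this]

end T6

namespace T6

lemma mem_S {s : ℤ} : s ∈ S ↔ s = -1 ∨ s = 0 ∨ s = 1 := by simp [S]

lemma snoc_mem_W {n : ℕ} {w : Fin n → ℤ} {s : ℤ} :
    Fin.snoc w s ∈ W (n+1) ↔ w ∈ W n ∧ s ∈ S := by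
  simp only [W, Fintype.mem_piFinset]
  constructor
  · intro h
    refine ⟨fun i => ?_, ?_⟩
    · have := h i.castSucc; rwa [Fin.snoc_castSucc] at this
    · have := h (Fin.last n); rwa [Fin.snoc_last] at this
  · intro ⟨h1, h2⟩ i
    induction i using Fin.lastCases with
    | last => rwa [Fin.snoc_last]
    | cast i => rw [Fin.snoc_castSucc]; exact h1 i

lemma card_snoc (n : ℕ) (P : (Fin (n+1) → ℤ) → Prop) [DecidablePred P] :
    ((W (n+1)).filter P).card
      = ∑ s ∈ S, ((W n).filter fun w => P (Fin.snoc w s)).card := by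
  have h2 : ∑ s ∈ S, ((W n).filter fun w => P (Fin.snoc w s)).card
      = ((S ×ˢ W n).filter fun p => P (Fin.snoc p.2 p.1)).card := by
    rw [Finset.card_filter, Finset.sum_product]
    refine Finset.sum_congr rfl fun s _ => ?_
    rw [Finset.card_filter]
  rw [h2]
  apply Finset.card_bij (fun w _ => (w (Fin.last n), Fin.init w))
  · intro w hw
    simp only [Finset.mem_filter] at hw ⊢
    have hini : Fin.snoc (Fin.init w) (w (Fin.last n)) = w := Fin.snoc_init_self w
    rw [Finset.mem_product]
    have := (snoc_mem_W (w := Fin.init w) (s := w (Fin.last n)))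
    rw [hini] at this
    obtain ⟨h1, h2⟩ := this.mp hw.1
    exact ⟨⟨h2, h1⟩, by rw [hini]; exact hw.2⟩
  · intro w1 h1 w2 h2 h
    simp only [Prod.mk.injEq] at h
    have := Fin.snoc_init_self w1
    rw [h.1, h.2, Fin.snoc_init_self w2] at this
    exact this.symm
  · intro p hp
    simp only [Finset.mem_filter, Finset.mem_product] at hp
    refine ⟨Fin.snoc p.2 p.1, ?_, ?_⟩
    · exact Finset.mem_filter.mpr ⟨snoc_mem_W.mpr ⟨hp.1.2, hp.1.1⟩, hp.2⟩
    · rw [Fin.init_snoc, Fin.snoc_last]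

lemma sum_S (f : ℤ → ℕ) : ∑ s ∈ S, f s = f (-1) + f 0 + f 1 := by
  show ∑ s ∈ ({-1, 0, 1} : Finset ℤ), f s = _
  rw [Finset.sum_insert (by decide), Finset.sum_insert (by decide),
    Finset.sum_singleton]
  ring

lemma a_succ (n : ℕ) (k : ℤ) : a (n+1) k = a n (k-1) + a n k + a n (k+1) := by
  unfold a A
  rw [card_snoc, sum_S]
  have h : ∀ s : ℤ, ((W n).filter fun w => psum (Fin.snoc w s) (n+1) = k)
      = (W n).filter fun w => psum w n = k - s := by
    intro s
    apply Finset.filter_congr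
    intro w _
    rw [psum_snoc_top]
    constructor <;> intro h <;> omega
  rw [h, h, h]
  have e1 : k - -1 = k + 1 := by ring
  have e2 : k - 0 = k := by ring
  have e3 : k - 1 = k - 1 := rfl
  rw [e1, e2]
  ring

end T6

namespace T6

lemma b_neg {n : ℕ} {k : ℤ} (hk : k < 0) : b n k = 0 := by
  rw [b, B, Finset.card_eq_zero, Finset.filter_eq_empty_iff]
  rintro w _ ⟨h1, h2⟩
  have := h1 (Fin.last n)
  rw [Fin.val_last] at this
  omega

lemma nonneg_snoc {n : ℕ} (w : Fin n → ℤ) (s : ℤ) :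
    (∀ j : Fin (n+2), 0 ≤ psum (Fin.snoc w s) (j : ℕ))
      ↔ (∀ j : Fin (n+1), 0 ≤ psum w (j : ℕ)) ∧ 0 ≤ psum w n + s := by
  constructor
  · intro h
    constructor
    · intro j
      have := h j.castSucc
      rwa [Fin.coe_castSucc, psum_snoc w s (by omega : (j:ℕ) ≤ n)] at this
    · have := h (Fin.last (n+1))
      rwa [Fin.val_last, psum_snoc_top] at this
  · rintro ⟨h1, h2⟩ j
    rcases Nat.lt_or_ge (j : ℕ) (n+1) with hj | hj
    · rw [psum_snoc w s (by omega : (j:ℕ) ≤ n)]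
      exact h1 ⟨j, hj⟩
    · have hj' : (j : ℕ) = n + 1 := by have := j.isLt; omega
      rw [hj', psum_snoc_top]; exact h2

lemma b_succ (n : ℕ) (k : ℤ) (hk : 0 ≤ k) :
    b (n+1) k = b n (k-1) + b n k + b n (k+1) := by
  unfold b B
  rw [card_snoc, sum_S]
  have h : ∀ s : ℤ, ((W n).filter fun w =>
        (∀ j : Fin (n+2), 0 ≤ psum (Fin.snoc w s) (j : ℕ)) ∧
          psum (Fin.snoc w s) (n+1) = k)
      = (W n).filter fun w =>
          (∀ j : Fin (n+1), 0 ≤ psum w (j : ℕ)) ∧ psum w n = k - s := by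
    intro s
    apply Finset.filter_congr
    intro w _
    rw [nonneg_snoc, psum_snoc_top]
    constructor
    · rintro ⟨⟨h1, _⟩, h3⟩; exact ⟨h1, by omega⟩
    · rintro ⟨h1, h2⟩; exact ⟨⟨h1, by omega⟩, by omega⟩
  rw [h, h, h]
  have e1 : k - -1 = k + 1 := by ring
  have e2 : k - 0 = k := by ring
  rw [e1, e2]
  ring

lemma psum_neg {n : ℕ} (w : Fin n → ℤ) (j : ℕ) :
    psum (fun i => -w i) j = -psum w j := by
  rw [psum, psum, ← Finset.sum_neg_distrib]

lemma a_symm (n : ℕ) (k : ℤ) : a n k = a n (-k) := by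
  unfold a A
  apply Finset.card_nbij' (fun w => fun i => -w i) (fun w => fun i => -w i)
  · intro w hw
    simp only [Finset.mem_coe, Finset.mem_filter] at hw ⊢
    refine ⟨?_, by rw [psum_neg, hw.2]⟩
    simp only [W, Fintype.mem_piFinset] at hw ⊢
    intro i
    have := hw.1 i
    rw [mem_S] at this ⊢
    omega
  · intro w hw
    simp only [Finset.mem_coe, Finset.mem_filter] at hw ⊢
    refine ⟨?_, by rw [psum_neg, hw.2]; ring⟩
    simp only [W, Fintype.mem_piFinset] at hw ⊢
    intro i
    have := hw.1 i
    rw [mem_S] at this ⊢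
    omega
  · intro w _; funext i; ring
  · intro w _; funext i; ring

lemma psum_le {n : ℕ} {w : Fin n → ℤ} (hw : w ∈ W n) : psum w n ≤ n := by
  rw [psum_eq]
  calc ∑ i : Fin n, (if (i:ℕ) < n then w i else 0) ≤ ∑ _i : Fin n, (1:ℤ) := by
        apply Finset.sum_le_sum
        intro i _
        rw [if_pos i.isLt]
        have := (Fintype.mem_piFinset.mp hw) i
        rw [mem_S] at this
        omega
    _ = n := by simp
  
lemma a_vanish {n : ℕ} {k : ℤ} (hk : (n : ℤ) < k) : a n k = 0 := by
  rw [a, A, Finset.card_eq_zero, Finset.filter_eq_empty_iff]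
  intro w hw h
  have := psum_le hw
  omega

end T6

namespace T6

lemma psum_zero {n : ℕ} (w : Fin n → ℤ) : psum w 0 = 0 := by
  rw [psum_eq]; simp

lemma a_zero (k : ℤ) : a 0 k = if k = 0 then 1 else 0 := by
  unfold a A
  have hp : ∀ w : Fin 0 → ℤ, psum w 0 = 0 := fun w => psum_zero w
  by_cases hk : k = 0
  · subst hk
    rw [if_pos rfl]
    rw [Finset.filter_true_of_mem (fun w _ => hp w)]
    rw [W, Fintype.card_piFinset]
    simp
  · rw [if_neg hk, Finset.card_eq_zero, Finset.filter_eq_empty_iff]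
    intro w _ h
    rw [hp w] at h
    exact hk h.symm

lemma b_zero (k : ℤ) : b 0 k = if k = 0 then 1 else 0 := by
  unfold b B
  have hp : ∀ (w : Fin 0 → ℤ) (j : ℕ), psum w j = 0 := by
    intro w j
    rw [psum_ge w (Nat.zero_le j), psum_zero]
  by_cases hk : k = 0
  · subst hk
    rw [if_pos rfl]
    rw [Finset.filter_true_of_mem (fun w _ => ⟨fun j => (hp w j).ge, hp w 0⟩)]
    rw [W, Fintype.card_piFinset]
    simp
  · rw [if_neg hk, Finset.card_eq_zero, Finset.filter_eq_empty_iff]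
    intro w _ h
    rw [hp w 0] at h
    exact hk h.2.symm

lemma key (n : ℕ) : ∀ k : ℤ, 0 ≤ k → b n k + a n (k + 2) = a n k := by
  induction n with
  | zero =>
    intro k hk
    rw [a_zero, a_zero, b_zero]
    split_ifs <;> omega
  | succ n ih =>
    intro k hk
    rcases eq_or_lt_of_le hk with h0 | h1
    · -- k = 0
      rw [← h0]
      rw [b_succ n 0 le_rfl, a_succ n (0+2), a_succ n 0]
      have i0 := ih 0 le_rfl
      have i1 := ih 1 (by norm_num)
      have hb : b n (0 - 1) = 0 := b_neg (by norm_num)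
      have hs : a n (0 - 1) = a n 1 := by
        rw [a_symm n (0-1)]; norm_num
      norm_num at *
      omega
    · -- k ≥ 1
      rw [b_succ n k hk, a_succ n (k+2), a_succ n k]
      have i1 := ih (k-1) (by omega)
      have i2 := ih k hk
      have i3 := ih (k+1) (by omega)
      have e1 : k - 1 + 2 = k + 1 := by ring
      have e2 : k + 1 + 2 = k + 3 := by ring
      have e3 : k + 2 - 1 = k + 1 := by ring
      have e4 : k + 2 + 1 = k + 3 := by ring
      rw [e1] at i1; rw [e2] at i3; rw [e3, e4]
      omega

end T6

namespace T6

lemma telescope (n : ℕ) :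
    ∑ k ∈ Finset.range (n+1), b n (k : ℤ) = a n 0 + a n 1 := by
  have hkey : ∑ k ∈ Finset.range (n+1), (b n (k:ℤ) + a n ((k:ℤ) + 2))
      = ∑ k ∈ Finset.range (n+1), a n (k:ℤ) :=
    Finset.sum_congr rfl fun k _ => key n k (Int.ofNat_nonneg k)
  rw [Finset.sum_add_distrib] at hkey
  have hshift : ∑ k ∈ Finset.range (n+3), a n (k:ℤ)
      = (∑ k ∈ Finset.range (n+1), a n ((k:ℤ) + 2)) + a n 1 + a n 0 := by
    rw [show n + 3 = (n+2)+1 from rfl, Finset.sum_range_succ',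
      show n + 2 = (n+1)+1 from rfl, Finset.sum_range_succ']
    push_cast
    have e : ∀ k ∈ Finset.range (n+1), a n ((k:ℤ)+1+1) = a n ((k:ℤ)+2) :=
      fun k _ => by rw [show (k:ℤ)+1+1 = (k:ℤ)+2 by ring]
    rw [Finset.sum_congr rfl e]
  have htop : ∑ k ∈ Finset.range (n+3), a n (k:ℤ)
      = (∑ k ∈ Finset.range (n+1), a n (k:ℤ)) + a n (n+1) + a n (n+2) := by
    rw [show n + 3 = (n+2)+1 from rfl, Finset.sum_range_succ,
      show n + 2 = (n+1)+1 from rfl, Finset.sum_range_succ]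
    push_cast
    ring_nf
  have hv1 : a n ((n:ℤ)+1) = 0 := a_vanish (by omega)
  have hv2 : a n ((n:ℤ)+2) = 0 := a_vanish (by omega)
  rw [hv1, hv2] at htop
  omega

lemma nonneg_card (n : ℕ) :
    ((W n).filter fun w => ∀ j : Fin (n+1), 0 ≤ psum w (j : ℕ)).card
      = ∑ k ∈ Finset.range (n+1), b n (k : ℤ) := by
  apply Finset.card_eq_sum_card_fiberwise
    (f := fun w => (psum w n).toNat) (t := Finset.range (n+1)) ?_ |>.trans ?_
  · intro w hw
    rw [Finset.mem_coe, Finset.mem_filter] at hw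
    have h1 : 0 ≤ psum w n := by
      have := hw.2 (Fin.last n); rwa [Fin.val_last] at this
    have h2 := psum_le hw.1
    rw [Finset.mem_coe, Finset.mem_range]
    show (psum w n).toNat < n + 1
    omega
  · refine Finset.sum_congr rfl fun k hk => ?_
    rw [Finset.filter_filter]
    unfold b B
    congr 1
    apply Finset.filter_congr
    intro w _
    constructor
    · rintro ⟨h1, h2⟩
      refine ⟨h1, ?_⟩
      have h0 : 0 ≤ psum w n := by
        have := h1 (Fin.last n); rwa [Fin.val_last] at this
      omega
    · rintro ⟨h1, h2⟩
      exact ⟨h1, by omega⟩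

lemma end_card (n : ℕ) :
    ((W n).filter fun w => psum w n = 0 ∨ psum w n = 1).card = a n 0 + a n 1 := by
  rw [Finset.filter_or]
  rw [Finset.card_union_of_disjoint]
  · rfl
  · rw [Finset.disjoint_filter]
    intro w _ h1 h2
    omega

end T6

theorem stmt6 (n : ℕ) :
    {w : Fin n → ℤ |
        (∀ i, w i = 1 ∨ w i = 0 ∨ w i = -1) ∧
          (psum w n = 0 ∨ psum w n = 1)}.ncard
      = {w : Fin n → ℤ |
          (∀ i, w i = 1 ∨ w i = 0 ∨ w i = -1) ∧
            (∀ k, 0 ≤ psum w k)}.ncard := by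
  have hset1 : {w : Fin n → ℤ |
        (∀ i, w i = 1 ∨ w i = 0 ∨ w i = -1) ∧
          (psum w n = 0 ∨ psum w n = 1)}
      = ↑((T6.W n).filter fun w => psum w n = 0 ∨ psum w n = 1) := by
    ext w
    simp only [Set.mem_setOf_eq, Finset.coe_filter, Finset.mem_filter,
      T6.W, Fintype.mem_piFinset]
    constructor
    · rintro ⟨h1, h2⟩
      refine ⟨fun i => ?_, h2⟩
      rw [T6.mem_S]; rcases h1 i with h|h|h <;> omega
    · rintro ⟨h1, h2⟩
      refine ⟨fun i => ?_, h2⟩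
      have := h1 i; rw [T6.mem_S] at this; omega
  have hset2 : {w : Fin n → ℤ |
          (∀ i, w i = 1 ∨ w i = 0 ∨ w i = -1) ∧
            (∀ k, 0 ≤ psum w k)}
      = ↑((T6.W n).filter fun w => ∀ j : Fin (n+1), 0 ≤ psum w (j : ℕ)) := by
    ext w
    simp only [Set.mem_setOf_eq, Finset.coe_filter, Finset.mem_filter,
      T6.W, Fintype.mem_piFinset]
    constructor
    · rintro ⟨h1, h2⟩
      refine ⟨fun i => ?_, fun j => h2 (j : ℕ)⟩
      rw [T6.mem_S]; rcases h1 i with h|h|h <;> omega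
    · rintro ⟨h1, h2⟩
      refine ⟨fun i => ?_, fun k => ?_⟩
      · have := h1 i; rw [T6.mem_S] at this; omega
      · rcases Nat.lt_or_ge k (n+1) with hk | hk
        · exact h2 ⟨k, hk⟩
        · rw [T6.psum_ge w (by omega)]
          have := h2 (Fin.last n)
          rwa [Fin.val_last] at this
  rw [hset1, hset2, Set.ncard_coe_finset, Set.ncard_coe_finset,
    T6.end_card, T6.nonneg_card, T6.telescope]
end

section
/- For walks with steps in {+1,0,−1} of length n, and each 0 ≤ d, 0 ≤ e ≤ 1, the number of walks starting at 0, ending at e, with minimum value exactly −d, equals the number of walks with all partial sums nonnegative ending at 2d+e; moreover this correspondence preserves the number of 0-steps. -/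
/-- The number of neutral (0) steps of a walk. -/
def zeros {n : ℕ} (w : Fin n → ℤ) : ℕ :=
  (Finset.univ.filter (fun i : Fin n => w i = 0)).card

namespace S7

def sig {n : ℕ} (T : ℕ) : Fin n → Fin n := fun i =>
  if h : (i : ℕ) < T ∧ T ≤ n then ⟨T - 1 - (i : ℕ), by have := i.isLt; omega⟩ else i

def wrev {n : ℕ} (T : ℕ) (w : Fin n → ℤ) : Fin n → ℤ := fun i =>
  if (i : ℕ) < T then -w (sig T i) else w i

variable {n : ℕ}

lemma sig_val_lt {T : ℕ} (hT : T ≤ n) {i : Fin n} (hi : (i : ℕ) < T) :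
    ((sig T i : Fin n) : ℕ) = T - 1 - (i : ℕ) := by
  simp [sig, hi, hT]

lemma sig_val_ge {T : ℕ} {i : Fin n} (hi : T ≤ (i : ℕ)) : sig T i = i := by
  have : ¬((i : ℕ) < T ∧ T ≤ n) := by omega
  simp [sig, this]

lemma sig_sig {T : ℕ} (hT : T ≤ n) (i : Fin n) : sig T (sig T i) = i := by
  by_cases hi : (i : ℕ) < T
  · have h1 : ((sig T i : Fin n) : ℕ) = T - 1 - (i : ℕ) := sig_val_lt hT hi
    have h2 : ((sig T i : Fin n) : ℕ) < T := by omega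
    apply Fin.ext
    rw [sig_val_lt hT h2, h1]
    omega
  · have h := sig_val_ge (n := n) (T := T) (i := i) (by omega)
    rw [h, h]

lemma wrev_apply_lt {T : ℕ} (w : Fin n → ℤ) {i : Fin n} (hi : (i : ℕ) < T) :
    wrev T w i = -w (sig T i) := by simp [wrev, hi]

lemma wrev_apply_ge {T : ℕ} (w : Fin n → ℤ) {i : Fin n} (hi : T ≤ (i : ℕ)) :
    wrev T w i = w i := by
  have : ¬((i : ℕ) < T) := by omega
  simp [wrev, this]

lemma wrev_zero_iff {T : ℕ} (w : Fin n → ℤ) (i : Fin n) :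
    wrev T w i = 0 ↔ w (sig T i) = 0 := by
  by_cases hi : (i : ℕ) < T
  · rw [wrev_apply_lt w hi]; simp
  · rw [wrev_apply_ge w (by omega), sig_val_ge (by omega)]

lemma wrev_wrev (w : Fin n → ℤ) {T : ℕ} (hT : T ≤ n) : wrev T (wrev T w) = w := by
  funext i
  by_cases hi : (i : ℕ) < T
  · have h2 : ((sig T i : Fin n) : ℕ) < T := by
      rw [sig_val_lt hT hi]; omega
    rw [wrev_apply_lt _ hi, wrev_apply_lt w h2, sig_sig hT, neg_neg]
  · rw [wrev_apply_ge _ (by omega), wrev_apply_ge _ (by omega)]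

lemma wrev_steps {T : ℕ} (w : Fin n → ℤ) (hw : ∀ i, w i = 1 ∨ w i = 0 ∨ w i = -1) :
    ∀ i, wrev T w i = 1 ∨ wrev T w i = 0 ∨ wrev T w i = -1 := by
  intro i
  by_cases hi : (i : ℕ) < T
  · rw [wrev_apply_lt w hi]
    rcases hw (sig T i) with h | h | h <;> rw [h] <;> simp
  · rw [wrev_apply_ge w (by omega)]
    exact hw i

lemma zeros_wrev (w : Fin n → ℤ) {T : ℕ} (hT : T ≤ n) : zeros (wrev T w) = zeros w := by
  unfold zeros
  apply Finset.card_bij (fun i _ => sig T i)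
  · intro i hi
    simp only [Finset.mem_filter, Finset.mem_univ, true_and] at hi ⊢
    exact (wrev_zero_iff w i).mp hi
  · intro a _ b _ hab
    have := congrArg (sig T) hab
    rwa [sig_sig hT, sig_sig hT] at this
  · intro b hb
    simp only [Finset.mem_filter, Finset.mem_univ, true_and] at hb
    refine ⟨sig T b, ?_, sig_sig hT b⟩
    simp only [Finset.mem_filter, Finset.mem_univ, true_and]
    rw [wrev_zero_iff, sig_sig hT]
    exact hb

lemma psum_zero (w : Fin n → ℤ) : psum w 0 = 0 := by simp [psum]

lemma psum_succ (w : Fin n → ℤ) {k : ℕ} (hk : k < n) :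
    psum w (k + 1) = psum w k + w ⟨k, hk⟩ := by
  unfold psum
  have : (Finset.univ.filter (fun i : Fin n => (i : ℕ) < k + 1))
      = insert ⟨k, hk⟩ (Finset.univ.filter (fun i : Fin n => (i : ℕ) < k)) := by
    ext i
    simp only [Finset.mem_filter, Finset.mem_univ, true_and, Finset.mem_insert]
    constructor
    · intro h
      rcases Nat.lt_succ_iff_lt_or_eq.mp h with h | h
      · exact Or.inr h
      · exact Or.inl (Fin.ext h)
    · rintro (rfl | h)
      · simp
      · omega
  rw [this, Finset.sum_insert (by simp)]
  ring

lemma psum_of_le (w : Fin n → ℤ) {k : ℕ} (hk : n ≤ k) : psum w k = psum w n := by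
  unfold psum
  congr 1
  ext i
  have := i.isLt
  simp only [Finset.mem_filter, Finset.mem_univ, true_and]
  omega

lemma psum_wrev_of_le (w : Fin n → ℤ) {T k : ℕ} (hT : T ≤ n) (hk : k ≤ T) :
    psum (wrev T w) k = psum w (T - k) - psum w T := by
  induction k with
  | zero => simp [psum_zero]
  | succ k ih =>
    have hk' : k ≤ T := by omega
    have hkn : k < n := by omega
    rw [psum_succ _ hkn, ih hk',
      wrev_apply_lt w (show ((⟨k, hkn⟩ : Fin n) : ℕ) < T by simpa using by omega)]
    have h1 : T - k - 1 < n := by omega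
    have h2 : T - k = (T - k - 1) + 1 := by omega
    rw [h2, psum_succ w h1]
    have hs : sig T (⟨k, hkn⟩ : Fin n) = ⟨T - k - 1, h1⟩ := by
      apply Fin.ext
      rw [sig_val_lt hT (by simpa using by omega)]
      show T - 1 - k = T - k - 1
      omega
    rw [hs]
    have h3 : T - (k + 1) = T - k - 1 := by omega
    rw [h3]
    ring

lemma psum_wrev_of_ge (w : Fin n → ℤ) {T k : ℕ} (hT : T ≤ n) (hk1 : T ≤ k) (hk2 : k ≤ n) :
    psum (wrev T w) k = psum w k - 2 * psum w T := by
  induction k, hk1 using Nat.le_induction with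
  | base =>
    rw [psum_wrev_of_le w hT (le_refl T)]
    simp [psum_zero]
    ring
  | succ k hk ih =>
    have hkn : k < n := by omega
    rw [psum_succ _ hkn, ih (by omega), wrev_apply_ge w (by simpa using hk), psum_succ w hkn]
    ring

lemma exists_greatest {P : ℕ → Prop} [DecidablePred P] {a b : ℕ} (hab : a ≤ b) (hPa : P a) :
    ∃ M, a ≤ M ∧ M ≤ b ∧ P M ∧ ∀ k, M < k → k ≤ b → ¬P k :=
  ⟨Nat.findGreatest P b, Nat.le_findGreatest hab hPa, Nat.findGreatest_le b,
    Nat.findGreatest_spec hab hPa, fun _ h1 h2 => Nat.findGreatest_is_greatest h1 h2⟩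

lemma findGreatest_eq_of {P : ℕ → Prop} [DecidablePred P] {b T : ℕ} (hT : T ≤ b) (hP : P T)
    (hnot : ∀ k, T < k → k ≤ b → ¬P k) : Nat.findGreatest P b = T := by
  rcases lt_trichotomy (Nat.findGreatest P b) T with h | h | h
  · exact absurd (Nat.le_findGreatest hT hP) (by omega)
  · exact h
  · exact absurd (Nat.findGreatest_spec hT hP) (hnot _ h (Nat.findGreatest_le b))

lemma ivt (w : Fin n → ℤ) (hstep : ∀ i, w i ≤ 1) {a : ℕ} {c : ℤ} (ha : a ≤ n)
    (h1 : psum w a ≤ c) (h2 : c ≤ psum w n) : ∃ m, a ≤ m ∧ m ≤ n ∧ psum w m = c := by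
  classical
  obtain ⟨M, hMa, hMn, hPM, hnot⟩ :=
    exists_greatest (P := fun k => a ≤ k ∧ psum w k ≤ c) ha ⟨le_refl a, h1⟩
  rcases eq_or_lt_of_le hMn with h | h
  · refine ⟨M, hMa, hMn, le_antisymm hPM.2 ?_⟩
    rw [h]; exact h2
  · have hnP : ¬(a ≤ M + 1 ∧ psum w (M + 1) ≤ c) := hnot _ (by omega) (by omega)
    have h3 : c < psum w (M + 1) := by
      by_contra hc
      exact hnP ⟨by omega, by omega⟩
    have h4 : psum w (M + 1) = psum w M + w ⟨M, h⟩ := psum_succ w h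
    have h5 := hstep ⟨M, h⟩
    have h6 := hPM.2
    exact ⟨M, hMa, hMn, by omega⟩

end S7

open S7 in
theorem stmt7 (n d e z : ℕ) (he : e ≤ 1) :
    {w : Fin n → ℤ |
        (∀ i, w i = 1 ∨ w i = 0 ∨ w i = -1) ∧
          psum w n = e ∧
          (∀ k ≤ n, -(d : ℤ) ≤ psum w k) ∧ (∃ k ≤ n, psum w k = -(d : ℤ)) ∧
          zeros w = z}.ncard
      = {w : Fin n → ℤ |
          (∀ i, w i = 1 ∨ w i = 0 ∨ w i = -1) ∧
            (∀ k, 0 ≤ psum w k) ∧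
            psum w n = 2 * (d : ℤ) + e ∧
            zeros w = z}.ncard := by
  classical
  set A : Set (Fin n → ℤ) := {w |
      (∀ i, w i = 1 ∨ w i = 0 ∨ w i = -1) ∧
        psum w n = e ∧
        (∀ k ≤ n, -(d : ℤ) ≤ psum w k) ∧ (∃ k ≤ n, psum w k = -(d : ℤ)) ∧
        zeros w = z} with hA
  set B : Set (Fin n → ℤ) := {w |
      (∀ i, w i = 1 ∨ w i = 0 ∨ w i = -1) ∧
        (∀ k, 0 ≤ psum w k) ∧
        psum w n = 2 * (d : ℤ) + e ∧
        zeros w = z} with hB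
  let f : (Fin n → ℤ) → (Fin n → ℤ) :=
    fun w => wrev (Nat.findGreatest (fun k => psum w k = -(d : ℤ)) n) w
  let g : (Fin n → ℤ) → (Fin n → ℤ) :=
    fun w => wrev (Nat.findGreatest (fun k => psum w k = (d : ℤ)) n) w
  -- facts about a member of A
  have hAfact : ∀ w ∈ A, ∃ T, T ≤ n ∧ psum w T = -(d : ℤ) ∧
      (∀ k, T < k → k ≤ n → -(d : ℤ) < psum w k) ∧
      f w = wrev T w := by
    intro w hw
    obtain ⟨hs, hend, hmin, ⟨k₀, hk₀n, hk₀⟩, hz⟩ := hw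
    refine ⟨Nat.findGreatest (fun k => psum w k = -(d : ℤ)) n, Nat.findGreatest_le n,
      Nat.findGreatest_spec (P := fun k => psum w k = -(d : ℤ)) hk₀n hk₀, ?_, rfl⟩
    intro k h1 h2
    have h3 := Nat.findGreatest_is_greatest (P := fun k => psum w k = -(d : ℤ)) h1 h2
    have h4 := hmin k h2
    omega
  -- facts about a member of B
  have hBfact : ∀ w ∈ B, ∃ T, T ≤ n ∧ psum w T = (d : ℤ) ∧
      (∀ k, T < k → k ≤ n → (d : ℤ) < psum w k) ∧
      g w = wrev T w := by
    intro w hw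
    obtain ⟨hs, hnn, hend, hz⟩ := hw
    have hstep : ∀ i, w i ≤ 1 := by intro i; rcases hs i with h | h | h <;> omega
    obtain ⟨m, -, hmn, hm⟩ := ivt w hstep (a := 0) (c := (d : ℤ)) (Nat.zero_le n)
      (by rw [psum_zero]; positivity) (by rw [hend]; omega)
    refine ⟨Nat.findGreatest (fun k => psum w k = (d : ℤ)) n, Nat.findGreatest_le n,
      Nat.findGreatest_spec (P := fun k => psum w k = (d : ℤ)) hmn hm, ?_, rfl⟩
    intro k h1 h2
    have h3 := Nat.findGreatest_is_greatest (P := fun k => psum w k = (d : ℤ)) h1 h2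
    rcases lt_or_ge (d : ℤ) (psum w k) with h | h
    · exact h
    · exfalso
      obtain ⟨m', hm'1, hm'2, hm'3⟩ := ivt w hstep h2 h (by rw [hend]; omega)
      exact Nat.findGreatest_is_greatest (P := fun k => psum w k = (d : ℤ)) (by omega) hm'2 hm'3
  -- forward map
  have hmapsf : ∀ w ∈ A, f w ∈ B ∧ g (f w) = w := by
    intro w hw
    obtain ⟨T, hTn, hT, hgt, hfw⟩ := hAfact w hw
    obtain ⟨hs, hend, hmin, hex, hz⟩ := hw
    have key_le : ∀ k ≤ T, psum (wrev T w) k = psum w (T - k) + (d : ℤ) := by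
      intro k hk
      rw [psum_wrev_of_le w hTn hk, hT]; ring
    have key_ge : ∀ k, T ≤ k → k ≤ n → psum (wrev T w) k = psum w k + 2 * (d : ℤ) := by
      intro k h1 h2
      rw [psum_wrev_of_ge w hTn h1 h2, hT]; ring
    have hnn : ∀ k, 0 ≤ psum (wrev T w) k := by
      intro k
      rcases le_or_gt k n with hkn | hkn
      · rcases le_or_gt k T with h | h
        · rw [key_le k h]
          have := hmin (T - k) (by omega)
          omega
        · rw [key_ge k (by omega) hkn]
          have := hmin k hkn
          omega
      · rw [psum_of_le _ (by omega), key_ge n hTn (le_refl n), hend]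
        positivity
    have hendB : psum (wrev T w) n = 2 * (d : ℤ) + e := by
      rw [key_ge n hTn (le_refl n), hend]; ring
    have hmemB : wrev T w ∈ B := ⟨wrev_steps w hs, hnn, hendB, by rw [zeros_wrev w hTn, hz]⟩
    rw [hfw]
    refine ⟨hmemB, ?_⟩
    obtain ⟨T', hT'n, hT', hgt', hgfw⟩ := hBfact (wrev T w) hmemB
    have hTT' : T' = T := by
      have h1 : psum (wrev T w) T = (d : ℤ) := by
        rw [key_le T (le_refl T)]
        simp [psum_zero]
      have h2 : ∀ k, T < k → k ≤ n → psum (wrev T w) k ≠ (d : ℤ) := by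
        intro k hk1 hk2
        rw [key_ge k (by omega) hk2]
        have := hgt k hk1 hk2
        omega
      -- T' is greatest with psum = d, T is also greatest
      rcases lt_trichotomy T' T with h | h | h
      · exact absurd hT' (by
          have := hgt' T h hTn
          omega)
      · exact h
      · exact absurd hT' (h2 T' h hT'n)
    rw [hgfw, hTT', wrev_wrev w hTn]
  -- backward map
  have hmapsg : ∀ w ∈ B, g w ∈ A ∧ f (g w) = w := by
    intro w hw
    obtain ⟨T, hTn, hT, hgt, hgw⟩ := hBfact w hw
    obtain ⟨hs, hnn, hend, hz⟩ := hw
    have key_le : ∀ k ≤ T, psum (wrev T w) k = psum w (T - k) - (d : ℤ) := by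
      intro k hk
      rw [psum_wrev_of_le w hTn hk, hT]
    have key_ge : ∀ k, T ≤ k → k ≤ n → psum (wrev T w) k = psum w k - 2 * (d : ℤ) := by
      intro k h1 h2
      rw [psum_wrev_of_ge w hTn h1 h2, hT]
    have hmin' : ∀ k ≤ n, -(d : ℤ) ≤ psum (wrev T w) k := by
      intro k hkn
      rcases le_or_gt k T with h | h
      · rw [key_le k h]
        have := hnn (T - k)
        omega
      · rw [key_ge k (by omega) hkn]
        have := hgt k h hkn
        omega
    have hendA : psum (wrev T w) n = (e : ℤ) := by
      rw [key_ge n hTn (le_refl n), hend]; ring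
    have hexA : ∃ k ≤ n, psum (wrev T w) k = -(d : ℤ) := by
      refine ⟨T, hTn, ?_⟩
      rw [key_le T (le_refl T)]
      simp [psum_zero]
    have hmemA : wrev T w ∈ A :=
      ⟨wrev_steps w hs, hendA, hmin', hexA, by rw [zeros_wrev w hTn, hz]⟩
    rw [hgw]
    refine ⟨hmemA, ?_⟩
    obtain ⟨T', hT'n, hT', hgt', hfgw⟩ := hAfact (wrev T w) hmemA
    have hTT' : T' = T := by
      have h1 : psum (wrev T w) T = -(d : ℤ) := by
        rw [key_le T (le_refl T)]
        simp [psum_zero]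
      rcases lt_trichotomy T' T with h | h | h
      · exact absurd h1 (by
          have := hgt' T h hTn
          omega)
      · exact h
      · exact absurd hT' (by
          have h2 := hgt T' h hT'n
          rw [key_ge T' (by omega) hT'n]
          omega)
    rw [hfgw, hTT', wrev_wrev w hTn]
  -- assemble
  have hbij : Set.BijOn f A B :=
    Set.InvOn.bijOn (f' := g) ⟨fun w hw => (hmapsf w hw).2, fun w hw => (hmapsg w hw).2⟩
      (fun w hw => (hmapsf w hw).1) (fun w hw => (hmapsg w hw).1)
  calc A.ncard = (f '' A).ncard := (Set.ncard_image_of_injOn hbij.injOn).symm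
    _ = B.ncard := by rw [hbij.image_eq]
end

section
/- Let S ⊆ {−1,0,1}^n be stable under each map negating one coordinate. Then the number of walks of length m on ℤ^n starting at the origin with steps in S that end at a point of {0,1}^n equals the number of such walks that remain in the nonnegative orthant at all times. -/
/-- Partial sum (position after `k` steps) of a walk of length `m` in `ℤ^n`. -/
def psumv {n m : ℕ} (w : Fin m → (Fin n → ℤ)) (k : ℕ) : Fin n → ℤ :=
  ∑ j ∈ Finset.univ.filter (fun j : Fin m => (j : ℕ) < k), w j

namespace Stmt8Aux

/-- Partial sum of a 1-dimensional walk. -/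
def P {m : ℕ} (c : Fin m → ℤ) (k : ℕ) : ℤ :=
  ∑ j ∈ Finset.univ.filter (fun j : Fin m => (j : ℕ) < k), c j

variable {m : ℕ}

lemma P_zero (c : Fin m → ℤ) : P c 0 = 0 := by simp [P]

lemma P_succ (c : Fin m → ℤ) {k : ℕ} (hk : k < m) :
    P c (k + 1) = P c k + c ⟨k, hk⟩ := by
  unfold P
  have h : Finset.univ.filter (fun j : Fin m => (j : ℕ) < k + 1)
      = insert ⟨k, hk⟩ (Finset.univ.filter (fun j : Fin m => (j : ℕ) < k)) := by
    ext j
    simp [Fin.ext_iff]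
    omega
  rw [h, Finset.sum_insert (by simp)]
  ring

lemma P_of_ge (c : Fin m → ℤ) {k : ℕ} (hk : m ≤ k) : P c k = P c m := by
  unfold P
  congr 1
  ext j
  have := j.isLt
  simp
  omega

/-- Running minimum of partial sums over times `0..k`. -/
def mu (c : Fin m → ℤ) : ℕ → ℤ
  | 0 => 0
  | k + 1 => min (mu c k) (P c (k + 1))

lemma mu_le_P (c : Fin m → ℤ) (k : ℕ) : mu c k ≤ P c k := by
  cases k with
  | zero => simp [mu, P_zero]
  | succ k => simp [mu]

lemma mu_nonpos (c : Fin m → ℤ) (k : ℕ) : mu c k ≤ 0 := by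
  induction k with
  | zero => simp [mu]
  | succ k ih => simp [mu]; omega

lemma mu_succ (c : Fin m → ℤ) (k : ℕ) : mu c (k + 1) = min (mu c k) (P c (k + 1)) := rfl

lemma mu_mono (c : Fin m → ℤ) {a b : ℕ} (h : a ≤ b) : mu c b ≤ mu c a := by
  induction b with
  | zero =>
    have : a = 0 := by omega
    subst this
    exact le_rfl
  | succ b ih =>
    rcases Nat.lt_or_ge a (b+1) with h' | h'
    · have := ih (by omega)
      rw [mu_succ]; omega
    · have : a = b + 1 := by omega
      subst this; omega

/-- Future minimum of partial sums over times `k..m`. -/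
def nu (c : Fin m → ℤ) (k : ℕ) : ℤ :=
  if h : k < m then min (P c k) (nu c (k + 1)) else P c m
  termination_by m - k

lemma nu_of_lt (c : Fin m → ℤ) {k : ℕ} (h : k < m) :
    nu c k = min (P c k) (nu c (k + 1)) := by
  rw [nu, dif_pos h]

lemma nu_of_ge (c : Fin m → ℤ) {k : ℕ} (h : m ≤ k) : nu c k = P c m := by
  rw [nu, dif_neg (by omega)]

lemma nu_le_P (c : Fin m → ℤ) {k : ℕ} (h : k ≤ m) : nu c k ≤ P c k := by
  rcases Nat.lt_or_ge k m with h' | h'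
  · rw [nu_of_lt c h']; omega
  · have : k = m := by omega
    subst this
    rw [nu_of_ge c le_rfl]

lemma nu_ge_aux (c : Fin m → ℤ) (v : ℤ) :
    ∀ d k, m ≤ k + d → k ≤ m → (∀ l, k ≤ l → l ≤ m → v ≤ P c l) → v ≤ nu c k := by
  intro d
  induction d with
  | zero =>
    intro k hk hkm h
    rw [nu_of_ge c (by omega)]
    exact h m (by omega) le_rfl
  | succ d ih =>
    intro k hk hkm h
    rcases Nat.lt_or_ge k m with hkm' | hkm'
    · rw [nu_of_lt c hkm']
      have h1 := h k le_rfl (by omega)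
      have h2 := ih (k+1) (by omega) (by omega) (fun l hl hl' => h l (by omega) hl')
      omega
    · rw [nu_of_ge c hkm']
      exact h m (by omega) le_rfl

lemma nu_ge (c : Fin m → ℤ) (v : ℤ) :
    ∀ k, k ≤ m → (∀ l, k ≤ l → l ≤ m → v ≤ P c l) → v ≤ nu c k :=
  fun k hk => nu_ge_aux c v (m - k) k (by omega) hk

lemma nu_le_aux (c : Fin m → ℤ) :
    ∀ d k l, l ≤ k + d → k ≤ l → l ≤ m → nu c k ≤ P c l := by
  intro d
  induction d with
  | zero =>
    intro k l h1 h2 h3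
    have : l = k := by omega
    subst this
    exact nu_le_P c h3
  | succ d ih =>
    intro k l h1 h2 h3
    rcases Nat.lt_or_ge k l with hkl | hkl
    · have hkm : k < m := by omega
      rw [nu_of_lt c hkm]
      have := ih (k+1) l (by omega) (by omega) h3
      omega
    · have : l = k := by omega
      subst this
      exact nu_le_P c h3

lemma nu_le (c : Fin m → ℤ) {k l : ℕ} (hkl : k ≤ l) (hlm : l ≤ m) : nu c k ≤ P c l :=
  nu_le_aux c (l - k) k l (by omega) hkl hlm

lemma nu_nonneg (c : Fin m → ℤ) (hnn : ∀ k, 0 ≤ P c k) (k : ℕ) (hk : k ≤ m) : 0 ≤ nu c k :=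
  nu_ge c 0 k hk (fun l _ _ => hnn l)

/-- The forward map: negate each step that carries the walk to a new strict minimum. -/
def Phi (c : Fin m → ℤ) (j : Fin m) : ℤ :=
  if P c ((j : ℕ) + 1) < mu c (j : ℕ) then -c j else c j

/-- `sfn c k` counts the sign flips of `Psi` occurring before time `k`. -/
def sfn (c : Fin m → ℤ) (k : ℕ) : ℤ := min (P c m / 2) (nu c k)

/-- The inverse map: negate the last exit step from each level `0, …, ⌊h/2⌋ - 1`. -/
def Psi (c : Fin m → ℤ) (j : Fin m) : ℤ :=
  if P c (j : ℕ) < nu c ((j : ℕ) + 1) ∧ 2 * P c (j : ℕ) + 2 ≤ P c m then -c j else c j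

section steps

variable {c : Fin m → ℤ} (hst : ∀ j, c j = -1 ∨ c j = 0 ∨ c j = 1)

include hst

lemma flip_char {j : Fin m} (h : P c ((j : ℕ) + 1) < mu c (j : ℕ)) :
    P c (j : ℕ) = mu c (j : ℕ) ∧ P c ((j : ℕ) + 1) = mu c (j : ℕ) - 1 := by
  have h1 := P_succ c j.isLt
  have h2 := hst j
  have h3 := mu_le_P c (j : ℕ)
  rw [Fin.eta] at h1
  omega

lemma P_Phi : ∀ k, k ≤ m → P (Phi c) k = P c k - 2 * mu c k := by
  intro k
  induction k with
  | zero => intro _; simp [P_zero, mu]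
  | succ k ih =>
    intro hk1
    have hk : k < m := by omega
    have ih' := ih (by omega)
    rw [P_succ _ hk, P_succ c hk, ih']
    have hmu : mu c (k+1) = min (mu c k) (P c (k+1)) := rfl
    have hPs := P_succ c hk
    show P c k - 2 * mu c k + Phi c ⟨k, hk⟩ = _
    unfold Phi
    simp only [Fin.val_mk]
    by_cases hf : P c (k + 1) < mu c k
    · have hc := flip_char hst (j := ⟨k, hk⟩) (by simpa using hf)
      simp only [Fin.val_mk] at hc
      rw [if_pos hf]
      omega
    · rw [if_neg hf]
      omega

lemma Phi_nonneg (k : ℕ) : 0 ≤ P (Phi c) k := by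
  rcases Nat.lt_or_ge m k with h | h
  · rw [P_of_ge _ (by omega), P_Phi hst m le_rfl]
    have := mu_le_P c m
    have := mu_nonpos c m
    omega
  · rw [P_Phi hst k h]
    have := mu_le_P c k
    have := mu_nonpos c k
    omega

lemma exists_flip : ∀ b, ∀ a, a ≤ b → b ≤ m → mu c b < mu c a →
    ∃ p, a ≤ p ∧ p < b ∧ P c (p + 1) < mu c p ∧ mu c p = mu c a := by
  intro b
  induction b with
  | zero =>
    intro a ha _ h
    have : a = 0 := by omega
    subst this
    omega
  | succ b ih =>
    intro a ha hbm h
    rcases Nat.lt_or_ge a (b + 1) with h' | h'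
    · have ha' : a ≤ b := by omega
      by_cases hlt : mu c b < mu c a
      · obtain ⟨p, hp1, hp2, hp3, hp4⟩ := ih a ha' (by omega) hlt
        exact ⟨p, hp1, by omega, hp3, hp4⟩
      · have heq : mu c b = mu c a := le_antisymm (mu_mono c ha') (by omega)
        have hmu : mu c (b+1) = min (mu c b) (P c (b+1)) := rfl
        exact ⟨b, ha', by omega, by omega, heq⟩
    · have : a = b + 1 := by omega
      subst this; omega

/-- The composition `Psi ∘ Phi` is the identity on walks ending at height 0 or 1. -/
lemma Psi_Phi (he : P c m = 0 ∨ P c m = 1) : Psi (Phi c) = c := by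
  funext j
  have hjm : (j : ℕ) < m := j.isLt
  set d := Phi c with hd
  have hPd : ∀ k, k ≤ m → P d k = P c k - 2 * mu c k := P_Phi hst
  have key : (P d (j : ℕ) < nu d ((j : ℕ) + 1) ∧ 2 * P d (j : ℕ) + 2 ≤ P d m)
      ↔ P c ((j : ℕ) + 1) < mu c (j : ℕ) := by
    constructor
    · rintro ⟨h1, h2⟩
      by_contra hnf
      have hmu1 : mu c ((j : ℕ) + 1) = mu c (j : ℕ) := by
        have : mu c ((j:ℕ)+1) = min (mu c (j:ℕ)) (P c ((j:ℕ)+1)) := rfl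
        have := mu_le_P c (j : ℕ)
        omega
      have hPdj := hPd (j : ℕ) (by omega)
      have hPdm := hPd m le_rfl
      have hmlep := mu_le_P c (j : ℕ)
      rcases lt_or_ge (mu c m) (mu c ((j : ℕ) + 1)) with hB | hA
      · -- some flip occurs after j
        obtain ⟨p, hp1, hp2, hp3, hp4⟩ := exists_flip hst m ((j : ℕ) + 1) (by omega) le_rfl hB
        have hpm : p < m := hp2
        have hc := flip_char hst (j := ⟨p, hpm⟩) (by simpa using hp3)
        simp only [Fin.val_mk] at hc
        have hPdp := hPd p (by omega)
        have hle2 : nu d ((j : ℕ) + 1) ≤ P d p := nu_le d (by omega) (by omega)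
        omega
      · -- no flip after j : mu c m = mu c (j+1)
        have hmm : mu c m = mu c ((j : ℕ) + 1) :=
          le_antisymm (mu_mono c (by omega)) hA
        omega
    · intro hf
      have hc := flip_char hst hf
      have hmu1 : mu c ((j : ℕ) + 1) = mu c (j : ℕ) - 1 := by
        have : mu c ((j:ℕ)+1) = min (mu c (j:ℕ)) (P c ((j:ℕ)+1)) := rfl
        omega
      have hPdj := hPd (j : ℕ) (by omega)
      have hPdm := hPd m le_rfl
      have hmum : mu c m ≤ mu c ((j : ℕ) + 1) := mu_mono c (by omega)
      constructor
      · have hnu : -(mu c ((j : ℕ) + 1)) ≤ nu d ((j : ℕ) + 1) := by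
          refine nu_ge d _ _ (by omega) ?_
          intro l hl hlm
          have := hPd l hlm
          have h1 := mu_le_P c l
          have h2 := mu_mono c hl
          omega
        omega
      · omega
  unfold Psi
  by_cases hf : P c ((j : ℕ) + 1) < mu c (j : ℕ)
  · rw [if_pos (key.mpr hf)]
    show -(Phi c j) = c j
    unfold Phi
    rw [if_pos hf]
    ring
  · rw [if_neg (fun hcon => hf (key.mp hcon))]
    show Phi c j = c j
    unfold Phi
    rw [if_neg hf]

variable (hnn : ∀ k, 0 ≤ P c k)
include hnn

lemma half_facts : 2 * (P c m / 2) ≤ P c m ∧ P c m ≤ 2 * (P c m / 2) + 1 := by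
  have := hnn m
  omega

lemma psi_flip_facts {j : Fin m}
    (hf : P c (j : ℕ) < nu c ((j : ℕ) + 1) ∧ 2 * P c (j : ℕ) + 2 ≤ P c m) :
    P c ((j : ℕ) + 1) = P c (j : ℕ) + 1 ∧ nu c ((j : ℕ) + 1) = P c (j : ℕ) + 1 ∧
      sfn c ((j : ℕ) + 1) = P c (j : ℕ) + 1 ∧ sfn c (j : ℕ) = P c (j : ℕ) ∧
      c j = 1 := by
  obtain ⟨h1, h2⟩ := hf
  have hjm : (j : ℕ) < m := j.isLt
  have h3 : nu c ((j : ℕ) + 1) ≤ P c ((j : ℕ) + 1) := nu_le_P c (by omega)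
  have h4 := P_succ c hjm
  rw [Fin.eta] at h4
  have h5 := hst j
  have e1 : P c ((j : ℕ) + 1) = P c (j : ℕ) + 1 := by omega
  have e2 : nu c ((j : ℕ) + 1) = P c (j : ℕ) + 1 := by omega
  have hh := half_facts hst hnn
  have hnuj : nu c (j : ℕ) = min (P c (j : ℕ)) (nu c ((j : ℕ) + 1)) := nu_of_lt c hjm
  unfold sfn
  omega

lemma psi_notflip_facts {j : Fin m}
    (hf : ¬(P c (j : ℕ) < nu c ((j : ℕ) + 1) ∧ 2 * P c (j : ℕ) + 2 ≤ P c m)) :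
    sfn c ((j : ℕ) + 1) = sfn c (j : ℕ) := by
  have hjm : (j : ℕ) < m := j.isLt
  have hnuj : nu c (j : ℕ) = min (P c (j : ℕ)) (nu c ((j : ℕ) + 1)) := nu_of_lt c hjm
  have hh := half_facts hst hnn
  unfold sfn
  omega

lemma nu_zero : nu c 0 = 0 := by
  have h1 : nu c 0 ≤ P c 0 := nu_le_P c (by omega)
  have h2 := nu_nonneg c hnn 0 (by omega)
  rw [P_zero] at h1
  omega

lemma P_mu_Psi : ∀ k, k ≤ m →
    P (Psi c) k = P c k - 2 * sfn c k ∧ mu (Psi c) k = -(sfn c k) := by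
  intro k
  induction k with
  | zero =>
    intro _
    have h0 := nu_zero hst hnn
    have hh := half_facts hst hnn
    have := hnn m
    have hs : sfn c 0 = 0 := by unfold sfn; omega
    rw [hs]
    simp [P_zero, mu]
  | succ k ih =>
    intro hk1
    have hk : k < m := by omega
    obtain ⟨ih1, ih2⟩ := ih (by omega)
    have hPs := P_succ (Psi c) hk
    have hPsc := P_succ c hk
    have hmu : mu (Psi c) (k+1) = min (mu (Psi c) k) (P (Psi c) (k+1)) := rfl
    have hval : Psi c ⟨k, hk⟩ =
        if P c k < nu c (k + 1) ∧ 2 * P c k + 2 ≤ P c m then -c ⟨k, hk⟩ else c ⟨k, hk⟩ := rfl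
    by_cases hf : P c k < nu c (k + 1) ∧ 2 * P c k + 2 ≤ P c m
    · have hfacts := psi_flip_facts hst hnn (j := ⟨k, hk⟩) (by simpa using hf)
      simp only [Fin.val_mk] at hfacts
      obtain ⟨e1, e2, e3, e4, e5⟩ := hfacts
      rw [if_pos hf] at hval
      constructor
      · rw [hPs, hval, ih1]; omega
      · rw [hmu, ih2, hPs, hval, ih1]; omega
    · have e := psi_notflip_facts hst hnn (j := ⟨k, hk⟩) (by simpa using hf)
      simp only [Fin.val_mk] at e
      rw [if_neg hf] at hval
      have hle : sfn c (k+1) ≤ P c (k+1) := by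
        have h1 : nu c (k+1) ≤ P c (k+1) := nu_le_P c (by omega)
        unfold sfn; omega
      constructor
      · rw [hPs, hval, ih1]; omega
      · rw [hmu, ih2, hPs, hval, ih1]; omega

lemma Psi_end : P (Psi c) m = 0 ∨ P (Psi c) m = 1 := by
  have h := (P_mu_Psi hst hnn m le_rfl).1
  have hnum : nu c m = P c m := nu_of_ge c le_rfl
  have hh := half_facts hst hnn
  have := hnn m
  unfold sfn at h
  omega

/-- The composition `Phi ∘ Psi` is the identity on nonnegative walks. -/
lemma Phi_Psi : Phi (Psi c) = c := by
  funext j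
  have hjm : (j : ℕ) < m := j.isLt
  have h1 := (P_mu_Psi hst hnn (j : ℕ) (by omega))
  have h2 := (P_mu_Psi hst hnn ((j : ℕ) + 1) (by omega))
  have key : P (Psi c) ((j : ℕ) + 1) < mu (Psi c) (j : ℕ)
      ↔ (P c (j : ℕ) < nu c ((j : ℕ) + 1) ∧ 2 * P c (j : ℕ) + 2 ≤ P c m) := by
    constructor
    · intro hφ
      by_contra hnf
      have e := psi_notflip_facts hst hnn hnf
      have h3 : nu c ((j : ℕ) + 1) ≤ P c ((j : ℕ) + 1) := nu_le_P c (by omega)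
      have h4 : sfn c ((j:ℕ)+1) ≤ nu c ((j:ℕ)+1) := by unfold sfn; omega
      omega
    · intro hf
      obtain ⟨e1, e2, e3, e4, e5⟩ := psi_flip_facts hst hnn hf
      omega
  unfold Phi
  by_cases hf : P c (j : ℕ) < nu c ((j : ℕ) + 1) ∧ 2 * P c (j : ℕ) + 2 ≤ P c m
  · rw [if_pos (key.mpr hf)]
    show -(Psi c j) = c j
    unfold Psi
    rw [if_pos hf]
    ring
  · rw [if_neg (fun hcon => hf (key.mp hcon))]
    show Psi c j = c j
    unfold Psi
    rw [if_neg hf]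

end steps

end Stmt8Aux

open Stmt8Aux in
theorem stmt8 (n m : ℕ) (S : Set (Fin n → ℤ))
    (hS1 : ∀ s ∈ S, ∀ i, s i = -1 ∨ s i = 0 ∨ s i = 1)
    (hS2 : ∀ s ∈ S, ∀ j : Fin n,
      (fun i => if i = j then -s i else s i) ∈ S) :
    {w : Fin m → (Fin n → ℤ) |
        (∀ j, w j ∈ S) ∧
          (∀ i, psumv w m i = 0 ∨ psumv w m i = 1)}.ncard
      = {w : Fin m → (Fin n → ℤ) |
          (∀ j, w j ∈ S) ∧
            (∀ k, ∀ i, 0 ≤ psumv w k i)}.ncard := by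
  -- S is closed under arbitrary sign changes
  have hflip : ∀ s ∈ S, ∀ t : Finset (Fin n), (fun i => if i ∈ t then -s i else s i) ∈ S := by
    intro s hs t
    induction t using Finset.induction_on with
    | empty => simpa using hs
    | @insert a t ha ih =>
      have h2 := hS2 _ ih a
      convert h2 using 1
      funext i
      by_cases hia : i = a
      · subst hia
        simp [ha]
      · simp [hia, Finset.mem_insert]
  have hsign : ∀ s ∈ S, ∀ s' : Fin n → ℤ, (∀ i, s' i = s i ∨ s' i = -s i) → s' ∈ S := by
    intro s hs s' h
    have := hflip s hs (Finset.univ.filter (fun i => s' i ≠ s i))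
    convert this using 1
    funext i
    simp only [Finset.mem_filter, Finset.mem_univ, true_and]
    by_cases hi : s' i = s i
    · simp [hi]
    · rcases h i with h' | h'
      · exact absurd h' hi
      · simp only [hi, h']
        split <;> omega
  have hpsum : ∀ (w : Fin m → Fin n → ℤ) (k : ℕ) (i : Fin n),
      psumv w k i = P (fun j => w j i) k := by
    intro w k i
    simp [psumv, P, Finset.sum_apply]
  set A := {w : Fin m → (Fin n → ℤ) | (∀ j, w j ∈ S) ∧
      (∀ i, psumv w m i = 0 ∨ psumv w m i = 1)} with hA
  set B := {w : Fin m → (Fin n → ℤ) | (∀ j, w j ∈ S) ∧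
      (∀ k, ∀ i, 0 ≤ psumv w k i)} with hB
  set F : (Fin m → Fin n → ℤ) → (Fin m → Fin n → ℤ) :=
    fun w j i => Phi (fun j' => w j' i) j with hF
  set G : (Fin m → Fin n → ℤ) → (Fin m → Fin n → ℤ) :=
    fun w j i => Psi (fun j' => w j' i) j with hG
  have hstep : ∀ w : Fin m → Fin n → ℤ, (∀ j, w j ∈ S) →
      ∀ (i : Fin n) (j : Fin m), w j i = -1 ∨ w j i = 0 ∨ w j i = 1 := by
    intro w hw i j
    exact hS1 _ (hw j) i
  -- F maps A to B
  have hFmem : ∀ w ∈ A, F w ∈ B := by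
    intro w hw
    obtain ⟨hw1, hw2⟩ := hw
    constructor
    · intro j
      apply hsign _ (hw1 j)
      intro i
      show Phi (fun j' => w j' i) j = w j i ∨ Phi (fun j' => w j' i) j = -(w j i)
      unfold Phi
      split
      · right; rfl
      · left; rfl
    · intro k i
      rw [hpsum]
      exact Phi_nonneg (fun j => hstep w hw1 i j) k
  have hGmem : ∀ w ∈ B, G w ∈ A := by
    intro w hw
    obtain ⟨hw1, hw2⟩ := hw
    constructor
    · intro j
      apply hsign _ (hw1 j)
      intro i
      show Psi (fun j' => w j' i) j = w j i ∨ Psi (fun j' => w j' i) j = -(w j i)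
      unfold Psi
      split
      · right; rfl
      · left; rfl
    · intro i
      rw [hpsum]
      exact Psi_end (fun j => hstep w hw1 i j)
        (fun k => by rw [← hpsum]; exact hw2 k i)
  have hGF : ∀ w ∈ A, G (F w) = w := by
    intro w hw
    obtain ⟨hw1, hw2⟩ := hw
    funext j
    funext i
    show Psi (fun j' => F w j' i) j = w j i
    have hcol : (fun j' => F w j' i) = Phi (fun j' => w j' i) := rfl
    rw [hcol, Psi_Phi (fun j => hstep w hw1 i j)
      (by rw [← hpsum]; exact hw2 i)]
  have hFG : ∀ w ∈ B, F (G w) = w := by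
    intro w hw
    obtain ⟨hw1, hw2⟩ := hw
    funext j
    funext i
    show Phi (fun j' => G w j' i) j = w j i
    have hcol : (fun j' => G w j' i) = Psi (fun j' => w j' i) := rfl
    rw [hcol, Phi_Psi (fun j => hstep w hw1 i j)
      (fun k => by rw [← hpsum]; exact hw2 k i)]
  have hbij : Set.BijOn F A B := by
    refine ⟨hFmem, ?_, ?_⟩
    · intro w1 h1 w2 h2 heq
      rw [← hGF w1 h1, ← hGF w2 h2, heq]
    · intro v hv
      exact ⟨G v, hGmem v hv, hFG v hv⟩
  rw [← hbij.image_eq]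
  exact (Set.ncard_image_of_injOn hbij.injOn).symm
end

section
/- For all n ∈ ℕ, the convolution identity ∑_{i+j=n} C(2i,i) · C(2j,j) = 4^n holds. -/
open Finset Nat

private def S (m : ℕ) : ℕ := ∑ i ∈ range (m + 1), centralBinom i * centralBinom (m - i)

private lemma sumA (m : ℕ) :
    ∑ i ∈ range (m + 1), 2 * i * (centralBinom i * centralBinom (m - i)) = m * S m := by
  have hrefl : ∑ i ∈ range (m + 1), i * (centralBinom i * centralBinom (m - i))
      = ∑ i ∈ range (m + 1), (m - i) * (centralBinom i * centralBinom (m - i)) := by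
    rw [← Finset.sum_range_reflect (fun i => i * (centralBinom i * centralBinom (m - i))) (m+1)]
    apply Finset.sum_congr rfl
    intro i hi
    simp only [Finset.mem_range] at hi
    have h1 : m + 1 - 1 - i = m - i := by omega
    have h2 : m - (m - i) = i := by omega
    rw [h1, h2, mul_comm (centralBinom (m - i))]
  calc ∑ i ∈ range (m + 1), 2 * i * (centralBinom i * centralBinom (m - i))
      = ∑ i ∈ range (m + 1), (i * (centralBinom i * centralBinom (m - i))
          + (m - i) * (centralBinom i * centralBinom (m - i))) := by
        rw [Finset.sum_add_distrib, ← hrefl]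
        rw [← Finset.sum_add_distrib]
        apply Finset.sum_congr rfl
        intro i _; ring
    _ = ∑ i ∈ range (m + 1), m * (centralBinom i * centralBinom (m - i)) := by
        apply Finset.sum_congr rfl
        intro i hi
        simp only [Finset.mem_range] at hi
        rw [← add_mul]
        congr 1
        omega
    _ = m * S m := by rw [S, Finset.mul_sum]

private lemma Sstep (n : ℕ) : S (n + 1) = 4 * S n := by
  have key : (n + 1) * S (n + 1) = (n + 1) * (4 * S n) := by
    have hA := sumA (n + 1)
    have h0 : ∑ i ∈ range (n + 2), 2 * i * (centralBinom i * centralBinom (n + 1 - i))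
        = ∑ j ∈ range (n + 1), 2 * (j + 1) * (centralBinom (j + 1) * centralBinom (n - j)) := by
      rw [Finset.sum_range_succ'] -- splits off first term
      simp
    have h1 : ∀ j, 2 * (j + 1) * (centralBinom (j + 1) * centralBinom (n - j))
        = 4 * ((2 * j) * (centralBinom j * centralBinom (n - j)))
          + 4 * (centralBinom j * centralBinom (n - j)) := by
      intro j
      have := Nat.succ_mul_centralBinom_succ j
      calc 2 * (j + 1) * (centralBinom (j + 1) * centralBinom (n - j))
          = 2 * ((j + 1) * centralBinom (j + 1)) * centralBinom (n - j) := by ring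
        _ = 2 * (2 * (2 * j + 1) * centralBinom j) * centralBinom (n - j) := by rw [this]
        _ = 4 * ((2 * j) * (centralBinom j * centralBinom (n - j)))
            + 4 * (centralBinom j * centralBinom (n - j)) := by ring
    have h2 : ∑ j ∈ range (n + 1), 2 * (j + 1) * (centralBinom (j + 1) * centralBinom (n - j))
        = 4 * (n * S n) + 4 * S n := by
      calc ∑ j ∈ range (n + 1), 2 * (j + 1) * (centralBinom (j + 1) * centralBinom (n - j))
          = ∑ j ∈ range (n + 1), (4 * ((2 * j) * (centralBinom j * centralBinom (n - j)))
            + 4 * (centralBinom j * centralBinom (n - j))) := by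
            exact Finset.sum_congr rfl fun j _ => h1 j
        _ = 4 * ∑ j ∈ range (n + 1), (2 * j) * (centralBinom j * centralBinom (n - j))
            + 4 * ∑ j ∈ range (n + 1), centralBinom j * centralBinom (n - j) := by
            rw [Finset.sum_add_distrib, Finset.mul_sum, Finset.mul_sum]
        _ = 4 * (n * S n) + 4 * S n := by rw [sumA n, S]
    have : (n + 1) * S (n + 1) = 4 * (n * S n) + 4 * S n := by
      rw [← hA, h0, h2]
    rw [this]; ring
  exact Nat.eq_of_mul_eq_mul_left (Nat.succ_pos n) key

private lemma Sval (n : ℕ) : S n = 4 ^ n := by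
  induction n with
  | zero => simp [S, centralBinom]
  | succ k ih => rw [Sstep, ih, pow_succ]; ring

theorem stmt9 (n : ℕ) :
    ∑ i ∈ Finset.range (n + 1),
        Nat.choose (2 * i) i * Nat.choose (2 * (n - i)) (n - i) = 4 ^ n := by
  rw [← Sval n, S]
  apply Finset.sum_congr rfl
  intro i _
  rfl
end

section
/- The set of ±1-walks of length 2n+1 starting at 0 and ending at a strictly positive value is in bijection with the set of pairs (u, v) where u is a ±1-walk of some even length 2i ending at 0, v is a ±1-walk of length 2(n−i) with all partial sums nonnegative, and i ranges over 0..n; the bijection is given by concatenating u, a single +1 step, and v. -/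
/-- All steps of the list are `+1` or `-1`. -/
def IsPM (w : List ℤ) : Prop := ∀ x ∈ w, x = 1 ∨ x = -1

/-- Parity: for a ±1 list, sum ≡ length mod 2. -/
lemma IsPM.sum_emod {w : List ℤ} (h : IsPM w) : w.sum % 2 = (w.length : ℤ) % 2 := by
  induction w with
  | nil => simp
  | cons a l ih =>
    have ha := h a (by simp)
    have hl : IsPM l := fun x hx => h x (by simp [hx])
    have := ih hl
    simp only [List.sum_cons, List.length_cons]
    push_cast
    rcases ha with rfl | rfl <;> omega

/-- Discrete IVT: steps of size 1 must hit 0 when crossing it. -/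
lemma ivt_zero (f : ℕ → ℤ) (a b : ℕ)
    (hstep : ∀ k, a ≤ k → k < b → f (k+1) = f k + 1 ∨ f (k+1) = f k - 1)
    (hab : a ≤ b) (ha : f a ≤ 0) (hb : 0 ≤ f b) :
    ∃ m, a ≤ m ∧ m ≤ b ∧ f m = 0 := by
  induction b with
  | zero =>
    have : a = 0 := Nat.le_zero.mp hab
    subst this
    exact ⟨0, le_refl _, le_refl _, le_antisymm ha hb⟩
  | succ b ih =>
    rcases Nat.lt_or_ge a (b+1) with hlt | hge
    · have hab' : a ≤ b := Nat.lt_succ_iff.mp hlt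
      rcases le_or_gt 0 (f b) with hfb | hfb
      · obtain ⟨m, h1, h2, h3⟩ := ih (fun k hk hk' => hstep k hk (by omega)) hab' hfb
        exact ⟨m, h1, by omega, h3⟩
      · have := hstep b hab' (by omega)
        refine ⟨b+1, by omega, le_refl _, by omega⟩
    · have : a = b + 1 := le_antisymm hab hge
      subst this
      exact ⟨b+1, le_refl _, le_refl _, le_antisymm ha hb⟩

lemma sum_take_ge_one {u v : List ℤ} (hu : u.sum = 0)
    (hv : ∀ k, 0 ≤ (v.take k).sum) (m : ℕ) (hm : u.length < m) :
    1 ≤ ((u ++ 1 :: v).take m).sum := by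
  have hrw : u ++ 1 :: v = (u ++ [1]) ++ v := by simp
  have hlen : (u ++ [1]).length = u.length + 1 := by simp
  have hm' : m = (u.length + 1) + (m - u.length - 1) := by omega
  rw [hrw, hm', ← hlen, List.take_add, List.take_left, List.drop_left]
  have h := hv (m - u.length - 1)
  simp only [List.sum_append, List.sum_cons, List.sum_nil, hu]
  linarith

theorem stmt11 (n : ℕ) :
    Set.BijOn (fun p : List ℤ × List ℤ => p.1 ++ 1 :: p.2)
      {p : List ℤ × List ℤ |
          IsPM p.1 ∧ IsPM p.2 ∧
          (∃ i ≤ n, p.1.length = 2 * i ∧ p.2.length = 2 * (n - i)) ∧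
          p.1.sum = 0 ∧
          (∀ k, 0 ≤ (p.2.take k).sum)}
      {w : List ℤ | w.length = 2 * n + 1 ∧ IsPM w ∧ 0 < w.sum} := by
  constructor
  · -- MapsTo
    rintro ⟨u, v⟩ ⟨hu, hv, ⟨i, hi, hul, hvl⟩, hus, hvt⟩
    refine ⟨?_, ?_, ?_⟩
    · simp only [Set.mem_setOf_eq] at *
      simp [hul, hvl]; omega
    · intro x hx
      simp only [List.mem_append, List.mem_cons] at hx
      rcases hx with h | h | h
      · exact hu x h
      · exact Or.inl h
      · exact hv x h
    · have h := hvt v.length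
      rw [List.take_length] at h
      simp only [List.sum_append, List.sum_cons, hus, Set.mem_setOf_eq]
      linarith
  constructor
  · -- InjOn
    have key : ∀ u₁ v₁ u₂ v₂ : List ℤ, u₁ ++ 1 :: v₁ = u₂ ++ 1 :: v₂ →
        u₁.sum = 0 → u₂.sum = 0 → (∀ k, 0 ≤ (v₁.take k).sum) →
        ¬ (u₁.length < u₂.length) := by
      intro u₁ v₁ u₂ v₂ heq hs₁ hs₂ hv₁ hlt
      have h1 : 1 ≤ ((u₁ ++ 1 :: v₁).take u₂.length).sum :=
        sum_take_ge_one hs₁ hv₁ _ hlt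
      rw [heq, List.take_append_of_le_length (le_refl _), List.take_length, hs₂] at h1
      omega
    rintro ⟨u₁, v₁⟩ ⟨hu₁, hv₁, _, hs₁, ht₁⟩ ⟨u₂, v₂⟩ ⟨hu₂, hv₂, _, hs₂, ht₂⟩ heq
    simp only at heq
    have hlen : u₁.length = u₂.length := by
      rcases Nat.lt_trichotomy u₁.length u₂.length with h | h | h
      · exact absurd h (key u₁ v₁ u₂ v₂ heq hs₁ hs₂ ht₁)
      · exact h
      · exact absurd h (key u₂ v₂ u₁ v₁ heq.symm hs₂ hs₁ ht₂)
    obtain ⟨h1, h2⟩ := List.append_inj heq hlen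
    simp only [List.cons.injEq] at h2
    exact Prod.ext h1 h2.2
  · -- SurjOn
    rintro w ⟨hwl, hw, hws⟩
    have hstep : ∀ k, k < w.length →
        (w.take (k+1)).sum = (w.take k).sum + 1 ∨
        (w.take (k+1)).sum = (w.take k).sum - 1 := by
      intro k hk
      have hts := List.sum_take_succ w k hk
      rcases hw (w[k]) (List.getElem_mem hk) with h | h
      · left; rw [hts, h]
      · right; rw [hts, h]; ring
    classical
    set j := Nat.findGreatest (fun m => (w.take m).sum = 0) w.length with hj
    have hjle : j ≤ w.length := Nat.findGreatest_le _
    have hPj : (w.take j).sum = 0 := by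
      rw [hj]
      exact Nat.findGreatest_spec (P := fun m => (List.take m w).sum = 0)
        (Nat.zero_le _) (by simp)
    have hmax : ∀ m, j < m → m ≤ w.length → (w.take m).sum ≠ 0 := by
      intro m h1 h2
      rw [hj] at h1
      exact Nat.findGreatest_is_greatest h1 h2
    have hfw : (w.take w.length).sum = w.sum := by simp
    have hjlt : j < w.length := by
      rcases Nat.lt_or_ge j w.length with h | h
      · exact h
      · exfalso
        have hje : j = w.length := le_antisymm hjle h
        rw [hje, hfw] at hPj
        omega
    have hstep_j := List.sum_take_succ w j hjlt
    have hwj : w[j] = 1 := by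
      rcases hw (w[j]) (List.getElem_mem hjlt) with h | h
      · exact h
      · exfalso
        have hfj1 : (w.take (j+1)).sum = -1 := by rw [hstep_j, h, hPj]; ring
        obtain ⟨m, h1, h2, h3⟩ := ivt_zero (fun k => (w.take k).sum) (j+1) w.length
          (fun k _ hk => hstep k hk) (by omega)
          (show (List.take (j+1) w).sum ≤ 0 by omega)
          (show (0:ℤ) ≤ (List.take w.length w).sum by simpa using hws.le)
        exact hmax m (by omega) h2 h3
    have hfj1 : (w.take (j+1)).sum = 1 := by rw [hstep_j, hwj, hPj]; ring
    have hpos : ∀ m, j < m → m ≤ w.length → 1 ≤ (w.take m).sum := by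
      intro m h1 h2
      by_contra hcon
      push_neg at hcon
      obtain ⟨m', h1', h2', h3'⟩ := ivt_zero (fun k => -(w.take k).sum) (j+1) m
        (fun k hk hk' => by
          rcases hstep k (by omega) with h | h
          · right; simp only [h]; ring
          · left; simp only [h]; ring)
        (by omega) (by simp [hfj1]) (by simp; omega)
      refine hmax m' (by omega) (by omega) ?_
      simpa using h3'
    set u := w.take j with hu
    set v := w.drop (j+1) with hv
    have hdecomp : w = u ++ 1 :: v := by
      rw [hu, hv, ← hwj, ← List.drop_eq_getElem_cons hjlt, List.take_append_drop]
    have hul : u.length = j := by rw [hu]; simp; omega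
    have hvl : v.length = w.length - (j+1) := by rw [hv]; simp
    have husum : u.sum = 0 := hPj
    have huPM : IsPM u := fun x hx => hw x (List.mem_of_mem_take hx)
    have hpar := huPM.sum_emod
    rw [husum, hul] at hpar
    obtain ⟨i, hji⟩ : ∃ i, j = 2 * i := ⟨j / 2, by omega⟩
    have hilen : u.length = 2 * i := by omega
    have hvlen : v.length = 2 * (n - i) := by omega
    have hile : i ≤ n := by omega
    refine ⟨(u, v), ⟨huPM, fun x hx => hw x (List.mem_of_mem_drop hx),
      ⟨i, hile, hilen, hvlen⟩, husum, ?_⟩, hdecomp.symm⟩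
    intro k
    rcases le_or_gt k v.length with hk | hk
    · have hsum : (w.take (j+1+k)).sum = (w.take (j+1)).sum + (v.take k).sum := by
        rw [List.take_add, List.sum_append, hv]
      have := hpos (j+1+k) (by omega) (by omega)
      rw [hsum, hfj1] at this
      linarith
    · have hvk : v.take k = v := List.take_of_length_le (by omega)
      rw [hvk]
      have hsum : w.sum = 1 + v.sum := by
        conv_lhs => rw [hdecomp]
        simp [husum]
      linarith
end

section
/- Let R_{t,i} be the number of walks of length i on ℤ starting and ending at 0, with steps +1, −1, or one of t distinguishable neutral steps. Then for all l ≥ 0, ∑_{i+j=l} R_{t,i} · R_{t,j} = ((t+2)^{l+1} − (t−2)^{l+1})/4. -/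
/-- Displacement of a step type among `t+2` types: type 0 moves `+1`,
type 1 moves `-1`, and the remaining `t` types are neutral. -/
def disp {t : ℕ} (s : Fin (t + 2)) : ℤ :=
  if (s : ℕ) = 0 then 1 else if (s : ℕ) = 1 then -1 else 0

/-- Number of recurrent walks of length `i` with steps `+1`, `-1`
and `t` distinguishable neutral steps. -/
noncomputable def R (t i : ℕ) : ℕ :=
  {w : Fin i → Fin (t + 2) | ∑ j, disp (w j) = 0}.ncard

open Finset AddMonoidAlgebra

/-- Central coefficient of `(X + X⁻¹)^m`. -/
noncomputable def cc (m : ℕ) : ℚ := if Even m then (m.choose (m / 2) : ℚ) else 0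

/-- Central binomial coefficient as a rational. -/
noncomputable def cb (k : ℕ) : ℚ := (Nat.centralBinom k : ℚ)

lemma R_eq_coeff (t i : ℕ) :
    (R t i : ℚ) =
      ((∑ s : Fin (t + 2), AddMonoidAlgebra.single (disp s) (1 : ℚ)) ^ i).coeff 0 := by
  classical
  have hpow : (∑ s : Fin (t + 2), AddMonoidAlgebra.single (disp s) (1 : ℚ)) ^ i
      = ∑ w : Fin i → Fin (t + 2), AddMonoidAlgebra.single (∑ j, disp (w j)) (1 : ℚ) := by
    have hprod : (∑ s : Fin (t + 2), AddMonoidAlgebra.single (disp s) (1 : ℚ)) ^ i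
        = ∏ _j : Fin i, (∑ s : Fin (t + 2), AddMonoidAlgebra.single (disp s) (1 : ℚ)) := by
      rw [Finset.prod_const, Finset.card_univ, Fintype.card_fin]
    rw [hprod, Finset.prod_univ_sum, Fintype.piFinset_univ]
    refine Finset.sum_congr rfl fun w _ => ?_
    rw [AddMonoidAlgebra.prod_single, Finset.prod_const_one]
  rw [hpow, AddMonoidAlgebra.coeff_sum, Finset.sum_apply']
  have hset : {w : Fin i → Fin (t + 2) | ∑ j, disp (w j) = 0}
      = ↑(Finset.univ.filter fun w : Fin i → Fin (t + 2) => ∑ j, disp (w j) = 0) := by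
    ext w; simp
  rw [R, hset, Set.ncard_coe_finset, Finset.card_filter]
  push_cast
  refine Finset.sum_congr rfl fun w _ => ?_
  rw [AddMonoidAlgebra.coeff_single, Finsupp.single_apply]

lemma step_sum (t : ℕ) :
    (∑ s : Fin (t + 2), AddMonoidAlgebra.single (disp s) (1 : ℚ))
      = AddMonoidAlgebra.single (1 : ℤ) (1 : ℚ) + AddMonoidAlgebra.single (-1 : ℤ) (1 : ℚ)
        + AddMonoidAlgebra.single (0 : ℤ) (t : ℚ) := by
  rw [Fin.sum_univ_succ, Fin.sum_univ_succ]
  have h0 : disp (0 : Fin (t + 2)) = 1 := by simp [disp]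
  have h1 : disp ((0 : Fin (t + 1)).succ) = -1 := by simp [disp]
  have h2 : ∀ s : Fin t, disp (s.succ.succ) = 0 := by
    intro s
    simp [disp, Fin.ext_iff]
  rw [h0, h1]
  have : ∑ s : Fin t, AddMonoidAlgebra.single (disp s.succ.succ) (1 : ℚ)
      = AddMonoidAlgebra.single (0 : ℤ) (t : ℚ) := by
    have h3 : ∀ s : Fin t, AddMonoidAlgebra.single (disp s.succ.succ) (1 : ℚ)
        = AddMonoidAlgebra.single (0 : ℤ) (1 : ℚ) := fun s => by rw [h2]
    rw [Finset.sum_congr rfl fun s _ => h3 s, Finset.sum_const, Finset.card_univ,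
      Fintype.card_fin, AddMonoidAlgebra.smul_single, nsmul_eq_mul, mul_one]
  rw [this, add_assoc]

lemma upow_coeff (m : ℕ) :
    ((AddMonoidAlgebra.single (1 : ℤ) (1 : ℚ)
      + AddMonoidAlgebra.single (-1 : ℤ) (1 : ℚ)) ^ m).coeff 0 = cc m := by
  classical
  rw [add_pow, AddMonoidAlgebra.coeff_sum, Finset.sum_apply']
  have hterm : ∀ r ∈ Finset.range (m + 1),
      (AddMonoidAlgebra.single (1 : ℤ) (1 : ℚ) ^ r
        * AddMonoidAlgebra.single (-1 : ℤ) (1 : ℚ) ^ (m - r)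
        * (m.choose r : AddMonoidAlgebra ℚ ℤ)).coeff 0
      = if 2 * r = m then (m.choose r : ℚ) else 0 := by
    intro r hr
    rw [Finset.mem_range] at hr
    rw [AddMonoidAlgebra.single_pow, AddMonoidAlgebra.single_pow,
      AddMonoidAlgebra.single_mul_single, AddMonoidAlgebra.natCast_def,
      AddMonoidAlgebra.single_mul_single]
    rw [AddMonoidAlgebra.coeff_single, Finsupp.single_apply]
    have hcond : (r • (1 : ℤ) + (m - r) • (-1 : ℤ) + 0 = 0) ↔ 2 * r = m := by
      simp only [nsmul_eq_mul, mul_one, mul_neg, add_zero]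
      omega
    by_cases h : 2 * r = m
    · rw [if_pos (hcond.mpr h), if_pos h]
      simp
    · rw [if_neg (fun hc => h (hcond.mp hc)), if_neg h]
  rw [Finset.sum_congr rfl hterm]
  unfold cc
  by_cases hm : Even m
  · rw [if_pos hm]
    obtain ⟨j, hj⟩ := hm
    subst hj
    have hj2 : (j + j) / 2 = j := by omega
    rw [hj2]
    rw [Finset.sum_eq_single_of_mem j (by rw [Finset.mem_range]; omega)]
    · rw [if_pos (by omega)]
    · intro r _ hrj
      rw [if_neg (by omega)]
  · rw [if_neg hm]
    exact Finset.sum_eq_zero fun r _ => if_neg (fun h => hm ⟨r, by omega⟩)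

lemma R_formula (t i : ℕ) :
    (R t i : ℚ) = ∑ m ∈ Finset.range (i + 1),
      (i.choose m : ℚ) * cc m * (t : ℚ) ^ (i - m) := by
  classical
  rw [R_eq_coeff, step_sum]
  rw [add_pow, AddMonoidAlgebra.coeff_sum, Finset.sum_apply']
  refine Finset.sum_congr rfl fun m _ => ?_
  rw [AddMonoidAlgebra.single_pow (m := (0 : ℤ))]
  have hz : ((i - m) • (0 : ℤ)) = 0 := smul_zero _
  rw [hz]
  rw [AddMonoidAlgebra.natCast_def, mul_assoc, AddMonoidAlgebra.single_mul_single, add_zero,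
    AddMonoidAlgebra.coeff_mul_single_zero, upow_coeff]
  ring

/-- Dual Vandermonde / hockey-stick convolution. -/
lemma choose_conv : ∀ (n l m : ℕ),
    ∑ i ∈ Finset.range (l + 1), (Nat.choose i m) * (Nat.choose (l - i) n)
      = Nat.choose (l + 1) (m + n + 1) := by
  intro n
  induction n with
  | zero =>
    intro l m
    simp only [Nat.choose_zero_right, mul_one, Nat.add_zero]
    have h1 : ∑ i ∈ Finset.range (l + 1), Nat.choose i m
        = ∑ i ∈ Finset.Icc m l, Nat.choose i m := by
      rcases le_or_gt m l with h | h
      · rw [Finset.range_eq_Ico]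
        refine (Finset.sum_subset ?_ ?_).symm
        · intro x hx
          rw [Finset.mem_Icc] at hx
          rw [Finset.mem_Ico]
          omega
        · intro x hx hx'
          rw [Finset.mem_Ico] at hx
          rw [Finset.mem_Icc] at hx'
          exact Nat.choose_eq_zero_of_lt (by omega)
      · rw [Finset.Icc_eq_empty (by omega), Finset.sum_empty]
        refine Finset.sum_eq_zero fun i hi => ?_
        rw [Finset.mem_range] at hi
        exact Nat.choose_eq_zero_of_lt (by omega)
    rw [h1, Nat.sum_Icc_choose]
  | succ n ih =>
    intro l
    induction l with
    | zero =>
      intro m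
      simp [Nat.choose_eq_zero_of_lt (show 1 < m + (n + 1) + 1 by omega)]
    | succ l ihl =>
      intro m
      rw [Finset.sum_range_succ]
      have hlast : Nat.choose (l + 1) m * Nat.choose (l + 1 - (l + 1)) (n + 1) = 0 := by
        simp
      rw [hlast, add_zero]
      have hsplit : ∀ i ∈ Finset.range (l + 1),
          Nat.choose i m * Nat.choose (l + 1 - i) (n + 1)
            = Nat.choose i m * Nat.choose (l - i) n
              + Nat.choose i m * Nat.choose (l - i) (n + 1) := by
        intro i hi
        rw [Finset.mem_range] at hi
        have : l + 1 - i = (l - i) + 1 := by omega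
        rw [this, Nat.choose_succ_succ, Nat.mul_add]
      rw [Finset.sum_congr rfl hsplit, Finset.sum_add_distrib, ih l m, ihl m]
      have : m + (n + 1) + 1 = (m + n + 1) + 1 := by omega
      rw [this, Nat.choose_succ_succ (l + 1) (m + n + 1)]

/-- Convolution of central binomial coefficients. -/
lemma cb_conv (n : ℕ) :
    ∑ k ∈ Finset.range (n + 1), cb k * cb (n - k) = 4 ^ n := by
  induction n with
  | zero => simp [cb, Nat.centralBinom]
  | succ n ih =>
    have hsym : ∀ N : ℕ,
        2 * (∑ k ∈ Finset.range (N + 1), (k : ℚ) * cb k * cb (N - k))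
          = (N : ℚ) * ∑ k ∈ Finset.range (N + 1), cb k * cb (N - k) := by
      intro N
      have hrefl : ∑ k ∈ Finset.range (N + 1), (k : ℚ) * cb k * cb (N - k)
          = ∑ k ∈ Finset.range (N + 1), ((N - k : ℕ) : ℚ) * cb (N - k) * cb k := by
        rw [← Finset.sum_range_reflect]
        refine Finset.sum_congr rfl fun k hk => ?_
        rw [Finset.mem_range] at hk
        rw [show N + 1 - 1 - k = N - k by omega, show N - (N - k) = k by omega]
      rw [two_mul]
      nth_rewrite 2 [hrefl]
      rw [← Finset.sum_add_distrib, Finset.mul_sum]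
      refine Finset.sum_congr rfl fun k hk => ?_
      rw [Finset.mem_range] at hk
      have hcast : ((N - k : ℕ) : ℚ) = (N : ℚ) - (k : ℚ) :=
        Nat.cast_sub (by omega)
      rw [hcast]
      ring
    have hrec : ∀ j : ℕ, ((j : ℚ) + 1) * cb (j + 1) = (4 * (j : ℚ) + 2) * cb j := by
      intro j
      have h := Nat.succ_mul_centralBinom_succ j
      have hq : (((j + 1) * Nat.centralBinom (j + 1) : ℕ) : ℚ)
          = ((2 * (2 * j + 1) * Nat.centralBinom j : ℕ) : ℚ) := congrArg (fun x : ℕ => (x : ℚ)) h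
      push_cast at hq
      unfold cb
      linarith
    have hT : ∑ k ∈ Finset.range (n + 1 + 1), (k : ℚ) * cb k * cb (n + 1 - k)
        = (2 * (n : ℚ) + 2) * 4 ^ n := by
      rw [Finset.sum_range_succ']
      simp only [Nat.cast_zero, zero_mul, add_zero]
      have hstep : ∀ k ∈ Finset.range (n + 1),
          ((k + 1 : ℕ) : ℚ) * cb (k + 1) * cb (n + 1 - (k + 1))
            = 4 * ((k : ℚ) * cb k * cb (n - k)) + 2 * (cb k * cb (n - k)) := by
        intro k hk
        rw [show n + 1 - (k + 1) = n - k by omega]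
        have h2 := congrArg (fun x => x * cb (n - k)) (hrec k)
        push_cast
        rw [h2]
        ring
      rw [Finset.sum_congr rfl hstep, Finset.sum_add_distrib, ← Finset.mul_sum,
        ← Finset.mul_sum, ih]
      have h4 := hsym n
      rw [ih] at h4
      linarith
    have h5 := hsym (n + 1)
    rw [hT] at h5
    push_cast at h5
    have hpos : ((n : ℚ) + 1) ≠ 0 := by positivity
    have h6 : ((n : ℚ) + 1) * (∑ k ∈ Finset.range (n + 1 + 1), cb k * cb (n + 1 - k))
        = ((n : ℚ) + 1) * 4 ^ (n + 1) := by
      rw [← h5]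
      ring
    exact mul_left_cancel₀ hpos h6

lemma even_sum_range (j : ℕ) (h : ℕ → ℚ) (hodd : ∀ m, ¬ Even m → h m = 0) :
    ∑ m ∈ Finset.range (2 * j + 1), h m = ∑ a ∈ Finset.range (j + 1), h (2 * a) := by
  induction j with
  | zero => simp
  | succ j ih =>
    have h1 : 2 * (j + 1) + 1 = (2 * j + 1) + 1 + 1 := by omega
    rw [h1, Finset.sum_range_succ, Finset.sum_range_succ, ih,
      Finset.sum_range_succ (fun a => h (2 * a)) (j + 1)]
    rw [hodd (2 * j + 1) (by rw [Nat.even_iff]; omega),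
      show 2 * j + 1 + 1 = 2 * (j + 1) by omega]
    ring

lemma cc_conv (k : ℕ) :
    ∑ m ∈ Finset.range (k + 1), cc m * cc (k - m)
      = if Even k then (2 : ℚ) ^ k else 0 := by
  by_cases hk : Even k
  · obtain ⟨j, hj⟩ := hk
    have hkj : k = 2 * j := by omega
    subst hkj
    rw [if_pos (even_two_mul j)]
    rw [even_sum_range j (fun m => cc m * cc (2 * j - m))
      (fun m hm => by
        show cc m * cc (2 * j - m) = 0
        have hz : cc m = 0 := by unfold cc; rw [if_neg hm]
        rw [hz, zero_mul])]
    have hterm : ∀ a ∈ Finset.range (j + 1),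
        cc (2 * a) * cc (2 * j - 2 * a) = cb a * cb (j - a) := by
      intro a ha
      rw [Finset.mem_range] at ha
      have h1 : cc (2 * a) = cb a := by
        unfold cc cb
        rw [if_pos (even_two_mul a), Nat.centralBinom_eq_two_mul_choose]
        congr 2
        omega
      have h2 : 2 * j - 2 * a = 2 * (j - a) := by omega
      have h3 : cc (2 * (j - a)) = cb (j - a) := by
        unfold cc cb
        rw [if_pos (even_two_mul _), Nat.centralBinom_eq_two_mul_choose]
        congr 2
        omega
      rw [h1, h2, h3]
    rw [Finset.sum_congr rfl hterm, cb_conv]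
    rw [show (4 : ℚ) = 2 ^ 2 by norm_num, ← pow_mul]
  · rw [if_neg hk]
    refine Finset.sum_eq_zero fun m hm => ?_
    rw [Finset.mem_range] at hm
    by_cases h : Even m
    · have hne : ¬ Even (k - m) := by
        intro hc
        apply hk
        obtain ⟨a, ha⟩ := h
        obtain ⟨b, hb⟩ := hc
        exact ⟨a + b, by omega⟩
      have hz : cc (k - m) = 0 := by unfold cc; rw [if_neg hne]
      rw [hz, mul_zero]
    · have hz : cc m = 0 := by unfold cc; rw [if_neg h]
      rw [hz, zero_mul]

theorem stmt12 (t l : ℕ) :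
    (∑ i ∈ Finset.range (l + 1), (R t i * R t (l - i) : ℚ))
      = (((t : ℚ) + 2) ^ (l + 1) - ((t : ℚ) - 2) ^ (l + 1)) / 4 := by
  classical
  have hRext : ∀ N : ℕ, N ≤ l → (R t N : ℚ)
      = ∑ m ∈ Finset.range (l + 1), (N.choose m : ℚ) * cc m * (t : ℚ) ^ (N - m) := by
    intro N hN
    rw [R_formula]
    refine Finset.sum_subset ?_ ?_
    · intro x hx
      rw [Finset.mem_range] at hx ⊢
      omega
    · intro x hx hx'
      rw [Finset.mem_range] at hx hx'
      rw [Nat.choose_eq_zero_of_lt (by omega)]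
      push_cast
      ring
  have step1 : (∑ i ∈ Finset.range (l + 1), (R t i * R t (l - i) : ℚ))
      = ∑ m ∈ Finset.range (l + 1), ∑ n ∈ Finset.range (l + 1),
          ((l + 1).choose (m + n + 1) : ℚ) * (cc m * cc n * (t : ℚ) ^ (l - m - n)) := by
    have h1 : (∑ i ∈ Finset.range (l + 1), (R t i * R t (l - i) : ℚ))
        = ∑ i ∈ Finset.range (l + 1), ∑ m ∈ Finset.range (l + 1),
            ∑ n ∈ Finset.range (l + 1),
              (i.choose m : ℚ) * ((l - i).choose n : ℚ)
                * (cc m * cc n * (t : ℚ) ^ (l - m - n)) := by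
      refine Finset.sum_congr rfl fun i hi => ?_
      rw [Finset.mem_range] at hi
      rw [hRext i (by omega), hRext (l - i) (by omega), Finset.sum_mul_sum]
      refine Finset.sum_congr rfl fun m hm => Finset.sum_congr rfl fun n hn => ?_
      rw [Finset.mem_range] at hm hn
      by_cases hm1 : m ≤ i
      · by_cases hn1 : n ≤ l - i
        · have hpow : (t : ℚ) ^ (i - m) * (t : ℚ) ^ (l - i - n) = (t : ℚ) ^ (l - m - n) := by
            rw [← pow_add]
            congr 1
            omega
          calc (i.choose m : ℚ) * cc m * (t : ℚ) ^ (i - m)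
              * (((l - i).choose n : ℚ) * cc n * (t : ℚ) ^ (l - i - n))
              = (i.choose m : ℚ) * ((l - i).choose n : ℚ)
                * (cc m * cc n * ((t : ℚ) ^ (i - m) * (t : ℚ) ^ (l - i - n))) := by ring
            _ = _ := by rw [hpow]
        · rw [Nat.choose_eq_zero_of_lt (by omega : l - i < n)]
          push_cast
          ring
      · rw [Nat.choose_eq_zero_of_lt (by omega : i < m)]
        push_cast
        ring
    rw [h1]
    rw [Finset.sum_comm]
    refine Finset.sum_congr rfl fun m hm => ?_
    rw [Finset.sum_comm]
    refine Finset.sum_congr rfl fun n hn => ?_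
    rw [← Finset.sum_mul]
    have hc : ∑ i ∈ Finset.range (l + 1), (i.choose m : ℚ) * ((l - i).choose n : ℚ)
        = ((l + 1).choose (m + n + 1) : ℚ) := by
      have h := choose_conv n l m
      exact_mod_cast congrArg (Nat.cast : ℕ → ℚ) h
    rw [hc]
  rw [step1]
  have step2 : (∑ m ∈ Finset.range (l + 1), ∑ n ∈ Finset.range (l + 1),
          ((l + 1).choose (m + n + 1) : ℚ) * (cc m * cc n * (t : ℚ) ^ (l - m - n)))
      = ∑ k ∈ Finset.range (l + 1), ∑ m ∈ Finset.range (k + 1),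
          ((l + 1).choose (m + (k - m) + 1) : ℚ)
            * (cc m * cc (k - m) * (t : ℚ) ^ (l - m - (k - m))) := by
    rw [Finset.sum_range_diag_flip (l + 1)
      (fun m n => ((l + 1).choose (m + n + 1) : ℚ)
        * (cc m * cc n * (t : ℚ) ^ (l - m - n)))]
    refine Finset.sum_congr rfl fun m hm => ?_
    rw [Finset.mem_range] at hm
    refine (Finset.sum_subset ?_ ?_).symm
    · intro x hx
      rw [Finset.mem_range] at hx ⊢
      omega
    · intro x hx hx'
      rw [Finset.mem_range] at hx hx'
      rw [Nat.choose_eq_zero_of_lt (by omega : l + 1 < m + x + 1)]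
      push_cast
      ring
  rw [step2]
  have step3 : ∀ k ∈ Finset.range (l + 1),
      (∑ m ∈ Finset.range (k + 1),
          ((l + 1).choose (m + (k - m) + 1) : ℚ)
            * (cc m * cc (k - m) * (t : ℚ) ^ (l - m - (k - m))))
        = ((l + 1).choose (k + 1) : ℚ) * (t : ℚ) ^ (l - k)
            * (if Even k then (2 : ℚ) ^ k else 0) := by
    intro k hk
    rw [Finset.mem_range] at hk
    have h1 : ∀ m ∈ Finset.range (k + 1),
        ((l + 1).choose (m + (k - m) + 1) : ℚ)
            * (cc m * cc (k - m) * (t : ℚ) ^ (l - m - (k - m)))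
          = ((l + 1).choose (k + 1) : ℚ) * (t : ℚ) ^ (l - k) * (cc m * cc (k - m)) := by
      intro m hm
      rw [Finset.mem_range] at hm
      have e1 : m + (k - m) = k := by omega
      have e2 : l - m - (k - m) = l - k := by omega
      rw [e1, e2]
      ring
    rw [Finset.sum_congr rfl h1, ← Finset.mul_sum, cc_conv]
  rw [Finset.sum_congr rfl step3]
  rw [eq_div_iff (by norm_num : (4 : ℚ) ≠ 0)]
  have hA : ((t : ℚ) + 2) ^ (l + 1)
      = ∑ x ∈ Finset.range (l + 1 + 1),
          (t : ℚ) ^ x * 2 ^ (l + 1 - x) * ((l + 1).choose x : ℚ) := add_pow _ _ _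
  have hB : ((t : ℚ) - 2) ^ (l + 1)
      = ∑ x ∈ Finset.range (l + 1 + 1),
          (t : ℚ) ^ x * (-2) ^ (l + 1 - x) * ((l + 1).choose x : ℚ) := by
    rw [sub_eq_add_neg, add_pow]
  rw [hA, hB, ← Finset.sum_sub_distrib, Finset.sum_range_succ _ (l + 1)]
  have hlast : (t : ℚ) ^ (l + 1) * 2 ^ (l + 1 - (l + 1)) * ((l + 1).choose (l + 1) : ℚ)
      - (t : ℚ) ^ (l + 1) * (-2) ^ (l + 1 - (l + 1)) * ((l + 1).choose (l + 1) : ℚ) = 0 := by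
    simp
  rw [hlast, add_zero]
  rw [← Finset.sum_range_reflect (fun k =>
    ((l + 1).choose (k + 1) : ℚ) * (t : ℚ) ^ (l - k)
      * (if Even k then (2 : ℚ) ^ k else 0)) (l + 1)]
  rw [Finset.sum_mul]
  refine Finset.sum_congr rfl fun r hr => ?_
  rw [Finset.mem_range] at hr
  have e1 : l + 1 - 1 - r = l - r := by omega
  have e2 : l - (l - r) = r := by omega
  have e3 : (l + 1).choose (l - r + 1) = (l + 1).choose r := by
    rw [show l - r + 1 = l + 1 - r by omega]
    exact Nat.choose_symm (by omega)
  simp only [e1]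
  rw [e2, e3]
  rw [show l + 1 - r = (l - r) + 1 by omega]
  by_cases hp : Even (l - r)
  · rw [if_pos hp]
    have hneg : (-2 : ℚ) ^ (l - r + 1) = -(2 : ℚ) ^ (l - r + 1) := by
      rw [show (-2 : ℚ) = -1 * 2 by norm_num, mul_pow,
        Odd.neg_one_pow (Even.add_one hp), neg_one_mul]
    rw [hneg, pow_succ]
    ring
  · rw [if_neg hp]
    have hneg : (-2 : ℚ) ^ (l - r + 1) = (2 : ℚ) ^ (l - r + 1) := by
      rw [show (-2 : ℚ) = -1 * 2 by norm_num, mul_pow,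
        Even.neg_one_pow (Nat.even_add_one.mpr hp), one_mul]
    rw [hneg]
    ring
end

section
/- (André's equality of bad and ugly cases) For α > β ≥ 1, the number of ballot sequences with α votes for A and β for B that start with a vote for B equals the number that start with a vote for A but at some later point have the votes for A and B in balance; both equal C(α+β−1, α). -/
namespace Andre

variable {n : ℕ}

lemma psum_zero (w : Fin n → ℤ) : psum w 0 = 0 := by simp [psum]

lemma psum_succ (w : Fin n → ℤ) (k : ℕ) (hk : k < n) :
    psum w (k + 1) = psum w k + w ⟨k, hk⟩ := by
  have h : (Finset.univ.filter (fun i : Fin n => (i : ℕ) < k + 1))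
      = insert (⟨k, hk⟩ : Fin n) (Finset.univ.filter (fun i : Fin n => (i : ℕ) < k)) := by
    ext i
    simp only [Finset.mem_filter, Finset.mem_univ, true_and, Finset.mem_insert, Fin.ext_iff]
    omega
  rw [psum, psum, h, Finset.sum_insert (by simp), add_comm]

/-- existence of a zero crossing for a walk starting at -1 and ending positive -/
lemma exists_zero (w : Fin n → ℤ) (hpm : ∀ i, w i = 1 ∨ w i = -1)
    (h1 : psum w 1 = -1) (hn : 0 < psum w n) :
    ∃ k, 0 < k ∧ k ≤ n ∧ psum w k = 0 := by
  have hn0 : 0 < n := by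
    by_contra hc
    interval_cases n
    rw [psum_zero] at hn
    omega
  set S : Set ℕ := {k | 0 < k ∧ 0 ≤ psum w k} with hS
  have hnS : n ∈ S := ⟨hn0, le_of_lt hn⟩
  have hne : S.Nonempty := ⟨n, hnS⟩
  set m := sInf S with hm
  have hmem : m ∈ S := Nat.sInf_mem hne
  have hmn : m ≤ n := Nat.sInf_le hnS
  have hm1 : m ≠ 1 := by
    intro hc
    have := hmem.2
    rw [hc, h1] at this
    omega
  have hm2 : 2 ≤ m := by
    have := hmem.1
    omega
  obtain ⟨j, hmj⟩ : ∃ j, m = j + 1 := ⟨m - 1, by omega⟩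
  rw [hmj] at hmem hmn
  have hj : j ∉ S := Nat.notMem_of_lt_sInf (by omega)
  have hjpos : 0 < j := by omega
  have hjneg : psum w j < 0 := by
    by_contra hc
    exact hj ⟨hjpos, by omega⟩
  have hjn : j < n := by omega
  have hstep : psum w (j + 1) = psum w j + w ⟨j, hjn⟩ := psum_succ w j hjn
  have hwle : w ⟨j, hjn⟩ ≤ 1 := by rcases hpm ⟨j, hjn⟩ with h | h <;> omega
  refine ⟨j + 1, by omega, hmn, ?_⟩
  have := hmem.2
  omega

/-- the exact same argument for a walk starting at +1 and having a zero gives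
that the first zero exists; we just define first zero by sInf. -/
noncomputable def fz (w : Fin n → ℤ) : ℕ := sInf {k | 0 < k ∧ k ≤ n ∧ psum w k = 0}

noncomputable def F (w : Fin n → ℤ) : Fin n → ℤ :=
  fun i => if (i : ℕ) < fz w then -w i else w i

variable (w : Fin n → ℤ)

lemma fz_mem (hex : ∃ k, 0 < k ∧ k ≤ n ∧ psum w k = 0) :
    0 < fz w ∧ fz w ≤ n ∧ psum w (fz w) = 0 :=
  Nat.sInf_mem (s := {k | 0 < k ∧ k ≤ n ∧ psum w k = 0}) hex

lemma fz_min {j : ℕ} (hj : j < fz w) (h0 : 0 < j) (hn : j ≤ n) : psum w j ≠ 0 := by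
  intro hc
  exact absurd ⟨h0, hn, hc⟩ (Nat.notMem_of_lt_sInf hj)

lemma psum_flip (w : Fin n → ℤ) (c k : ℕ) :
    psum (fun i => if (i:ℕ) < c then -w i else w i) k
      = psum w k - 2 * psum w (min k c) := by
  unfold psum
  rw [Finset.sum_congr rfl
    (show ∀ i ∈ Finset.univ.filter (fun i : Fin n => (i:ℕ) < k),
      (if (i:ℕ) < c then -w i else w i) = w i - 2 * (if (i:ℕ) < c then w i else 0) by
      intro i _
      by_cases h : (i:ℕ) < c <;> simp [h] <;> ring)]
  rw [Finset.sum_sub_distrib, ← Finset.mul_sum, ← Finset.sum_filter, Finset.filter_filter]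
  have h : (Finset.univ.filter (fun i : Fin n => (i:ℕ) < k ∧ (i:ℕ) < c))
      = Finset.univ.filter (fun i : Fin n => (i:ℕ) < min k c) := by
    ext i
    simp [lt_min_iff]
  rw [h]

lemma psum_F (k : ℕ) : psum (F w) k = psum w k - 2 * psum w (min k (fz w)) :=
  psum_flip w (fz w) k

lemma zero_set_F (hex : ∃ k, 0 < k ∧ k ≤ n ∧ psum w k = 0) :
    {k | 0 < k ∧ k ≤ n ∧ psum (F w) k = 0} = {k | 0 < k ∧ k ≤ n ∧ psum w k = 0} := by
  obtain ⟨-, -, hz⟩ := fz_mem w hex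
  ext k
  simp only [Set.mem_setOf_eq, and_congr_right_iff]
  intro _ _
  rcases le_or_gt (fz w) k with hk | hk
  · rw [psum_F, min_eq_right hk, hz]
    constructor <;> intro hh <;> omega
  · rw [psum_F, min_eq_left hk.le]
    constructor <;> intro hh <;> omega

lemma fz_F (hex : ∃ k, 0 < k ∧ k ≤ n ∧ psum w k = 0) : fz (F w) = fz w := by
  unfold fz
  rw [zero_set_F w hex]

lemma F_invol (hex : ∃ k, 0 < k ∧ k ≤ n ∧ psum w k = 0) : F (F w) = w := by
  funext i
  show (if (i : ℕ) < fz (F w) then -(F w i) else F w i) = w i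
  rw [fz_F w hex]
  unfold F
  by_cases h : (i : ℕ) < fz w <;> simp [h]

lemma F_pm (hpm : ∀ i, w i = 1 ∨ w i = -1) : ∀ i, F w i = 1 ∨ F w i = -1 := by
  intro i
  unfold F
  rcases hpm i with h | h <;> by_cases hi : (i:ℕ) < fz w <;> simp [h, hi]

lemma hex_F (hex : ∃ k, 0 < k ∧ k ≤ n ∧ psum w k = 0) :
    ∃ k, 0 < k ∧ k ≤ n ∧ psum (F w) k = 0 := by
  have := zero_set_F w hex
  obtain ⟨k, hk⟩ := hex
  exact ⟨k, by rw [show (0 < k ∧ k ≤ n ∧ psum (F w) k = 0) ↔ k ∈ {k | 0 < k ∧ k ≤ n ∧ psum (F w) k = 0} from Iff.rfl, this]; exact hk⟩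

lemma psum_F_one (hex : ∃ k, 0 < k ∧ k ≤ n ∧ psum w k = 0) :
    psum (F w) 1 = -psum w 1 := by
  obtain ⟨h0, -, -⟩ := fz_mem w hex
  rw [psum_F, min_eq_left (by omega)]
  ring

lemma psum_eq_card (w : Fin n → ℤ) (hpm : ∀ i, w i = 1 ∨ w i = -1) (k : ℕ) :
    psum w k =
      ((Finset.univ.filter fun i : Fin n => (i : ℕ) < k ∧ w i = 1).card : ℤ) -
        (Finset.univ.filter fun i : Fin n => (i : ℕ) < k ∧ w i = -1).card := by
  rw [psum, ← Finset.sum_filter_add_sum_filter_not _ (fun i => w i = 1),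
    Finset.filter_filter, Finset.filter_filter]
  have h2 : (Finset.univ.filter fun i : Fin n => (i:ℕ) < k ∧ ¬ w i = 1)
      = Finset.univ.filter fun i : Fin n => (i:ℕ) < k ∧ w i = -1 := by
    apply Finset.filter_congr
    intro i _
    rcases hpm i with h | h <;> simp [h]
  rw [h2]
  rw [Finset.sum_congr rfl (fun i hi => (Finset.mem_filter.mp hi).2.2),
    Finset.sum_congr (s₂ := Finset.univ.filter fun i : Fin n => (i:ℕ) < k ∧ w i = -1) rfl
      (fun i hi => (Finset.mem_filter.mp hi).2.2)]
  simp
  ring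

lemma card_ones_F (hpm : ∀ i, w i = 1 ∨ w i = -1)
    (hex : ∃ k, 0 < k ∧ k ≤ n ∧ psum w k = 0) :
    (Finset.univ.filter fun i => F w i = 1).card
      = (Finset.univ.filter fun i => w i = 1).card := by
  obtain ⟨-, -, hz⟩ := fz_mem w hex
  have hpref : (Finset.univ.filter fun i : Fin n => (i:ℕ) < fz w ∧ w i = 1).card
      = (Finset.univ.filter fun i : Fin n => (i:ℕ) < fz w ∧ w i = -1).card := by
    have := psum_eq_card w hpm (fz w)
    rw [hz] at this
    omega
  have E1 : (Finset.univ.filter fun i => F w i = 1)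
      = (Finset.univ.filter fun i : Fin n => (i:ℕ) < fz w ∧ w i = -1)
        ∪ (Finset.univ.filter fun i : Fin n => ¬ (i:ℕ) < fz w ∧ w i = 1) := by
    ext i
    by_cases hi : (i:ℕ) < fz w <;> rcases hpm i with h | h <;> simp only [Finset.mem_union, Finset.mem_filter, Finset.mem_univ, true_and] <;> simp [F, hi, h] <;> omega
  have E2 : (Finset.univ.filter fun i : Fin n => w i = 1)
      = (Finset.univ.filter fun i : Fin n => (i:ℕ) < fz w ∧ w i = 1)
        ∪ (Finset.univ.filter fun i : Fin n => ¬ (i:ℕ) < fz w ∧ w i = 1) := by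
    ext i
    by_cases hi : (i:ℕ) < fz w <;> simp [hi] <;> omega
  rw [E1, E2, Finset.card_union_of_disjoint, Finset.card_union_of_disjoint, hpref]
  · rw [Finset.disjoint_filter]
    intro i _ hi
    exact fun hc => hc.1 hi.1 |>.elim
  · rw [Finset.disjoint_filter]
    intro i _ hi
    exact fun hc => hc.1 hi.1 |>.elim

lemma psum_one' (w : Fin n → ℤ) (hn : 0 < n) : psum w 1 = w ⟨0, hn⟩ := by
  rw [show (1:ℕ) = 0 + 1 from rfl, psum_succ w 0 hn, psum_zero, zero_add]

lemma card_neg (w : Fin n → ℤ) (hpm : ∀ i, w i = 1 ∨ w i = -1) :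
    (Finset.univ.filter fun i => w i = 1).card
      + (Finset.univ.filter fun i : Fin n => w i = -1).card = n := by
  have h2 : (Finset.univ.filter fun i : Fin n => w i = -1)
      = Finset.univ.filter fun i : Fin n => ¬ w i = 1 := by
    apply Finset.filter_congr
    intro i _
    rcases hpm i with h | h <;> simp [h]
  rw [h2, Finset.card_filter_add_card_filter_not]
  simp

lemma psum_n (w : Fin n → ℤ) (hpm : ∀ i, w i = 1 ∨ w i = -1) :
    psum w n = ((Finset.univ.filter fun i => w i = 1).card : ℤ)
      - (Finset.univ.filter fun i : Fin n => w i = -1).card := by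
  rw [psum_eq_card w hpm n]
  congr 2 <;> (congr 1; apply Finset.filter_congr; intro i _; simp [i.isLt])

end Andre

open Andre in
theorem stmt17 (α β : ℕ) (hβ : 1 ≤ β) (h : β < α) :
    {w : Fin (α + β) → ℤ |
        (∀ i, w i = 1 ∨ w i = -1) ∧
          (Finset.univ.filter (fun i => w i = 1)).card = α ∧
          psum w 1 = -1}.ncard
      = {w : Fin (α + β) → ℤ |
          (∀ i, w i = 1 ∨ w i = -1) ∧
            (Finset.univ.filter (fun i => w i = 1)).card = α ∧
            psum w 1 = 1 ∧ (∃ k, 0 < k ∧ k ≤ α + β ∧ psum w k = 0)}.ncard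
    ∧ {w : Fin (α + β) → ℤ |
        (∀ i, w i = 1 ∨ w i = -1) ∧
          (Finset.univ.filter (fun i => w i = 1)).card = α ∧
          psum w 1 = -1}.ncard
      = Nat.choose (α + β - 1) α := by
  set n := α + β with hn
  have hn0 : 0 < n := by omega
  set A : Set (Fin n → ℤ) := {w | (∀ i, w i = 1 ∨ w i = -1) ∧
      (Finset.univ.filter (fun i => w i = 1)).card = α ∧ psum w 1 = -1} with hA
  set B : Set (Fin n → ℤ) := {w | (∀ i, w i = 1 ∨ w i = -1) ∧
      (Finset.univ.filter (fun i => w i = 1)).card = α ∧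
      psum w 1 = 1 ∧ (∃ k, 0 < k ∧ k ≤ n ∧ psum w k = 0)} with hB
  -- every element of A has a zero crossing
  have hexA : ∀ w ∈ A, ∃ k, 0 < k ∧ k ≤ n ∧ psum w k = 0 := by
    rintro w ⟨hpm, hcard, h1⟩
    apply exists_zero w hpm h1
    have hneg : (Finset.univ.filter fun i : Fin n => w i = -1).card = β := by
      have := card_neg w hpm
      omega
    rw [psum_n w hpm, hcard, hneg]
    have : (β : ℤ) < α := by exact_mod_cast h
    omega
  -- Part 1 : the reflection bijection
  have hinj : Set.InjOn F A := by
    intro w hw w' hw' hFF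
    rw [← F_invol w (hexA w hw), ← F_invol w' (hexA w' hw'), hFF]
  have himg : F '' A = B := by
    apply Set.Subset.antisymm
    · rintro v ⟨w, hw, rfl⟩
      obtain ⟨hpm, hcard, h1⟩ := hw
      have hex := hexA w ⟨hpm, hcard, h1⟩
      obtain ⟨hf0, hfn, hfz⟩ := fz_mem w hex
      refine ⟨F_pm w hpm, by rw [card_ones_F w hpm hex, hcard], ?_, ⟨fz w, hf0, hfn, ?_⟩⟩
      · rw [psum_F_one w hex, h1]; ring
      · rw [psum_F, min_self, hfz]; ring
    · rintro v ⟨hpm, hcard, h1, hex⟩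
      refine ⟨F v, ⟨F_pm v hpm, by rw [card_ones_F v hpm hex, hcard], ?_⟩, F_invol v hex⟩
      rw [psum_F_one v hex, h1]
  have part1 : A.ncard = B.ncard := by
    rw [← himg, Set.ncard_image_of_injOn hinj]
  -- Part 2 : counting A
  set G : (Fin n → ℤ) → Finset (Fin n) := fun w => Finset.univ.filter (fun i => w i = 1)
    with hG
  have hGinj : Set.InjOn G A := by
    rintro w ⟨hpm, -, -⟩ w' ⟨hpm', -, -⟩ hGG
    funext i
    have hmem : i ∈ G w ↔ i ∈ G w' := by rw [hGG]
    simp only [hG, Finset.mem_filter, Finset.mem_univ, true_and] at hmem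
    rcases hpm i with hh | hh <;> rcases hpm' i with hh' | hh' <;>
      simp [hh, hh'] at hmem ⊢ <;> omega
  have hGimg : G '' A = ↑((Finset.univ.erase (⟨0, hn0⟩ : Fin n)).powersetCard α) := by
    ext s
    simp only [Set.mem_image, Finset.coe_sort_coe, Finset.mem_coe,
      Finset.mem_powersetCard]
    constructor
    · rintro ⟨w, ⟨hpm, hcard, h1⟩, rfl⟩
      refine ⟨?_, hcard⟩
      intro i hi
      simp only [hG, Finset.mem_filter, Finset.mem_univ, true_and] at hi
      rw [Finset.mem_erase]
      refine ⟨?_, Finset.mem_univ i⟩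
      intro hc
      rw [psum_one' w hn0, ← hc, hi] at h1
      omega
    · rintro ⟨hsub, hcards⟩
      refine ⟨fun i => if i ∈ s then 1 else -1, ⟨?_, ?_, ?_⟩, ?_⟩
      · intro i; by_cases hi : i ∈ s <;> simp [hi]
      · rw [show (Finset.univ.filter fun i : Fin n =>
            (if i ∈ s then (1:ℤ) else -1) = 1) = s by
          ext i; by_cases hi : i ∈ s <;> simp [hi]]
        exact hcards
      · rw [psum_one' _ hn0]
        have h0 : (⟨0, hn0⟩ : Fin n) ∉ s := by
          intro hc
          have := hsub hc
          rw [Finset.mem_erase] at this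
          exact this.1 rfl
        simp [h0]
      · ext i; by_cases hi : i ∈ s <;> simp [hG, hi]
  have hcarderase : (Finset.univ.erase (⟨0, hn0⟩ : Fin n)).card = n - 1 := by
    rw [Finset.card_erase_of_mem (Finset.mem_univ _)]
    simp
  have part2 : A.ncard = Nat.choose (n - 1) α := by
    rw [← Set.ncard_image_of_injOn hGinj, hGimg, Set.ncard_coe_finset,
      Finset.card_powersetCard, hcarderase]
  exact ⟨part1, part2⟩
end
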